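/- arXiv:2203.08651 — 6 statements merged into one kernel-verified Lean document; each statement's English description precedes it below -/
import Mathlib

section
/- Let α₁, α₂, χ ∈ 𝒦∞, α₃ ∈ 𝒦 and φ ∈ 𝒫 be given. Then there exist β ∈ 𝒦ℒ and γ ∈ 𝒦∞, depending only on α₁, α₂, α₃, χ and φ, with the following property. Let X be a real normed space, t₀ ∈ ℝ, (tᵢ) an impulse time sequence, r ≥ 0, x: [t₀,∞) → X, and V: [t₀,∞) × X → [0,∞) satisfy α₁(‖y‖) ≤ V(t,y) ≤ α₂(‖y‖) for all t ≥ t₀ and all y ∈ X. Assume v(t) := V(t, x(t)) is impulsive-regular and: (a) D⁺v(t) ≤ −φ(v(t)) at every non-impulse time t with v(t) ≥ χ(r); (b) v(tᵢ) ≤ v(tᵢ⁻) at every impulse time tᵢ with v(tᵢ⁻) ≥ χ(r); (c) v(tᵢ) ≤ α₃(r) at every impulse time tᵢ with v(tᵢ⁻) < χ(r). Then ‖x(t)‖ ≤ β(‖x(t₀)‖, t − t₀) + γ(r) for all t ≥ t₀. -/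
open Filter Topology Set MeasureTheory

noncomputable section

/-- Class 𝒦: continuous, strictly increasing on `[0,∞)`, vanishing at `0`. -/
def ClassK (γ : ℝ → ℝ) : Prop :=
  ContinuousOn γ (Set.Ici 0) ∧ StrictMonoOn γ (Set.Ici 0) ∧ γ 0 = 0

/-- Class 𝒦∞: class 𝒦 and unbounded. -/
def ClassKInf (γ : ℝ → ℝ) : Prop :=
  ClassK γ ∧ Filter.Tendsto γ Filter.atTop Filter.atTop

/-- Class 𝒦ℒ. -/
def ClassKL (β : ℝ → ℝ → ℝ) : Prop :=
  (∀ s, 0 ≤ s → ClassK (fun r => β r s)) ∧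
  (∀ r, 0 ≤ r → AntitoneOn (fun s => β r s) (Set.Ici 0) ∧
    Filter.Tendsto (fun s => β r s) Filter.atTop (nhds 0))

/-- Class 𝒫: continuous, positive definite. -/
def ClassP (φ : ℝ → ℝ) : Prop :=
  ContinuousOn φ (Set.Ici 0) ∧ φ 0 = 0 ∧ ∀ r, 0 < r → 0 < φ r

/-- Upper right Dini derivative `D⁺v(t) = limsup_{s→0⁺} (v(t+s) − v(t))/s`, valued in `EReal`. -/
def DiniUpper (v : ℝ → ℝ) (t : ℝ) : EReal :=
  Filter.limsup (fun s => (((v (t + s) - v t) / s : ℝ) : EReal)) (nhdsWithin 0 (Set.Ioi 0))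

/-- Impulse time sequence with initial time `t₀ = τ 0`: strictly increasing and tending to `∞`;
the impulse times are `τ i` for `i ≥ 1`. -/
def IsImpulseSeq (t₀ : ℝ) (τ : ℕ → ℝ) : Prop :=
  τ 0 = t₀ ∧ StrictMono τ ∧ Filter.Tendsto τ Filter.atTop Filter.atTop

/-- The set `S = {tᵢ : i ≥ 1}` of impulse times. -/
def impulseSet (τ : ℕ → ℝ) : Set ℝ := {s | ∃ i : ℕ, 1 ≤ i ∧ τ i = s}

/-- Impulsive-regular function on `[t₀,∞)`: right-continuous everywhere, continuous (within
`[t₀,∞)`) at every non-impulse time, and left limits exist at every impulse time. -/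
def ImpulsiveRegular (t₀ : ℝ) (τ : ℕ → ℝ) (v : ℝ → ℝ) : Prop :=
  (∀ t, t₀ ≤ t → ContinuousWithinAt v (Set.Ici t) t) ∧
  (∀ t, t₀ ≤ t → t ∉ impulseSet τ → ContinuousWithinAt v (Set.Ici t₀) t) ∧
  (∀ i : ℕ, 1 ≤ i → ∃ L : ℝ, Filter.Tendsto v (nhdsWithin (τ i) (Set.Iio (τ i))) (nhds L))

theorem my_fencing {f f' : ℝ → ℝ} {a b : ℝ} {B B' : ℝ → ℝ}
    (hf : ContinuousOn f (Icc a b))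
    (hf' : ∀ x ∈ Ico a b, f x = B x → ∀ r, f' x < r → ∃ᶠ z in 𝓝[>] x, slope f x z < r)
    (ha : f a ≤ B a) (hB : ContinuousOn B (Icc a b))
    (hB' : ∀ x ∈ Ico a b, f x = B x → HasDerivWithinAt B (B' x) (Ici x) x)
    (bound : ∀ x ∈ Ico a b, f x = B x → f' x < B' x) : ∀ ⦃x⦄, x ∈ Icc a b → f x ≤ B x := by
  change Icc a b ⊆ { x | f x ≤ B x }
  set s := { x | f x ≤ B x } ∩ Icc a b
  have A : ContinuousOn (fun x => (f x, B x)) (Icc a b) := hf.prodMk hB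
  have : IsClosed s := by
    simp only [s, inter_comm]
    exact A.preimage_isClosed_of_isClosed isClosed_Icc OrderClosedTopology.isClosed_le'
  apply this.Icc_subset_of_forall_exists_gt ha
  rintro x ⟨hxB : f x ≤ B x, xab⟩ y hy
  cases' hxB.lt_or_eq with hxB hxB
  · refine nonempty_of_mem (inter_mem ?_ (Ioc_mem_nhdsGT_of_mem ⟨le_rfl, hy⟩))
    have : ∀ᶠ x in 𝓝[Icc a b] x, f x < B x :=
      A x (Ico_subset_Icc_self xab) (IsOpen.mem_nhds (isOpen_lt continuous_fst continuous_snd) hxB)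
    have : ∀ᶠ x in 𝓝[>] x, f x < B x := nhdsWithin_le_of_mem (Icc_mem_nhdsGT_of_mem xab) this
    exact this.mono fun y => le_of_lt
  · rcases exists_between (bound x xab hxB) with ⟨r, hfr, hrB⟩
    specialize hf' x xab hxB r hfr
    have HB : ∀ᶠ z in 𝓝[>] x, r < slope B x z :=
      (hasDerivWithinAt_iff_tendsto_slope' <| lt_irrefl x).1 (hB' x xab hxB).Ioi_of_Ici
        (Ioi_mem_nhds hrB)
    obtain ⟨z, hfz, hzB, hz⟩ : ∃ z, slope f x z < r ∧ r < slope B x z ∧ z ∈ Ioc x y :=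
      (hf'.and_eventually (HB.and (Ioc_mem_nhdsGT_of_mem ⟨le_rfl, hy⟩))).exists
    refine ⟨z, ?_, hz⟩
    have := (hfz.trans hzB).le
    rwa [slope_def_field, slope_def_field, div_le_div_iff_of_pos_right (sub_pos.2 hz.1), hxB,
      sub_le_sub_iff_right] at this


theorem exists_kinv {α : ℝ → ℝ} (hα : ClassKInf α) :
    ∃ g : ℝ → ℝ, Continuous g ∧ StrictMono g ∧ g 0 = 0 ∧
      (∀ u, 0 ≤ u → g (α u) = u) ∧ Tendsto g atTop atTop := by
  obtain ⟨⟨hc, hm, h0⟩, htop⟩ := hα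
  have hα_nonneg : ∀ u, 0 ≤ u → 0 ≤ α u := by
    intro u hu
    calc (0:ℝ) = α 0 := h0.symm
    _ ≤ α u := hm.monotoneOn (le_refl (0:ℝ)) hu hu
  set E : ℝ → ℝ := fun u => if 0 ≤ u then α u else u with hE
  have hEsm : StrictMono E := by
    intro u w huw
    simp only [hE]
    by_cases hu : 0 ≤ u
    · rw [if_pos hu, if_pos (hu.trans huw.le)]
      exact hm hu (hu.trans huw.le) huw
    · rw [if_neg hu]
      by_cases hw : 0 ≤ w
      · rw [if_pos hw]
        exact lt_of_lt_of_le (lt_of_not_ge hu) (hα_nonneg w hw)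
      · rw [if_neg hw]; exact huw
  have hEsurj : Function.Surjective E := by
    intro y
    rcases le_or_gt 0 y with hy | hy
    · obtain ⟨b, hb⟩ := (htop.eventually (eventually_ge_atTop y)).exists_forall_of_atTop
      have hb0 : (0:ℝ) ≤ max b 0 := le_max_right _ _
      have hy' : y ∈ Icc (α 0) (α (max b 0)) := by
        constructor
        · rw [h0]; exact hy
        · exact le_trans (hb (max b 0) (le_max_left _ _)) le_rfl
      have := intermediate_value_Icc hb0 (hc.mono (fun z hz => hz.1))
      obtain ⟨u, hu, huy⟩ := this hy'
      exact ⟨u, by simp [hE, if_pos hu.1, huy]⟩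
    · exact ⟨y, by simp [hE, not_le.2 hy]⟩
  let G : ℝ ≃o ℝ := StrictMono.orderIsoOfSurjective E hEsm hEsurj
  refine ⟨fun w => G.symm w, G.symm.continuous, fun u w h => G.symm.strictMono h, ?_, ?_, ?_⟩
  · have hG : G 0 = E 0 := rfl
    have hE0 : E 0 = 0 := by simp [hE, h0]
    calc G.symm 0 = G.symm (G 0) := by rw [hG, hE0]
    _ = 0 := G.symm_apply_apply 0
  · intro u hu
    have hGu : G u = α u := by show E u = α u; simp [hE, if_pos hu]
    calc G.symm (α u) = G.symm (G u) := by rw [hGu]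
    _ = u := G.symm_apply_apply u
  · exact tendsto_atTop_atTop_of_monotone (fun a b h => G.symm.monotone h)
      (fun b => ⟨G b, (G.symm_apply_apply b).ge⟩)

theorem exists_flow (φ : ℝ → ℝ) (hφ : ClassP φ) :
    ∃ ψ Φ : ℝ → ℝ,
      Continuous ψ ∧ StrictMono ψ ∧ (∀ y, 0 < ψ y) ∧
      Tendsto ψ atBot (𝓝 0) ∧
      (∀ y, HasDerivAt ψ (min (φ (ψ y)) (ψ y) / 2) y) ∧
      (∀ m, 0 < m → ψ (Φ m) = m) ∧
      StrictMonoOn Φ (Ioi 0) ∧ ContinuousOn Φ (Ioi 0) ∧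
      Tendsto Φ (𝓝[>] (0:ℝ)) atBot := by
  obtain ⟨hφc, hφ0, hφpos⟩ := hφ
  set φt : ℝ → ℝ := fun u => min (φ u) u with hφt
  have hφtpos : ∀ u, 0 < u → 0 < φt u := fun u hu => lt_min (hφpos u hu) hu
  have hφtle : ∀ u, φt u ≤ u := fun u => min_le_right _ _
  have hφtc : ContinuousOn φt (Ioi 0) :=
    ContinuousOn.inf (hφc.mono Set.Ioi_subset_Ici_self) continuousOn_id
  set g : ℝ → ℝ := fun s => 2 / φt s with hg
  have hgc : ContinuousOn g (Ioi 0) :=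
    continuousOn_const.div hφtc (fun u hu => (hφtpos u hu).ne')
  have hgpos : ∀ u, 0 < u → 0 < g u := fun u hu => by
    exact div_pos two_pos (hφtpos u hu)
  have hgge : ∀ u, 0 < u → 2 / u ≤ g u := fun u hu => by
    exact div_le_div_of_nonneg_left two_pos.le (hφtpos u hu) (hφtle u)
  have hgint : ∀ u w : ℝ, 0 < u → 0 < w → IntervalIntegrable g MeasureTheory.volume u w := by
    intro u w hu hw
    apply (hgc.mono ?_).intervalIntegrable
    intro z hz
    exact lt_of_lt_of_le (lt_min hu hw) (by simpa [Set.uIcc] using hz.1)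
  set Φ : ℝ → ℝ := fun u => ∫ s in (1:ℝ)..u, g s with hΦ
  have hΦderiv : ∀ u : ℝ, 0 < u → HasDerivAt Φ (g u) u := by
    intro u hu
    exact intervalIntegral.integral_hasDerivAt_right (hgint 1 u one_pos hu)
      (ContinuousOn.stronglyMeasurableAtFilter isOpen_Ioi hgc u hu)
      (hgc.continuousAt (Ioi_mem_nhds hu))
  have hΦc : ContinuousOn Φ (Ioi 0) := fun u hu =>
    ((hΦderiv u hu).continuousAt).continuousWithinAt
  have hΦsub : ∀ u w : ℝ, 0 < u → 0 < w → Φ w - Φ u = ∫ s in u..w, g s := by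
    intro u w hu hw
    have := intervalIntegral.integral_add_adjacent_intervals (hgint 1 u one_pos hu) (hgint u w hu hw)
    simp only [hΦ]
    linarith [this]
  have hΦmono : StrictMonoOn Φ (Ioi 0) := by
    intro u hu w hw huw
    have hpos : 0 < ∫ s in u..w, g s := by
      apply intervalIntegral.intervalIntegral_pos_of_pos_on (hgint u w hu hw)
      · intro z hz; exact hgpos z (lt_trans hu hz.1)
      · exact huw
    have := hΦsub u w hu hw
    linarith
  -- comparison with 2 log
  have hΦlog_le : ∀ u : ℝ, 0 < u → u ≤ 1 → Φ u ≤ 2 * Real.log u := by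
    intro u hu h1
    have hint : Φ u = -∫ s in u..(1:ℝ), g s := by
      have := hΦsub u 1 hu one_pos
      have h1' : Φ 1 = 0 := by simp [hΦ]
      linarith
    have hmono : (∫ s in u..(1:ℝ), (2/s)) ≤ ∫ s in u..(1:ℝ), g s := by
      apply intervalIntegral.integral_mono_on h1
      · apply (ContinuousOn.intervalIntegrable ?_)
        apply continuousOn_const.div continuousOn_id
        intro z hz
        rw [Set.uIcc_of_le h1] at hz
        exact (lt_of_lt_of_le hu hz.1).ne'
      · exact hgint u 1 hu one_pos
      · intro z hz; exact hgge z (lt_of_lt_of_le hu hz.1)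
    have hlog : (∫ s in u..(1:ℝ), (2/s)) = -(2 * Real.log u) := by
      have : ∀ s : ℝ, 2/s = 2 * s⁻¹ := fun s => by ring
      simp only [this]
      rw [intervalIntegral.integral_const_mul, integral_inv_of_pos hu one_pos]
      rw [Real.log_div one_ne_zero hu.ne', Real.log_one]
      ring
    rw [hint]
    linarith
  have hΦlog_ge : ∀ u : ℝ, 1 ≤ u → 2 * Real.log u ≤ Φ u := by
    intro u h1
    have hu : (0:ℝ) < u := lt_of_lt_of_le one_pos h1
    have hmono : (∫ s in (1:ℝ)..u, (2/s)) ≤ ∫ s in (1:ℝ)..u, g s := by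
      apply intervalIntegral.integral_mono_on h1
      · apply (ContinuousOn.intervalIntegrable ?_)
        apply continuousOn_const.div continuousOn_id
        intro z hz
        rw [Set.uIcc_of_le h1] at hz
        exact (lt_of_lt_of_le one_pos hz.1).ne'
      · exact hgint 1 u one_pos hu
      · intro z hz; exact hgge z (lt_of_lt_of_le one_pos hz.1)
    have hlog : (∫ s in (1:ℝ)..u, (2/s)) = 2 * Real.log u := by
      have : ∀ s : ℝ, 2/s = 2 * s⁻¹ := fun s => by ring
      simp only [this]
      rw [intervalIntegral.integral_const_mul, integral_inv_of_pos one_pos hu]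
      simp
    rw [← hlog]; exact hmono
  have hΦbot : Tendsto Φ (𝓝[>] (0:ℝ)) atBot := by
    apply tendsto_atBot_mono' (𝓝[>] (0:ℝ)) (f₁ := fun u => 2 * Real.log u)
    · filter_upwards [Ioc_mem_nhdsGT_of_mem (Set.left_mem_Ico.2 one_pos)] with u hu
      exact hΦlog_le u hu.1 hu.2
    · have : Tendsto Real.log (𝓝[>] (0:ℝ)) atBot := Real.tendsto_log_nhdsGT_zero
      exact Tendsto.const_mul_atBot two_pos this
  -- G = Φ ∘ exp
  set G : ℝ → ℝ := fun y => Φ (Real.exp y) with hG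
  have hGderiv : ∀ y : ℝ, HasDerivAt G (g (Real.exp y) * Real.exp y) y := by
    intro y
    exact (hΦderiv (Real.exp y) (Real.exp_pos y)).comp y (Real.hasDerivAt_exp y)
  have hGsm : StrictMono G := by
    intro y z hyz
    exact hΦmono (Real.exp_pos y) (Real.exp_pos z) (Real.exp_lt_exp.2 hyz)
  have hGge : ∀ y : ℝ, 0 ≤ y → 2 * y ≤ G y := by
    intro y hy
    have := hΦlog_ge (Real.exp y) (Real.one_le_exp hy)
    rwa [Real.log_exp] at this
  have hGle : ∀ y : ℝ, y ≤ 0 → G y ≤ 2 * y := by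
    intro y hy
    have := hΦlog_le (Real.exp y) (Real.exp_pos y) (Real.exp_le_one_iff.2 hy)
    rwa [Real.log_exp] at this
  have hGcont : Continuous G := by
    apply continuous_iff_continuousAt.2
    exact fun y => (hGderiv y).continuousAt
  have hGtop : Tendsto G atTop atTop := by
    apply tendsto_atTop_mono' atTop (f₁ := fun y => 2 * y)
    · filter_upwards [eventually_ge_atTop (0:ℝ)] with y hy using hGge y hy
    · exact Tendsto.const_mul_atTop two_pos tendsto_id
  have hGbot : Tendsto G atBot atBot := by
    apply tendsto_atBot_mono' atBot (f₁ := fun y => 2 * y)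
    · filter_upwards [eventually_le_atBot (0:ℝ)] with y hy using hGle y hy
    · exact Tendsto.const_mul_atBot two_pos tendsto_id
  have hGsurj : Function.Surjective G := by
    intro w
    obtain ⟨b, hb⟩ := (hGtop.eventually (eventually_ge_atTop w)).exists_forall_of_atTop
    obtain ⟨a, ha⟩ := (hGbot.eventually (eventually_le_atBot w)).exists_forall_of_atBot
    have hab : min a b ≤ b := min_le_right _ _
    have hw : w ∈ Icc (G (min a b)) (G b) := by
      constructor
      · exact le_trans (hGsm.monotone (min_le_left a b)) (ha a le_rfl)
      · exact hb b le_rfl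
    obtain ⟨u, _, hu⟩ := intermediate_value_Icc hab hGcont.continuousOn hw
    exact ⟨u, hu⟩
  set GI : ℝ ≃o ℝ := StrictMono.orderIsoOfSurjective G hGsm hGsurj with hGI
  have hGIapp : ∀ y, GI y = G y := fun y => rfl
  have hGIsymm_G : ∀ y, GI.symm (G y) = y := fun y => by
    rw [← hGIapp]; exact GI.symm_apply_apply y
  have hG_GIsymm : ∀ w, G (GI.symm w) = w := fun w => by
    rw [← hGIapp]; exact GI.apply_symm_apply w
  set ψ : ℝ → ℝ := fun w => Real.exp (GI.symm w) with hψ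
  have hψcont : Continuous ψ := Real.continuous_exp.comp GI.symm.continuous
  have hψsm : StrictMono ψ := fun a b h => Real.exp_lt_exp.2 (GI.symm.strictMono h)
  have hψpos : ∀ w, 0 < ψ w := fun w => Real.exp_pos _
  have hGIsymm_bot : Tendsto (fun w => GI.symm w) atBot atBot :=
    tendsto_atBot_atBot_of_monotone (fun a b h => GI.symm.monotone h)
      (fun b => ⟨G b, (hGIsymm_G b).le⟩)
  have hψbot : Tendsto ψ atBot (𝓝 0) := Real.tendsto_exp_atBot.comp hGIsymm_bot
  have hψderiv : ∀ w, HasDerivAt ψ (min (φ (ψ w)) (ψ w) / 2) w := by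
    intro w
    have hf' : g (Real.exp (GI.symm w)) * Real.exp (GI.symm w) ≠ 0 := by
      have h1 := hgpos (Real.exp (GI.symm w)) (Real.exp_pos _)
      positivity
    have hSderiv : HasDerivAt (fun w => GI.symm w)
        (g (Real.exp (GI.symm w)) * Real.exp (GI.symm w))⁻¹ w := by
      apply HasDerivAt.of_local_left_inverse GI.symm.continuous.continuousAt
        (hGderiv (GI.symm w)) hf'
      exact Filter.Eventually.of_forall hG_GIsymm
    have := (Real.hasDerivAt_exp (GI.symm w)).comp w hSderiv
    refine this.congr_deriv ?_
    have hψw : ψ w = Real.exp (GI.symm w) := rfl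
    rw [hψw]
    set u := Real.exp (GI.symm w)
    have hu : 0 < u := Real.exp_pos _
    have hφtu : 0 < φt u := hφtpos u hu
    rw [hg]
    field_simp
    ring
  refine ⟨ψ, Φ, hψcont, hψsm, hψpos, hψbot, hψderiv, ?_, hΦmono, hΦc, hΦbot⟩
  intro m hm
  have : Φ m = G (Real.log m) := by
    show Φ m = Φ (Real.exp (Real.log m))
    rw [Real.exp_log hm]
  rw [hψ]
  simp only [this, hGIsymm_G, Real.exp_log hm]

theorem dini_slope {v : ℝ → ℝ} {t L : ℝ} (h : DiniUpper v t ≤ ((L:ℝ) : EReal)) :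
    ∀ r : ℝ, L < r → ∃ᶠ z in 𝓝[>] t, slope v t z < r := by
  intro r hr
  have hlt : DiniUpper v t < ((r:ℝ):EReal) := lt_of_le_of_lt h (by exact_mod_cast hr)
  have hev : ∀ᶠ s in 𝓝[>] (0:ℝ), (((v (t + s) - v t) / s : ℝ) : EReal) < ((r:ℝ):EReal) :=
    Filter.eventually_lt_of_limsup_lt hlt
  have hev' : ∀ᶠ s in 𝓝[>] (0:ℝ), slope v t (t + s) < r := by
    filter_upwards [hev] with s hs
    rw [slope_def_field]
    have h2 : (t + s - t) = s := by ring
    rw [h2]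
    exact_mod_cast hs
  have hmap : Filter.map (fun s => t + s) (𝓝[>] (0:ℝ)) = 𝓝[>] t := by
    have hEq : (fun s => t + s) = ⇑(Homeomorph.addLeft t) := rfl
    rw [hEq, ((Homeomorph.addLeft t).isEmbedding.map_nhdsWithin_eq (Ioi 0) 0)]
    have h3 : (Homeomorph.addLeft t) '' (Ioi 0) = Ioi t := by
      ext z
      simp only [Homeomorph.addLeft, Set.mem_image, Set.mem_Ioi, Homeomorph.homeomorph_mk_coe,
        Equiv.coe_fn_mk]
      constructor
      · rintro ⟨w, hw, rfl⟩
        show t < (Equiv.addLeft t) w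
        simp only [Equiv.coe_addLeft]
        linarith
      · intro hz
        refine ⟨z - t, by linarith, ?_⟩
        show (Equiv.addLeft t) (z - t) = z
        simp only [Equiv.coe_addLeft]
        ring
    rw [h3]
    norm_num
  rw [← hmap, Filter.frequently_map]
  exact hev'.frequently


theorem traj_bound
    (t₀ : ℝ) (τ : ℕ → ℝ) (hseq : IsImpulseSeq t₀ τ)
    (v : ℝ → ℝ) (hreg : ImpulsiveRegular t₀ τ v)
    (φ : ℝ → ℝ) (hφpos : ∀ u, 0 < u → 0 < φ u)
    (χr c : ℝ) (hχc : χr ≤ c) (hc0 : 0 ≤ c)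
    (ψ : ℝ → ℝ) (hψcont : Continuous ψ) (hψsm : StrictMono ψ) (hψpos : ∀ y, 0 < ψ y)
    (hψd : ∀ y, HasDerivAt ψ (min (φ (ψ y)) (ψ y) / 2) y)
    (hdini : ∀ t, t₀ ≤ t → t ∉ impulseSet τ → χr ≤ v t →
      DiniUpper v t ≤ ((-φ (v t) : ℝ) : EReal))
    (hjump1 : ∀ i : ℕ, 1 ≤ i → χr ≤ Function.leftLim v (τ i) →
      v (τ i) ≤ Function.leftLim v (τ i))
    (hjump2 : ∀ i : ℕ, 1 ≤ i → Function.leftLim v (τ i) < χr → v (τ i) ≤ c) :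
    (v t₀ ≤ c → ∀ t, t₀ ≤ t → v t ≤ c) ∧
    (∀ K, v t₀ ≤ max (ψ (K - t₀)) c → ∀ t, t₀ ≤ t → v t ≤ max (ψ (K - t)) c) := by
  obtain ⟨hτ0, hτsm, hτtop⟩ := hseq
  obtain ⟨hrc, hcont, hll⟩ := hreg
  have hτ_ge : ∀ i, t₀ ≤ τ i := by
    intro i
    calc t₀ = τ 0 := hτ0.symm
    _ ≤ τ i := hτsm.monotone (Nat.zero_le i)
  -- continuity of v on impulse-free closed intervals
  have hv_cont : ∀ a b, t₀ ≤ a → (∀ z ∈ Ioc a b, z ∉ impulseSet τ) →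
      ContinuousOn v (Icc a b) := by
    intro a b ha hfree z hz
    rcases eq_or_lt_of_le hz.1 with heq | hlt
    · exact (heq ▸ (hrc z (heq ▸ ha) : ContinuousWithinAt v (Ici z) z).mono
        (fun w (hw : w ∈ Icc a b) => heq ▸ hw.1))
    · exact (hcont z (ha.trans hlt.le) (hfree z ⟨hlt, hz.2⟩)).mono (fun w hw => ha.trans hw.1)
  -- Step 1 : invariance of {v ≤ c} on impulse-free intervals
  have step1 : ∀ a b, t₀ ≤ a → a ≤ b → (∀ z ∈ Ioc a b, z ∉ impulseSet τ) → v a ≤ c →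
      ∀ t ∈ Icc a b, v t ≤ c := by
    intro a b ha hab hfree hva t ht
    have key : ∀ ε, 0 < ε → v t ≤ c + ε * Real.exp (t - a) := by
      intro ε hε
      have hfence := my_fencing (f := v) (f' := fun z => -φ (v z))
        (B := fun z => c + ε * Real.exp (z - a)) (B' := fun z => ε * Real.exp (z - a))
        (a := a) (b := b) (hv_cont a b ha hfree) ?_ ?_ ?_ ?_ ?_
      · exact hfence ht
      · -- hf' at contact points
        intro x hx hcontact r hr
        have hcontact' : v x = c + ε * Real.exp (x - a) := hcontact
        have hr' : -φ (v x) < r := hr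
        have hBx : 0 < ε * Real.exp (x - a) := by positivity
        have hxa : a < x := by
          rcases eq_or_lt_of_le hx.1 with heq | h
          · exfalso
            rw [← heq, sub_self, Real.exp_zero, mul_one] at hcontact'
            linarith
          · exact h
        have hximp : x ∉ impulseSet τ := hfree x ⟨hxa, hx.2.le⟩
        have hvx : χr ≤ v x := by rw [hcontact']; linarith
        exact dini_slope (hdini x (ha.trans hx.1) hximp hvx) r hr'
      · -- f a ≤ B a
        show v a ≤ c + ε * Real.exp (a - a)
        rw [sub_self, Real.exp_zero, mul_one]
        linarith
      · -- continuity of B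
        exact (continuous_const.add (continuous_const.mul
          (Real.continuous_exp.comp (continuous_id.sub continuous_const)))).continuousOn
      · -- derivative of B
        intro x hx hcontact
        have : HasDerivAt (fun z => c + ε * Real.exp (z - a)) (ε * Real.exp (x - a)) x := by
          have h1 : HasDerivAt (fun z : ℝ => z - a) 1 x := (hasDerivAt_id x).sub_const a
          have h2 : HasDerivAt (fun z => Real.exp (z - a)) (Real.exp (x - a) * 1) x :=
            h1.exp
          have h3 := (h2.const_mul ε).const_add c
          refine h3.congr_deriv ?_
          ring
        exact this.hasDerivWithinAt
      · -- strict bound at contact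
        intro x hx hcontact
        have hcontact' : v x = c + ε * Real.exp (x - a) := hcontact
        show -φ (v x) < ε * Real.exp (x - a)
        have hexp := Real.exp_pos (x - a)
        have hvpos : 0 < v x := by rw [hcontact']; nlinarith
        have := hφpos (v x) hvpos
        nlinarith
    by_contra hcon
    push_neg at hcon
    have hexp : 0 < Real.exp (t - a) := Real.exp_pos _
    have hvtc : 0 < v t - c := by linarith
    have h1 := key ((v t - c) / (2 * Real.exp (t - a))) (by positivity)
    have h2 : ((v t - c) / (2 * Real.exp (t - a))) * Real.exp (t - a) = (v t - c) / 2 := by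
      field_simp
    rw [h2] at h1
    linarith
  -- Step 2 : barrier bound on impulse-free intervals
  have step2 : ∀ K a b, t₀ ≤ a → a ≤ b → (∀ z ∈ Ioc a b, z ∉ impulseSet τ) →
      v a ≤ max (ψ (K - a)) c → ∀ t ∈ Icc a b, v t ≤ max (ψ (K - t)) c := by
    intro K a b ha hab hfree hva t ht
    rcases le_or_gt (v a) c with hvac | hvac
    · exact le_trans (step1 a b ha hab hfree hvac t ht) (le_max_right _ _)
    have hva' : v a ≤ ψ (K - a) := (le_max_iff.1 hva).resolve_right (by linarith)
    have hδbound : ∀ δ, 0 < δ → v t ≤ max (ψ (K + δ - t)) c := by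
      intro δ hδpos
      have hBmono : ∀ z w : ℝ, z ≤ w → ψ (K + δ - w) ≤ ψ (K + δ - z) :=
        fun z w h => hψsm.monotone (by linarith)
      have hBcont : Continuous (fun z => ψ (K + δ - z)) :=
        hψcont.comp (continuous_const.sub continuous_id)
      have claimA : ∀ T, T ∈ Icc a b → c ≤ ψ (K + δ - T) →
          ∀ s ∈ Icc a T, v s ≤ ψ (K + δ - s) := by
        intro T hT hcT
        have hfence := my_fencing (f := v) (f' := fun z => -φ (v z))
          (B := fun z => ψ (K + δ - z))
          (B' := fun z => -(min (φ (ψ (K + δ - z))) (ψ (K + δ - z)) / 2))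
          (a := a) (b := T)
          (hv_cont a T ha (fun z hz => hfree z ⟨hz.1, hz.2.trans hT.2⟩)) ?_ ?_
          hBcont.continuousOn ?_ ?_
        · exact fun s hs => hfence hs
        · -- hf'
          intro x hx hcontact r hr
          have hcontact' : v x = ψ (K + δ - x) := hcontact
          have hr' : -φ (v x) < r := hr
          have hxa : a < x := by
            rcases eq_or_lt_of_le hx.1 with heq | h
            · exfalso
              have hlt : ψ (K - a) < ψ (K + δ - a) := hψsm (by linarith)
              rw [← heq] at hcontact'
              linarith
            · exact h
          have hximp : x ∉ impulseSet τ := hfree x ⟨hxa, hx.2.le.trans hT.2⟩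
          have hvx : χr ≤ v x := by
            rw [hcontact']
            calc χr ≤ c := hχc
            _ ≤ ψ (K + δ - T) := hcT
            _ ≤ ψ (K + δ - x) := hBmono x T hx.2.le
          exact dini_slope (hdini x (ha.trans hx.1) hximp hvx) r hr'
        · -- f a ≤ B a
          show v a ≤ ψ (K + δ - a)
          have : ψ (K - a) < ψ (K + δ - a) := hψsm (by linarith)
          linarith
        · -- derivative
          intro x hx hcontact
          have h1 : HasDerivAt (fun z : ℝ => K + δ - z) (-1) x := by
            exact (hasDerivAt_id x).const_sub (K + δ)
          have h2 := (hψd (K + δ - x)).comp x h1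
          have h3 : (min (φ (ψ (K + δ - x))) (ψ (K + δ - x)) / 2) * (-1)
              = -(min (φ (ψ (K + δ - x))) (ψ (K + δ - x)) / 2) := by ring
          rw [h3] at h2
          exact h2.hasDerivWithinAt
        · -- strict bound at contact
          intro x hx hcontact
          have hcontact' : v x = ψ (K + δ - x) := hcontact
          show -φ (v x) < -(min (φ (ψ (K + δ - x))) (ψ (K + δ - x)) / 2)
          rw [hcontact']
          set u := ψ (K + δ - x) with hu
          have hupos : 0 < u := hψpos _
          have hmin : 0 < min (φ u) u := lt_min (hφpos u hupos) hupos
          have hminle : min (φ u) u ≤ φ u := min_le_left _ _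
          linarith
      rcases le_or_gt c (ψ (K + δ - b)) with hcb | hcb
      · exact le_trans (claimA b ⟨hab, le_rfl⟩ hcb t ht) (le_max_left _ _)
      · -- crossing time
        have hIVT := intermediate_value_Icc' hab (hBcont.continuousOn (s := Icc a b))
        have hcmem : c ∈ Icc (ψ (K + δ - b)) (ψ (K + δ - a)) := by
          constructor
          · exact hcb.le
          · have : ψ (K - a) < ψ (K + δ - a) := hψsm (by linarith)
            linarith
        obtain ⟨T, hTmem, hTeq⟩ := hIVT hcmem
        rcases le_total t T with htT | hTt
        · have hTeq' : ψ (K + δ - T) = c := hTeq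
          exact le_trans (claimA T hTmem hTeq'.ge t ⟨ht.1, htT⟩) (le_max_left _ _)
        · have hTeq' : ψ (K + δ - T) = c := hTeq
          have hvT : v T ≤ c := by
            have := claimA T hTmem hTeq'.ge T ⟨hTmem.1, le_rfl⟩
            rwa [hTeq'] at this
          have := step1 T b (ha.trans hTmem.1) hTmem.2
            (fun z hz => hfree z ⟨lt_of_le_of_lt hTmem.1 hz.1, hz.2⟩) hvT t ⟨hTt, ht.2⟩
          exact le_trans this (le_max_right _ _)
    -- δ → 0⁺ limit
    have hcW : Continuous fun δ : ℝ => max (ψ (K + δ - t)) c :=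
      (hψcont.comp ((continuous_const.add continuous_id).sub continuous_const)).max
        continuous_const
    have htend : Tendsto (fun δ : ℝ => max (ψ (K + δ - t)) c) (𝓝[>] 0)
        (𝓝 (max (ψ (K - t)) c)) := by
      have h0 := (hcW.tendsto 0).mono_left (nhdsWithin_le_nhds (s := Ioi (0:ℝ)))
      simpa using h0
    exact ge_of_tendsto htend (eventually_nhdsWithin_of_forall (fun δ hδ => hδbound δ hδ))
  -- left-limit propagation
  have hleft : ∀ (i : ℕ) (W : ℝ → ℝ), Continuous W →
      (∀ s ∈ Ico (τ i) (τ (i+1)), v s ≤ W s) →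
      Function.leftLim v (τ (i+1)) ≤ W (τ (i+1)) := by
    intro i W hWc hbnd
    obtain ⟨L, hL⟩ := hll (i+1) (by omega)
    haveI : (𝓝[<] (τ (i+1))).NeBot := by infer_instance
    rw [leftLim_eq_of_tendsto hL]
    have hWt : Tendsto W (𝓝[<] (τ (i+1))) (𝓝 (W (τ (i+1)))) :=
      (hWc.tendsto _).mono_left nhdsWithin_le_nhds
    apply le_of_tendsto_of_tendsto hL hWt
    have hmem : Ioo (τ i) (τ (i+1)) ∈ 𝓝[<] (τ (i+1)) :=
      Ioo_mem_nhdsLT_of_mem ⟨hτsm (lt_add_one i), le_rfl⟩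
    filter_upwards [hmem] with z hz
    exact hbnd z ⟨hz.1.le, hz.2⟩
  -- impulse-freeness of the open-closed intervals between impulses
  have hfree_between : ∀ (i : ℕ) (t' : ℝ), t' < τ (i+1) →
      ∀ z ∈ Ioc (τ i) t', z ∉ impulseSet τ := by
    rintro i t' ht' z hz ⟨j, hj1, hjeq⟩
    have hij : i < j := by
      by_contra h
      push_neg at h
      have := hτsm.monotone h
      rw [hjeq] at this
      exact absurd this (not_le.2 hz.1)
    have : τ (i+1) ≤ τ j := hτsm.monotone (by omega)
    rw [hjeq] at this
    linarith [hz.2]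
  -- locating t between impulses
  have hfind : ∀ t, t₀ ≤ t → ∃ i, τ i ≤ t ∧ t < τ (i+1) := by
    intro t ht
    have hex : ∃ n, t < τ n := (hτtop.eventually (eventually_gt_atTop t)).exists
    classical
    have hj0 : Nat.find hex ≠ 0 := by
      intro h0
      have := Nat.find_spec hex
      rw [h0, hτ0] at this
      exact absurd ht (not_le.2 this)
    obtain ⟨i, hi⟩ := Nat.exists_eq_succ_of_ne_zero hj0
    refine ⟨i, ?_, ?_⟩
    · have := Nat.find_min hex (by omega : i < Nat.find hex)
      exact le_of_not_gt this
    · have := Nat.find_spec hex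
      rwa [hi] at this
  constructor
  · -- claim S
    intro hv0 t ht
    have H : ∀ i, v (τ i) ≤ c := by
      intro i
      induction i with
      | zero => rwa [hτ0]
      | succ i ih =>
        have hbnd : ∀ s ∈ Ico (τ i) (τ (i+1)), v s ≤ c := by
          intro s hs
          exact step1 (τ i) s (hτ_ge i) hs.1 (hfree_between i s hs.2) ih s ⟨hs.1, le_rfl⟩
        have hL := hleft i (fun _ => c) continuous_const hbnd
        rcases le_or_gt χr (Function.leftLim v (τ (i+1))) with h1 | h1
        · exact (hjump1 (i+1) (by omega) h1).trans hL
        · exact hjump2 (i+1) (by omega) h1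
    obtain ⟨i, hi1, hi2⟩ := hfind t ht
    exact step1 (τ i) t (hτ_ge i) hi1 (hfree_between i t hi2) (H i) t ⟨hi1, le_rfl⟩
  · -- claim C
    intro K hv0 t ht
    have hWc : Continuous fun z => max (ψ (K - z)) c :=
      (hψcont.comp (continuous_const.sub continuous_id)).max continuous_const
    have H : ∀ i, v (τ i) ≤ max (ψ (K - τ i)) c := by
      intro i
      induction i with
      | zero => rwa [hτ0]
      | succ i ih =>
        have hbnd : ∀ s ∈ Ico (τ i) (τ (i+1)), v s ≤ max (ψ (K - s)) c := by
          intro s hs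
          exact step2 K (τ i) s (hτ_ge i) hs.1 (hfree_between i s hs.2) ih s ⟨hs.1, le_rfl⟩
        have hL := hleft i (fun z => max (ψ (K - z)) c) hWc hbnd
        rcases le_or_gt χr (Function.leftLim v (τ (i+1))) with h1 | h1
        · exact (hjump1 (i+1) (by omega) h1).trans hL
        · exact le_trans (hjump2 (i+1) (by omega) h1) (le_max_right _ _)
    obtain ⟨i, hi1, hi2⟩ := hfind t ht
    exact step2 K (τ i) t (hτ_ge i) hi1 (hfree_between i t hi2) (H i) t ⟨hi1, le_rfl⟩

universe u

/-- a time-varying ISS-Lyapunov function along a trajectory implies the ISS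
estimate, with `β ∈ 𝒦ℒ` and `γ ∈ 𝒦∞` depending only on `α₁, α₂, α₃, χ, φ`. -/
theorem directLyapunovISS
    (α₁ α₂ χ α₃ φ : ℝ → ℝ)
    (hα₁ : ClassKInf α₁) (hα₂ : ClassKInf α₂) (hχ : ClassKInf χ)
    (hα₃ : ClassK α₃) (hφ : ClassP φ) :
    ∃ β : ℝ → ℝ → ℝ, ∃ γ : ℝ → ℝ, ClassKL β ∧ ClassKInf γ ∧
      ∀ (X : Type u) [NormedAddCommGroup X] [NormedSpace ℝ X],
      ∀ (t₀ : ℝ) (τ : ℕ → ℝ), IsImpulseSeq t₀ τ →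
      ∀ r : ℝ, 0 ≤ r →
      ∀ (x : ℝ → X) (V : ℝ → X → ℝ),
      (∀ t, t₀ ≤ t → ∀ y : X, α₁ ‖y‖ ≤ V t y ∧ V t y ≤ α₂ ‖y‖) →
      ImpulsiveRegular t₀ τ (fun t => V t (x t)) →
      (∀ t, t₀ ≤ t → t ∉ impulseSet τ → χ r ≤ V t (x t) →
        DiniUpper (fun s => V s (x s)) t ≤ (((-φ (V t (x t))) : ℝ) : EReal)) →
      (∀ i : ℕ, 1 ≤ i → χ r ≤ Function.leftLim (fun s => V s (x s)) (τ i) →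
        V (τ i) (x (τ i)) ≤ Function.leftLim (fun s => V s (x s)) (τ i)) →
      (∀ i : ℕ, 1 ≤ i → Function.leftLim (fun s => V s (x s)) (τ i) < χ r →
        V (τ i) (x (τ i)) ≤ α₃ r) →
      ∀ t, t₀ ≤ t → ‖x t‖ ≤ β ‖x t₀‖ (t - t₀) + γ r := by
  obtain ⟨g₁, hg₁c, hg₁sm, hg₁0, hg₁inv, hg₁top⟩ := exists_kinv hα₁
  obtain ⟨ψ, Φ, hψcont, hψsm, hψpos, hψbot, hψd, hψΦ, hΦsm, hΦc, hΦbot⟩ := exists_flow φ hφ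
  have hα₂c := hα₂.1.1
  have hα₂sm := hα₂.1.2.1
  have hα₂0 := hα₂.1.2.2
  have hχc := hχ.1.1
  have hχsm := hχ.1.2.1
  have hχ0 := hχ.1.2.2
  have hχtop := hχ.2
  have hα₃c := hα₃.1
  have hα₃sm := hα₃.2.1
  have hα₃0 := hα₃.2.2
  have hφpos := hφ.2.2
  have hg₁mono : Monotone g₁ := hg₁sm.monotone
  have hg₁nonneg : ∀ w, 0 ≤ w → 0 ≤ g₁ w := by
    intro w hw
    rw [← hg₁0]
    exact hg₁mono hw
  have hα₂pos : ∀ ρ : ℝ, 0 < ρ → 0 < α₂ ρ := by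
    intro ρ hρ
    rw [← hα₂0]
    exact hα₂sm (le_refl (0:ℝ)) hρ.le hρ
  classical
  set σ : ℝ → ℝ → ℝ := fun ρ s => if 0 < ρ then ψ (Φ (α₂ ρ) - s) else 0 with hσdef
  refine ⟨fun ρ s => g₁ (2 * σ ρ s), fun r => g₁ (2 * max (χ r) (α₃ r)), ?_, ?_, ?_⟩
  · -- ClassKL β
    constructor
    · intro s _
      refine ⟨?_, ?_, ?_⟩
      · -- continuity in ρ on Ici 0
        intro ρ hρ
        rcases eq_or_lt_of_le (mem_Ici.mp hρ) with hρ0 | hρpos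
        · -- at zero
          have hIci : Ici (0:ℝ) = insert 0 (Ioi 0) := by
            rw [Set.Ioi_insert]
          rw [← hρ0, hIci]
          rw [continuousWithinAt_insert_self]
          have hval : g₁ (2 * σ 0 s) = 0 := by
            rw [hσdef]
            simp [hg₁0]
          show Tendsto (fun ρ' => g₁ (2 * σ ρ' s)) (𝓝[>] (0:ℝ)) (𝓝 (g₁ (2 * σ 0 s)))
          rw [hval]
          have h1 : Tendsto α₂ (𝓝[>] (0:ℝ)) (𝓝[>] (0:ℝ)) := by
            rw [tendsto_nhdsWithin_iff]
            constructor
            · have := (hα₂c 0 (self_mem_Ici)).tendsto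
              rw [hα₂0] at this
              exact this.mono_left (nhdsWithin_mono 0 Ioi_subset_Ici_self)
            · exact eventually_nhdsWithin_of_forall (fun ρ' hρ' => hα₂pos ρ' hρ')
          have h2 : Tendsto (fun ρ => Φ (α₂ ρ)) (𝓝[>] (0:ℝ)) atBot := hΦbot.comp h1
          have h3 : Tendsto (fun ρ => Φ (α₂ ρ) - s) (𝓝[>] (0:ℝ)) atBot :=
            tendsto_atBot_add_const_right _ (-s) h2
          have h4 : Tendsto (fun ρ => ψ (Φ (α₂ ρ) - s)) (𝓝[>] (0:ℝ)) (𝓝 0) := hψbot.comp h3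
          have h5 : Tendsto (fun u : ℝ => g₁ (2 * u)) (𝓝 0) (𝓝 0) := by
            have hcu : Continuous fun u : ℝ => g₁ (2 * u) :=
              hg₁c.comp (continuous_const.mul continuous_id)
            have := hcu.tendsto 0
            simpa [hg₁0] using this
          have h6 := h5.comp h4
          apply h6.congr'
          filter_upwards [eventually_mem_nhdsWithin] with ρ' hρ'
          simp only [Function.comp, hσdef]
          rw [if_pos (mem_Ioi.mp hρ')]
        · -- at positive points
          apply ContinuousAt.continuousWithinAt
          have hcA : ContinuousAt (fun ρ => g₁ (2 * ψ (Φ (α₂ ρ) - s))) ρ := by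
            have hc1 : ContinuousAt α₂ ρ := hα₂c.continuousAt (Ici_mem_nhds hρpos)
            have hc2 : ContinuousAt Φ (α₂ ρ) := hΦc.continuousAt (Ioi_mem_nhds (hα₂pos ρ hρpos))
            have hc3 : ContinuousAt (fun ρ => ψ (Φ (α₂ ρ) - s)) ρ :=
              hψcont.continuousAt.comp ((hc2.comp hc1).sub continuousAt_const)
            exact hg₁c.continuousAt.comp (continuousAt_const.mul hc3)
          apply hcA.congr
          have hev : ∀ᶠ ρ' in 𝓝 ρ, ρ' ∈ Ioi (0:ℝ) := Ioi_mem_nhds hρpos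
          filter_upwards [hev] with ρ' hρ'
          simp only [hσdef]
          rw [if_pos (mem_Ioi.mp hρ')]
      · -- strict monotone in ρ
        intro ρ₁ h1 ρ₂ h2 h12
        apply hg₁sm
        have hσlt : σ ρ₁ s < σ ρ₂ s := by
          have h2pos : 0 < ρ₂ := lt_of_le_of_lt h1 h12
          rcases eq_or_lt_of_le (mem_Ici.mp h1) with h10 | h1pos
          · rw [hσdef]
            simp only [← h10, lt_irrefl, if_neg (lt_irrefl (0:ℝ)), if_pos h2pos]
            exact hψpos _
          · rw [hσdef]
            simp only [if_pos h1pos, if_pos h2pos]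
            apply hψsm
            have := hΦsm (hα₂pos ρ₁ h1pos) (hα₂pos ρ₂ h2pos) (hα₂sm h1 h2 h12)
            linarith
        linarith
      · -- zero at zero
        rw [hσdef]
        simp [hg₁0]
    · intro ρ hρ
      rcases eq_or_lt_of_le (hρ : (0:ℝ) ≤ ρ) with hρ0 | hρpos
      · constructor
        · intro s1 _ s2 _ _
          rw [hσdef]
          simp [← hρ0]
        · have : ∀ s : ℝ, g₁ (2 * σ ρ s) = 0 := by
            intro s
            rw [hσdef]
            simp [← hρ0, hg₁0]
          rw [funext this]
          exact tendsto_const_nhds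
      · constructor
        · intro s1 _ s2 _ h12
          apply hg₁mono
          have : σ ρ s2 ≤ σ ρ s1 := by
            rw [hσdef]
            simp only [if_pos hρpos]
            exact hψsm.monotone (by linarith)
          linarith
        · have h3 : Tendsto (fun s : ℝ => Φ (α₂ ρ) - s) atTop atBot := by
            simpa [sub_eq_add_neg] using
              tendsto_atBot_add_const_left atTop (Φ (α₂ ρ)) tendsto_neg_atTop_atBot
          have h4 := hψbot.comp h3
          have h5 : Tendsto (fun u : ℝ => g₁ (2 * u)) (𝓝 0) (𝓝 0) := by
            have hcu : Continuous fun u : ℝ => g₁ (2 * u) :=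
              hg₁c.comp (continuous_const.mul continuous_id)
            have := hcu.tendsto 0
            simpa [hg₁0] using this
          have h6 := h5.comp h4
          apply h6.congr
          intro s
          simp only [Function.comp, hσdef]
          rw [if_pos hρpos]
  · -- ClassKInf γ
    refine ⟨⟨?_, ?_, ?_⟩, ?_⟩
    · intro r0 hr0
      have hmx : ContinuousOn (fun r => max (χ r) (α₃ r)) (Ici 0) := hχc.sup hα₃c
      exact (hg₁c.comp_continuousOn (continuousOn_const.mul hmx)) r0 hr0
    · intro r1 h1 r2 h2 h12
      apply hg₁sm
      have := max_lt_max (hχsm h1 h2 h12) (hα₃sm h1 h2 h12)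
      linarith
    · show g₁ (2 * max (χ 0) (α₃ 0)) = 0
      rw [hχ0, hα₃0]
      simpa using hg₁0
    · apply hg₁top.comp
      apply tendsto_atTop_mono (fun r => ?_)
        (Tendsto.const_mul_atTop two_pos hχtop)
      have : χ r ≤ max (χ r) (α₃ r) := le_max_left _ _
      linarith
  · -- the main estimate
    intro X _ _ t₀ τ hseq r hr x V hV hregV hdiniV hjump1V hjump2V t ht
    set v : ℝ → ℝ := fun t => V t (x t) with hvdef
    set c : ℝ := max (χ r) (α₃ r) with hcdef
    have hχrc : χ r ≤ c := le_max_left _ _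
    have hc0 : 0 ≤ c := by
      have : χ 0 ≤ χ r := hχsm.monotoneOn self_mem_Ici hr hr
      rw [hχ0] at this
      exact le_trans this hχrc
    have htraj := traj_bound t₀ τ hseq v hregV φ hφpos (χ r) c hχrc hc0
      ψ hψcont hψsm hψpos hψd hdiniV hjump1V
      (fun i hi hlt => le_trans (hjump2V i hi hlt) (le_max_right _ _))
    have hvle : ∀ s, t₀ ≤ s → v s ≤ α₂ ‖x s‖ := fun s hs => (hV s hs (x s)).2
    have hvge : ∀ s, t₀ ≤ s → α₁ ‖x s‖ ≤ v s := fun s hs => (hV s hs (x s)).1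
    have hnorm : ∀ w s, t₀ ≤ s → v s ≤ w → ‖x s‖ ≤ g₁ w := by
      intro w s hs hvw
      calc ‖x s‖ = g₁ (α₁ ‖x s‖) := (hg₁inv _ (norm_nonneg _)).symm
      _ ≤ g₁ w := hg₁mono (le_trans (hvge s hs) hvw)
    have hγnn : 0 ≤ g₁ (2 * c) := hg₁nonneg _ (by linarith)
    rcases eq_or_lt_of_le (norm_nonneg (x t₀)) with hρ0 | hρpos
    · -- trivial initial state
      have hv0 : v t₀ ≤ c := by
        have h1 := hvle t₀ le_rfl
        rw [← hρ0, hα₂0] at h1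
        linarith
      have hvt := htraj.1 hv0 t ht
      have h1 : ‖x t‖ ≤ g₁ (2 * c) := hnorm _ t ht (by linarith)
      have hn0 : ‖x t₀‖ = 0 := hρ0.symm
      have hβ0 : g₁ (2 * σ ‖x t₀‖ (t - t₀)) = 0 := by
        rw [hσdef]
        simp [hn0, hg₁0]
      show ‖x t‖ ≤ g₁ (2 * σ ‖x t₀‖ (t - t₀)) + g₁ (2 * c)
      rw [hβ0]
      linarith
    · -- nontrivial initial state
      have hm : 0 < α₂ ‖x t₀‖ := hα₂pos _ hρpos
      set K : ℝ := Φ (α₂ ‖x t₀‖) + t₀ with hK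
      have hstart : v t₀ ≤ max (ψ (K - t₀)) c := by
        have h1 : ψ (K - t₀) = α₂ ‖x t₀‖ := by
          rw [hK, add_sub_cancel_right]
          exact hψΦ _ hm
        rw [h1]
        exact le_trans (hvle t₀ le_rfl) (le_max_left _ _)
      have hvt := htraj.2 K hstart t ht
      have harg : K - t = Φ (α₂ ‖x t₀‖) - (t - t₀) := by rw [hK]; ring
      rw [harg] at hvt
      set A : ℝ := ψ (Φ (α₂ ‖x t₀‖) - (t - t₀)) with hA
      have hApos : 0 ≤ A := (hψpos _).le
      have h2 : v t ≤ max (2*A) (2*c) :=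
        le_trans hvt (max_le_max (by linarith) (by linarith))
      have h3 : ‖x t‖ ≤ g₁ (max (2*A) (2*c)) := hnorm _ t ht h2
      have h4 : g₁ (max (2*A) (2*c)) = max (g₁ (2*A)) (g₁ (2*c)) := hg₁mono.map_max
      have h5 : ‖x t‖ ≤ g₁ (2*A) + g₁ (2*c) := by
        rw [h4] at h3
        have hnn1 : 0 ≤ g₁ (2*A) := hg₁nonneg _ (by linarith)
        exact le_trans h3 (max_le (by linarith) (by linarith))
      have hβeq : σ ‖x t₀‖ (t - t₀) = A := by
        rw [hσdef]
        simp only [if_pos hρpos, hA]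
      show ‖x t‖ ≤ g₁ (2 * σ ‖x t₀‖ (t - t₀)) + g₁ (2 * c)
      rw [hβeq]
      exact h5
end
end

section
/- Let φ ∈ 𝒫 and define F(q) := ∫₁^q ds/φ(s) for q > 0. Let t₀ ∈ ℝ, (tᵢ) be an impulse time sequence, and let v: [t₀,∞) → (0,∞) be impulsive-regular with D⁺v(t) ≤ −φ(v(t)) at every non-impulse time t and v(tᵢ) ≤ v(tᵢ⁻) at every impulse time tᵢ. Then F(v(t)) ≤ F(v(t₀)) − (t − t₀) for all t ≥ t₀. -/
open Filter Topology Set MeasureTheory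

noncomputable section

lemma invCont {φ : ℝ → ℝ} (hφ : ClassP φ) :
    ContinuousOn (fun y => (φ y)⁻¹) (Ioi 0) := by
  intro s hs
  have h1 : ContinuousAt φ s := (hφ.1 s (Set.mem_Ici.2 (le_of_lt hs))).continuousAt (Ici_mem_nhds hs)
  exact (h1.inv₀ (ne_of_gt (hφ.2.2 s hs))).continuousWithinAt

lemma invIntegrable {φ : ℝ → ℝ} (hφ : ClassP φ) {p q : ℝ} (hp : 0 < p) (hq : 0 < q) :
    IntervalIntegrable (fun y => (φ y)⁻¹) volume p q := by
  apply ((invCont hφ).mono ?_).intervalIntegrable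
  intro s hs
  exact lt_of_lt_of_le (lt_min hp hq) hs.1

lemma F_hasDeriv {φ : ℝ → ℝ} (hφ : ClassP φ) {q : ℝ} (hq : 0 < q) :
    HasDerivAt (fun y => ∫ s in (1:ℝ)..y, (φ s)⁻¹) (φ q)⁻¹ q := by
  apply intervalIntegral.integral_hasDerivAt_right (invIntegrable hφ one_pos hq)
    ((invCont hφ).stronglyMeasurableAtFilter isOpen_Ioi q hq)
  exact ((hφ.1 q (le_of_lt hq)).continuousAt (Ici_mem_nhds hq)).inv₀ (ne_of_gt (hφ.2.2 q hq))

lemma F_mono {φ : ℝ → ℝ} (hφ : ClassP φ) {p q : ℝ} (hp : 0 < p) (hpq : p ≤ q) :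
    (∫ s in (1:ℝ)..p, (φ s)⁻¹) ≤ ∫ s in (1:ℝ)..q, (φ s)⁻¹ := by
  have hq : 0 < q := lt_of_lt_of_le hp hpq
  have hadd := intervalIntegral.integral_add_adjacent_intervals
    (invIntegrable hφ one_pos hp) (invIntegrable hφ hp hq)
  have hnn : 0 ≤ ∫ s in p..q, (φ s)⁻¹ := by
    apply intervalIntegral.integral_nonneg hpq
    intro u hu
    exact inv_nonneg.2 (le_of_lt (hφ.2.2 u (lt_of_lt_of_le hp hu.1)))
  linarith

/-- translate the Dini bound to an eventual slope bound in `z`. -/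
lemma dini_slope_s1 {u : ℝ → ℝ} {x m : ℝ} (hd : DiniUpper u x ≤ ((m : ℝ) : EReal)) {ε : ℝ}
    (hε : 0 < ε) : ∀ᶠ z in 𝓝[>] x, (u z - u x) / (z - x) < m + ε := by
  have h1 : DiniUpper u x < ((m + ε : ℝ) : EReal) :=
    lt_of_le_of_lt hd (by exact_mod_cast (by linarith : m < m + ε))
  have h2 := Filter.eventually_lt_of_limsup_lt h1
  have hmap : Filter.map (fun s => x + s) (𝓝[>] (0:ℝ)) = 𝓝[>] x := by
    have := (Homeomorph.addLeft x).isEmbedding.map_nhdsWithin_eq (Ioi 0) (0:ℝ)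
    simpa using this
  rw [← hmap]
  rw [eventually_map]
  filter_upwards [h2] with s hs
  have : ((u (x + s) - u x) / s : ℝ) < m + ε := by exact_mod_cast hs
  simpa using this

lemma slope_event {φ : ℝ → ℝ} (hφ : ClassP φ) {u : ℝ → ℝ} {x : ℝ} (hu : 0 < u x)
    (hc : Tendsto u (𝓝[>] x) (𝓝 (u x)))
    (hd : DiniUpper u x ≤ (((-φ (u x)) : ℝ) : EReal)) {r : ℝ} (hr : (-1:ℝ) < r) :
    ∀ᶠ z in 𝓝[>] x, (z - x)⁻¹ *
      ((∫ s in (1:ℝ)..u z, (φ s)⁻¹) - ∫ s in (1:ℝ)..u x, (φ s)⁻¹) < r := by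
  set F : ℝ → ℝ := fun y => ∫ s in (1:ℝ)..y, (φ s)⁻¹ with hF
  set c : ℝ := φ (u x) with hcdef
  have hc0 : 0 < c := hφ.2.2 _ hu
  set η : ℝ := r + 1 with hη
  have hη0 : 0 < η := by linarith
  obtain ⟨ε, hε0, hεc, hεη⟩ : ∃ ε : ℝ, 0 < ε ∧ ε ≤ c/2 ∧ 3*ε ≤ c*η := by
    refine ⟨min (c/2) (c*η/3), lt_min (by positivity) (by positivity), min_le_left _ _, ?_⟩
    have := min_le_right (c/2) (c*η/3)
    linarith
  obtain ⟨δ, hδ0, hδc, hδη⟩ : ∃ δ : ℝ, 0 < δ ∧ 2*(δ*c) ≤ 1 ∧ 3*(δ*c) ≤ η := by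
    refine ⟨min (1/(2*c)) (η/(3*c)), lt_min (by positivity) (by positivity), ?_, ?_⟩
    · have h1 := mul_le_mul_of_nonneg_right (min_le_left (1/(2*c)) (η/(3*c))) hc0.le
      have h2 : (1/(2*c))*c = 1/2 := by field_simp
      nlinarith
    · have h1 := mul_le_mul_of_nonneg_right (min_le_right (1/(2*c)) (η/(3*c))) hc0.le
      have h2 : (η/(3*c))*c = η/3 := by field_simp
      nlinarith
  -- little-o estimate for F at u x
  have hder := F_hasDeriv hφ hu
  have hlo := (hasDerivAt_iff_isLittleO.1 hder).def hδ0
  have he1 : ∀ᶠ z in 𝓝[>] x,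
      ‖F (u z) - F (u x) - (u z - u x) • (c⁻¹)‖ ≤ δ * ‖u z - u x‖ := hc.eventually hlo
  have he2 : ∀ᶠ z in 𝓝[>] x, (u z - u x) / (z - x) < -c + ε := by
    simpa using dini_slope_s1 hd hε0
  have he3 : ∀ᶠ z in 𝓝[>] x, x < z := eventually_mem_nhdsWithin
  filter_upwards [he1, he2, he3] with z h1 h2 h3
  set d : ℝ := u z - u x with hddef
  set p : ℝ := z - x with hpdef
  have hp0 : 0 < p := by simp [hpdef]; linarith
  have hdp : d < (-c + ε) * p := (div_lt_iff₀ hp0).1 h2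
  have hd0 : d < 0 := lt_of_lt_of_le hdp (by nlinarith)
  have h1' : F (u z) - F (u x) ≤ d * c⁻¹ + δ * (-d) := by
    have := (abs_le.1 (by simpa [Real.norm_eq_abs, smul_eq_mul] using h1)).2
    rw [abs_of_neg hd0] at this
    linarith
  set k : ℝ := c⁻¹ with hkdef
  have hck : c * k = 1 := mul_inv_cancel₀ (ne_of_gt hc0)
  have hk0 : 0 < k := by positivity
  rw [inv_mul_lt_iff₀ hp0]
  have hkδ : 0 < k - δ := by nlinarith
  have key : d * k + δ * (-d) = d * (k - δ) := by ring
  have h4 : d * (k - δ) < ((-c + ε) * p) * (k - δ) := by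
    exact mul_lt_mul_of_pos_right hdp hkδ
  have hek : 3 * (ε * k) ≤ η := by
    have h := mul_le_mul_of_nonneg_right hεη hk0.le
    have h2 : (c*η)*k = η := by rw [mul_comm c η, mul_assoc, hck, mul_one]
    nlinarith
  have h6 : (-c + ε) * (k - δ) ≤ r := by linarith [hck, hδη, hek, (mul_pos hε0 hδ0).le]
  have h5 : ((-c + ε) * p) * (k - δ) ≤ p * r := by
    linarith [mul_le_mul_of_nonneg_left h6 hp0.le]
  calc F (u z) - F (u x) ≤ d * k + δ * (-d) := h1'
    _ = d * (k - δ) := key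
    _ < ((-c + ε) * p) * (k - δ) := h4
    _ ≤ p * r := h5

lemma gron {φ : ℝ → ℝ} (hφ : ClassP φ) {w : ℝ → ℝ} {a b : ℝ}
    (hcont : ContinuousOn w (Icc a b)) (hpos : ∀ x ∈ Icc a b, 0 < w x)
    (hdini : ∀ x ∈ Ico a b, DiniUpper w x ≤ (((-φ (w x)) : ℝ) : EReal)) :
    ∀ t ∈ Icc a b, (∫ s in (1:ℝ)..w t, (φ s)⁻¹) ≤ (∫ s in (1:ℝ)..w a, (φ s)⁻¹) - (t - a) := by
  intro t ht
  have hab : a ≤ b := le_trans ht.1 ht.2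
  have hF : ContinuousOn (fun y => ∫ s in (1:ℝ)..w y, (φ s)⁻¹) (Icc a b) := by
    intro x hx
    exact ((F_hasDeriv hφ (hpos x hx)).continuousAt).comp_continuousWithinAt (hcont x hx)
  have hf' : ∀ x ∈ Ico a b, ∀ r, ((fun _ : ℝ => (-1:ℝ)) x) < r →
      ∃ᶠ z in 𝓝[>] x, (z - x)⁻¹ *
        ((∫ s in (1:ℝ)..w z, (φ s)⁻¹) - ∫ s in (1:ℝ)..w x, (φ s)⁻¹) < r := by
    intro x hx r hr
    have hc : Tendsto w (𝓝[>] x) (𝓝 (w x)) := by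
      have h1 : 𝓝[>] x = 𝓝[Ioo x b] x := (nhdsWithin_Ioo_eq_nhdsGT hx.2).symm
      rw [h1]
      exact (hcont x ⟨hx.1, hx.2.le⟩).mono_left
        (nhdsWithin_mono _ (fun z hz => ⟨le_trans hx.1 hz.1.le, hz.2.le⟩))
    exact (slope_event hφ (hpos x ⟨hx.1, hx.2.le⟩) hc (hdini x hx) hr).frequently
  have := le_gronwallBound_of_liminf_deriv_right_le (f' := fun _ : ℝ => (-1:ℝ)) (K := 0)
    (ε := -1) hF hf' (le_refl _) (fun x _ => by norm_num) t ht
  simp only [gronwallBound_K0] at this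
  linarith

lemma gron' {φ : ℝ → ℝ} (hφ : ClassP φ) {w : ℝ → ℝ} {a b : ℝ}
    (hcont : ContinuousOn w (Icc a b)) (hpos : ∀ x ∈ Icc a b, 0 < w x)
    (hdini : ∀ x ∈ Ioo a b, DiniUpper w x ≤ (((-φ (w x)) : ℝ) : EReal)) :
    ∀ t ∈ Icc a b, (∫ s in (1:ℝ)..w t, (φ s)⁻¹) ≤ (∫ s in (1:ℝ)..w a, (φ s)⁻¹) - (t - a) := by
  intro t ht
  rcases eq_or_lt_of_le ht.1 with h | h
  · rw [← h]; simp
  have key : ∀ a' ∈ Ioo a t, (∫ s in (1:ℝ)..w t, (φ s)⁻¹) ≤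
      (∫ s in (1:ℝ)..w a', (φ s)⁻¹) - (t - a') := by
    intro a' ha'
    exact gron hφ (hcont.mono (Icc_subset_Icc ha'.1.le le_rfl))
      (fun x hx => hpos x ⟨le_trans ha'.1.le hx.1, hx.2⟩)
      (fun x hx => hdini x ⟨lt_of_lt_of_le ha'.1 hx.1, hx.2⟩) t ⟨ha'.2.le, ht.2⟩
  have hne : (𝓝[Ioo a t] a).NeBot := by
    rw [nhdsWithin_Ioo_eq_nhdsGT h]; infer_instance
  have htw : Tendsto w (𝓝[Ioo a t] a) (𝓝 (w a)) :=
    (hcont a ⟨le_rfl, le_trans h.le ht.2⟩).mono_left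
      (nhdsWithin_mono _ (fun z hz => ⟨hz.1.le, le_trans hz.2.le ht.2⟩))
  have hFt : Tendsto (fun a' => (∫ s in (1:ℝ)..w a', (φ s)⁻¹) - (t - a'))
      (𝓝[Ioo a t] a) (𝓝 ((∫ s in (1:ℝ)..w a, (φ s)⁻¹) - (t - a))) := by
    apply Tendsto.sub
    · exact ((F_hasDeriv hφ (hpos a ⟨le_rfl, le_trans h.le ht.2⟩)).continuousAt.tendsto).comp htw
    · exact ((continuous_const.sub continuous_id).tendsto a).mono_left nhdsWithin_le_nhds
  exact ge_of_tendsto hFt (eventually_mem_nhdsWithin.mono (fun a' ha' => key a' ha'))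

/-- decay estimate `F(v(t)) ≤ F(v(t₀)) − (t − t₀)` along an impulsive trajectory
with strictly decaying flow (`D⁺v ≤ −φ(v)`) and non-increasing jumps, where
`F(q) = ∫₁^q ds/φ(s)`. -/
theorem decayEstimate
    (φ : ℝ → ℝ) (hφ : ClassP φ)
    (t₀ : ℝ) (τ : ℕ → ℝ) (hτ : IsImpulseSeq t₀ τ)
    (v : ℝ → ℝ) (hvpos : ∀ t, t₀ ≤ t → 0 < v t)
    (hreg : ImpulsiveRegular t₀ τ v)
    (hflow : ∀ t, t₀ ≤ t → t ∉ impulseSet τ →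
      DiniUpper v t ≤ (((-φ (v t)) : ℝ) : EReal))
    (hjump : ∀ i : ℕ, 1 ≤ i → v (τ i) ≤ Function.leftLim v (τ i)) :
    ∀ t, t₀ ≤ t →
      (∫ s in (1:ℝ)..(v t), (φ s)⁻¹) ≤ (∫ s in (1:ℝ)..(v t₀), (φ s)⁻¹) - (t - t₀) := by
  obtain ⟨hτ0, hmono, htop⟩ := hτ
  obtain ⟨hrc, hcnt, hll⟩ := hreg
  have nonimp : ∀ (n : ℕ) (x : ℝ), τ n < x → x < τ (n+1) → x ∉ impulseSet τ := by
    rintro n x h1 h2 ⟨i, hi1, hix⟩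
    rw [← hix] at h1 h2
    have hni : n < i := hmono.lt_iff_lt.1 h1
    have := hmono.monotone (Nat.succ_le_of_lt hni)
    linarith
  have ht0 : ∀ n, t₀ ≤ τ n := fun n => hτ0 ▸ hmono.monotone (Nat.zero_le n)
  have part1 : ∀ a b : ℝ, t₀ ≤ a → a ≤ b → (∀ x, a < x → x ≤ b → x ∉ impulseSet τ) →
      (∫ s in (1:ℝ)..(v b), (φ s)⁻¹) ≤ (∫ s in (1:ℝ)..(v a), (φ s)⁻¹) - (b - a) := by
    intro a b ha hab hni
    refine gron' hφ ?_ (fun x hx => hvpos x (ha.trans hx.1)) ?_ b ⟨hab, le_rfl⟩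
    · intro x hx
      rcases eq_or_lt_of_le hx.1 with h | h
      · exact (hrc x (h ▸ ha)).mono (fun z hz => h ▸ hz.1)
      · exact (hcnt x (ha.trans hx.1) (hni x h hx.2)).mono (fun z hz => ha.trans hz.1)
    · intro x hx
      exact hflow x (ha.trans hx.1.le) (hni x hx.1 hx.2.le)
  have part2 : ∀ n : ℕ, (∫ s in (1:ℝ)..(v (τ (n+1))), (φ s)⁻¹) ≤
      (∫ s in (1:ℝ)..(v (τ n)), (φ s)⁻¹) - (τ (n+1) - τ n) := by
    intro n
    set a := τ n with hadef
    set b := τ (n+1) with hbdef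
    have hab : a < b := hmono (Nat.lt_succ_self n)
    obtain ⟨L, hL⟩ := hll (n+1) (Nat.le_add_left 1 n)
    have hlval : Function.leftLim v b = L :=
      leftLim_eq_of_tendsto hL
    have hvbL : v b ≤ L := hlval ▸ hjump (n+1) (Nat.le_add_left 1 n)
    have hLpos : 0 < L := lt_of_lt_of_le (hvpos b (ht0 _)) hvbL
    set w : ℝ → ℝ := fun x => if x < b then v x else L with hw
    have hweq : ∀ x, x < b → w x = v x := fun x hx => if_pos hx
    have hwa : w a = v a := hweq a hab
    have hwb : w b = L := if_neg (lt_irrefl b)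
    have hcont : ContinuousOn w (Icc a b) := by
      intro x hx
      rcases eq_or_lt_of_le hx.2 with h | h
      · rw [ContinuousWithinAt, h, hwb]
        have hsub : Icc a b ⊆ Iio b ∪ {b} := by
          intro z hz
          rcases lt_or_eq_of_le hz.2 with h' | h'
          · exact Or.inl h'
          · exact Or.inr h'
        refine Tendsto.mono_left ?_ (le_trans (nhdsWithin_mono _ hsub) le_rfl)
        rw [nhdsWithin_union]
        refine tendsto_sup.2 ⟨?_, ?_⟩
        · refine hL.congr' ?_
          exact eventually_mem_nhdsWithin.mono (fun z hz => (hweq z hz).symm)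
        · rw [nhdsWithin_singleton]
          exact hwb ▸ tendsto_pure_nhds w b
      · have hvx : ContinuousWithinAt v (Icc a b) x := by
          rcases eq_or_lt_of_le hx.1 with h' | h'
          · exact (hrc x (h' ▸ (ht0 n))).mono (fun z hz => h' ▸ hz.1)
          · exact (hcnt x ((ht0 n).trans hx.1) (nonimp n x h' h)).mono
              (fun z hz => (ht0 n).trans hz.1)
        refine hvx.congr_of_eventuallyEq ?_ (hweq x h)
        have hb : ∀ᶠ z in 𝓝[Icc a b] x, z < b :=
          ((isOpen_Iio.eventually_mem h).filter_mono nhdsWithin_le_nhds)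
        exact hb.mono (fun z hz => hweq z hz)
    have hpos : ∀ x ∈ Icc a b, 0 < w x := by
      intro z hz
      by_cases hzb : z < b
      · rw [hweq z hzb]; exact hvpos z ((ht0 n).trans hz.1)
      · have : w z = L := if_neg hzb
        rw [this]; exact hLpos
    have hdini : ∀ x ∈ Ioo a b, DiniUpper w x ≤ (((-φ (w x)) : ℝ) : EReal) := by
      intro x hx
      have hev : ∀ᶠ s in 𝓝[>] (0:ℝ), x + s < b := by
        have h1 : Tendsto (fun s : ℝ => x + s) (𝓝 0) (𝓝 x) := by
          simpa using (continuous_add_left x).tendsto (0:ℝ)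
        exact (h1.eventually (isOpen_Iio.eventually_mem hx.2)).filter_mono nhdsWithin_le_nhds
      have hDeq : DiniUpper w x = DiniUpper v x := by
        apply Filter.limsup_congr
        exact hev.mono (fun s hs => by rw [hweq _ hs, hweq x hx.2])
      rw [hDeq, hweq x hx.2]
      exact hflow x ((ht0 n).trans hx.1.le) (nonimp n x hx.1 hx.2)
    have hg := gron' hφ hcont hpos hdini b ⟨hab.le, le_rfl⟩
    rw [hwb, hwa] at hg
    have hm := F_mono hφ (hvpos b (ht0 _)) hvbL
    linarith
  have ind : ∀ n : ℕ, (∫ s in (1:ℝ)..(v (τ n)), (φ s)⁻¹) ≤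
      (∫ s in (1:ℝ)..(v t₀), (φ s)⁻¹) - (τ n - t₀) := by
    intro n
    induction n with
    | zero => rw [hτ0]; simp
    | succ n ih => have := part2 n; linarith
  intro t ht
  have hex : ∃ m, t < τ m := (htop.eventually_gt_atTop t).exists
  have hm0 : t < τ (Nat.find hex) := Nat.find_spec hex
  have hm0pos : Nat.find hex ≠ 0 := by
    intro h
    rw [h, hτ0] at hm0
    exact absurd ht (not_le.2 hm0)
  set n := Nat.find hex - 1 with hndef
  have hn1 : n + 1 = Nat.find hex := Nat.succ_pred_eq_of_ne_zero hm0pos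
  have hτn : τ n ≤ t := not_lt.1 (Nat.find_min hex (by omega))
  have h1 := part1 (τ n) t (ht0 n) hτn
    (fun x hx1 hx2 => nonimp n x hx1 (lt_of_le_of_lt hx2 (hn1 ▸ hm0)))
  have h2 := ind n
  linarith
end
end

section
/- Let m ∈ ℝ and let F: [0,∞) → [m,∞) be a continuous, strictly increasing bijection (so F(0) = m and F(q) → ∞ as q → ∞), with inverse F⁻¹: [m,∞) → [0,∞). Define β̃: [0,∞) × [0,∞) → [0,∞) by β̃(0,s) := 0 and, for r > 0, β̃(r,s) := F⁻¹( F(r) − (F(r) − m)(1 − e^{−s/(F(r)−m)}) ). Then: (a) β̃(r,s) ≥ F⁻¹(max{F(r) − s, m}) for all r > 0 and s ≥ 0; (b) β̃ is of class 𝒦ℒ. -/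
open Filter Topology Set MeasureTheory

noncomputable section

/-- Continuity of the inverse. -/
theorem finv_contOn (m : ℝ) (F Finv : ℝ → ℝ)
    (hFm : StrictMonoOn F (Set.Ici 0))
    (hFbij : Set.BijOn F (Set.Ici 0) (Set.Ici m))
    (hFinvF : ∀ q, 0 ≤ q → Finv (F q) = q)
    (hFFinv : ∀ p, m ≤ p → F (Finv p) = p)
    (hFinvmem : ∀ p, m ≤ p → 0 ≤ Finv p) :
    ContinuousOn Finv (Set.Ici m) := by
  have hstrict : StrictMonoOn Finv (Set.Ici m) := by
    intro p hp q hq hpq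
    by_contra h
    push_neg at h
    have := hFm.monotoneOn (hFinvmem q hq) (hFinvmem p hp) h
    rw [hFFinv q hq, hFFinv p hp] at this
    exact absurd this (not_le.mpr hpq)
  have hsurj : ∀ p, m ≤ p → Set.SurjOn Finv (Set.Ici m) (Set.Ioi (Finv p)) := by
    intro p hp x hx
    have hx0 : (0:ℝ) ≤ x := le_trans (hFinvmem p hp) (le_of_lt hx)
    exact ⟨F x, hFbij.mapsTo hx0, hFinvF x hx0⟩
  intro p hp
  rcases eq_or_lt_of_le (Set.mem_Ici.mp hp) with h | h
  · subst h
    exact hstrict.continuousWithinAt_right_of_surjOn self_mem_nhdsWithin (hsurj m le_rfl)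
  · have hIci : Set.Ici m ∈ 𝓝 p := Ici_mem_nhds h
    have hFinvp : 0 < Finv p := by
      have := hstrict (self_mem_Ici) hp h
      have hm : Finv m = 0 := by
        have hF0 : F 0 = m := by
          rcases hFbij.surjOn (self_mem_Ici (a := m)) with ⟨q, hq, hFq⟩
          rcases eq_or_lt_of_le (Set.mem_Ici.mp hq) with h0 | h0
          · rw [← h0] at hFq; exact hFq
          · exact absurd (hFq ▸ hFm self_mem_Ici hq h0) (not_lt.mpr (hFbij.mapsTo self_mem_Ici))
        rw [← hF0, hFinvF 0 le_rfl]
      rwa [hm] at this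
    have hleft : ContinuousWithinAt Finv (Set.Iic p) p := by
      apply hstrict.continuousWithinAt_left_of_exists_between
        (mem_nhdsWithin_of_mem_nhds hIci)
      intro b hb
      refine ⟨F (max b 0), hFbij.mapsTo (Set.mem_Ici.mpr (le_max_right _ _)), ?_⟩
      rw [hFinvF _ (le_max_right _ _)]
      exact ⟨le_max_left _ _, max_lt hb hFinvp⟩
    have hright : ContinuousWithinAt Finv (Set.Ici p) p :=
      hstrict.continuousWithinAt_right_of_surjOn
        (mem_nhdsWithin_of_mem_nhds hIci) (hsurj p hp)
    exact (continuousAt_iff_continuous_left_right.2 ⟨hleft, hright⟩).continuousWithinAt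


/-- the relaxed bound `β̃` built from a continuous strictly increasing bijection
`F : [0,∞) → [m,∞)` dominates `F⁻¹(max{F(r) − s, m})` and is of class 𝒦ℒ. -/
theorem relaxedKLBound
    (m : ℝ) (F Finv : ℝ → ℝ)
    (hFc : ContinuousOn F (Set.Ici 0))
    (hFm : StrictMonoOn F (Set.Ici 0))
    (hFbij : Set.BijOn F (Set.Ici 0) (Set.Ici m))
    (hFinvF : ∀ q, 0 ≤ q → Finv (F q) = q)
    (hFFinv : ∀ p, m ≤ p → F (Finv p) = p)
    (hFinvmem : ∀ p, m ≤ p → 0 ≤ Finv p)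
    (βt : ℝ → ℝ → ℝ)
    (hβt0 : ∀ s, βt 0 s = 0)
    (hβtdef : ∀ r, 0 < r → ∀ s,
      βt r s = Finv (F r - (F r - m) * (1 - Real.exp (-s / (F r - m))))) :
    (∀ r, 0 < r → ∀ s, 0 ≤ s → Finv (max (F r - s) m) ≤ βt r s) ∧ ClassKL βt := by

  have hFinvC := finv_contOn m F Finv hFm hFbij hFinvF hFFinv hFinvmem
  have hF0 : F 0 = m := by
    rcases hFbij.surjOn (self_mem_Ici (a := m)) with ⟨q, hq, hFq⟩
    rcases eq_or_lt_of_le (Set.mem_Ici.mp hq) with h0 | h0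
    · rw [← h0] at hFq; exact hFq
    · exact absurd (hFq ▸ hFm self_mem_Ici hq h0) (not_lt.mpr (hFbij.mapsTo self_mem_Ici))
  have hFinvm : Finv m = 0 := by rw [← hF0, hFinvF 0 le_rfl]
  have hFrm : ∀ r, 0 < r → m < F r := fun r hr => hF0 ▸ hFm self_mem_Ici (le_of_lt hr) hr
  have hFinvmono : ∀ p q, m ≤ p → p ≤ q → Finv p ≤ Finv q := by
    intro p q hp hpq
    by_contra h
    push_neg at h
    have := hFm (hFinvmem q (hp.trans hpq)) (hFinvmem p hp) h
    rw [hFFinv q (hp.trans hpq), hFFinv p hp] at this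
    exact absurd this (not_lt.mpr hpq)
  have hFinvstrict : ∀ p q, m ≤ p → p < q → Finv p < Finv q := by
    intro p q hp hpq
    by_contra h
    push_neg at h
    have := hFm.monotoneOn (hFinvmem q (hp.trans hpq.le)) (hFinvmem p hp) h
    rw [hFFinv q (hp.trans hpq.le), hFFinv p hp] at this
    exact absurd this (not_le.mpr hpq)
  have hβχ : ∀ r, 0 < r → ∀ s,
      βt r s = Finv (m + (F r - m) * Real.exp (-s / (F r - m))) := by
    intro r hr s
    rw [hβtdef r hr s]
    congr 1
    ring
  have hmem : ∀ r, 0 < r → ∀ s, m < m + (F r - m) * Real.exp (-s / (F r - m)) := by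
    intro r hr s
    nlinarith [Real.exp_pos (-s / (F r - m)), hFrm r hr]
  have hle : ∀ r, 0 < r → ∀ s, 0 ≤ s →
      m + (F r - m) * Real.exp (-s / (F r - m)) ≤ F r := by
    intro r hr s hs
    have ha := hFrm r hr
    have hE : Real.exp (-s / (F r - m)) ≤ 1 := by
      rw [Real.exp_le_one_iff]
      exact div_nonpos_of_nonpos_of_nonneg (neg_nonpos.mpr hs) (by linarith)
    nlinarith
  have hpos : ∀ r, 0 < r → ∀ s, 0 < βt r s := by
    intro r hr s
    rw [hβχ r hr s]
    have := hFinvstrict m _ le_rfl (hmem r hr s)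
    rwa [hFinvm] at this
  have hub : ∀ r, 0 < r → ∀ s, 0 ≤ s → βt r s ≤ r := by
    intro r hr s hs
    rw [hβχ r hr s]
    calc Finv (m + (F r - m) * Real.exp (-s / (F r - m))) ≤ Finv (F r) :=
          hFinvmono _ _ (le_of_lt (hmem r hr s)) (hle r hr s hs)
      _ = r := hFinvF r hr.le
  refine ⟨?_, ?_, ?_⟩
  · -- part (a)
    intro r hr s hs
    rw [hβχ r hr s]
    apply hFinvmono _ _ (le_max_right _ _)
    apply max_le ?_ (le_of_lt (hmem r hr s))
    have ha := hFrm r hr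
    have key := Real.add_one_le_exp (-s / (F r - m))
    have h1 : (F r - m) * (-s / (F r - m) + 1) ≤
        (F r - m) * Real.exp (-s / (F r - m)) :=
      mul_le_mul_of_nonneg_left key (by linarith)
    have hne : F r - m ≠ 0 := ne_of_gt (by linarith)
    have h2 : (F r - m) * (-s / (F r - m) + 1) = -s + (F r - m) := by
      field_simp
    linarith
  · -- ClassK in r
    intro s hs
    refine ⟨?_, ?_, hβt0 s⟩
    · -- continuity
      intro r hr
      rcases eq_or_lt_of_le (Set.mem_Ici.mp hr) with h0 | h0
      · subst h0
        have hT : Tendsto (fun r => βt r s) (𝓝[Set.Ici 0] 0) (𝓝 0) := by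
          refine squeeze_zero' ?_ ?_ (tendsto_id.mono_left nhdsWithin_le_nhds)
          · filter_upwards [self_mem_nhdsWithin] with x hx
            rcases eq_or_lt_of_le (Set.mem_Ici.mp hx) with h | h
            · simp [← h, hβt0]
            · exact (hpos x h s).le
          · filter_upwards [self_mem_nhdsWithin] with x hx
            rcases eq_or_lt_of_le (Set.mem_Ici.mp hx) with h | h
            · simp [← h, hβt0]
            · exact hub x h s hs
        simpa [ContinuousWithinAt, hβt0] using hT
      · apply ContinuousAt.continuousWithinAt
        have heq : (fun x => Finv (m + (F x - m) * Real.exp (-s / (F x - m))))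
            =ᶠ[𝓝 r] fun x => βt x s := by
          filter_upwards [Ioi_mem_nhds h0] with x hx
          exact (hβχ x hx s).symm
        apply ContinuousAt.congr ?_ heq
        have hFr : ContinuousAt F r := hFc.continuousAt (Ici_mem_nhds h0)
        have hne : F r - m ≠ 0 := ne_of_gt (sub_pos.mpr (hFrm r h0))
        have hdiv : ContinuousAt (fun x => -s / (F x - m)) r :=
          ContinuousAt.div continuousAt_const (hFr.sub continuousAt_const) hne
        have hinner : ContinuousAt
            (fun x => m + (F x - m) * Real.exp (-s / (F x - m))) r :=
          continuousAt_const.add ((hFr.sub continuousAt_const).mul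
            (Real.continuous_exp.continuousAt.comp hdiv))
        exact ContinuousAt.comp (g := Finv) (hFinvC.continuousAt (Ici_mem_nhds (hmem r h0 s))) hinner
    · -- strict mono
      intro r1 h1 r2 h2 h12
      rcases eq_or_lt_of_le (Set.mem_Ici.mp h1) with h0 | h0
      · show βt r1 s < βt r2 s
        rw [← h0, hβt0]
        exact hpos r2 (h0 ▸ h12) s
      · have h02 : 0 < r2 := h0.trans h12
        show βt r1 s < βt r2 s
        rw [hβχ r1 h0 s, hβχ r2 h02 s]
        apply hFinvstrict _ _ (le_of_lt (hmem r1 h0 s))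
        have ha1 : 0 < F r1 - m := sub_pos.mpr (hFrm r1 h0)
        have ha12 : F r1 < F r2 := hFm h1 h2 h12
        have hE : Real.exp (-s / (F r1 - m)) ≤ Real.exp (-s / (F r2 - m)) := by
          apply Real.exp_le_exp.mpr
          rw [neg_div, neg_div, neg_le_neg_iff]
          apply div_le_div_of_nonneg_left hs ha1
          linarith
        nlinarith [Real.exp_pos (-s / (F r2 - m)), Real.exp_pos (-s / (F r1 - m))]
  · -- antitone and limit in s
    intro r hr
    rcases eq_or_lt_of_le (hr : (0:ℝ) ≤ r) with h0 | h0
    · constructor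
      · intro s1 _ s2 _ _
        simp only [← h0, hβt0, le_refl]
      · simp only [← h0, hβt0]
        exact tendsto_const_nhds
    · have ha : 0 < F r - m := sub_pos.mpr (hFrm r h0)
      constructor
      · intro s1 _ s2 _ h12
        show βt r s2 ≤ βt r s1
        rw [hβχ r h0 s1, hβχ r h0 s2]
        apply hFinvmono _ _ (le_of_lt (hmem r h0 s2))
        have hE : Real.exp (-s2 / (F r - m)) ≤ Real.exp (-s1 / (F r - m)) := by
          apply Real.exp_le_exp.mpr
          apply div_le_div_of_nonneg_right ?_ ha.le
          linarith
        nlinarith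
      · have hdiv : Tendsto (fun s : ℝ => -s / (F r - m)) atTop atBot :=
          Tendsto.atBot_div_const ha tendsto_neg_atTop_atBot
        have hexp : Tendsto (fun s => Real.exp (-s / (F r - m))) atTop (𝓝 0) :=
          Real.tendsto_exp_atBot.comp hdiv
        have hinner : Tendsto (fun s => m + (F r - m) * Real.exp (-s / (F r - m)))
            atTop (𝓝[Set.Ici m] m) := by
          rw [tendsto_nhdsWithin_iff]
          constructor
          · have : Tendsto (fun s => m + (F r - m) * Real.exp (-s / (F r - m)))
                atTop (𝓝 (m + (F r - m) * 0)) :=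
              Tendsto.const_add m (Tendsto.const_mul _ hexp)
            simpa using this
          · exact Filter.Eventually.of_forall fun s => le_of_lt (hmem r h0 s)
        have hFinvT : Tendsto Finv (𝓝[Set.Ici m] m) (𝓝 0) := by
          have := hFinvC m self_mem_Ici
          rw [ContinuousWithinAt, hFinvm] at this
          exact this
        exact (hFinvT.comp hinner).congr fun s => (hβχ r h0 s).symm
end
end

section
/- Let φ ∈ 𝒫 and let c₁, c₂ ≥ 0 with c := max{c₁, c₂}. Let t₀ ∈ ℝ, (tᵢ) an impulse time sequence, and let v: [t₀,∞) → [0,∞) be impulsive-regular and satisfy: D⁺v(t) ≤ −φ(v(t)) at every non-impulse time t with v(t) ≥ c₁; v(tᵢ) ≤ v(tᵢ⁻) at every impulse time tᵢ with v(tᵢ⁻) ≥ c₁; and v(tᵢ) ≤ c₂ at every impulse time tᵢ with v(tᵢ⁻) < c₁. If v(t∗) ≤ c for some t∗ ≥ t₀, then v(t) ≤ c for all t ≥ t∗. -/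
open Filter Topology Set MeasureTheory

noncomputable section

/-- From a one-sided Dini bound, slopes are frequently small. -/
lemma frequently_slope_lt (v : ℝ → ℝ) (x r y : ℝ) (hy : y < r)
    (hD : DiniUpper v x ≤ (y : EReal)) : ∃ᶠ z in 𝓝[>] x, slope v x z < r := by
  have h1 : ∀ᶠ s in 𝓝[>] (0:ℝ), (((v (x + s) - v x) / s : ℝ) : EReal) < (r : EReal) := by
    apply Filter.eventually_lt_of_limsup_lt
    · exact lt_of_le_of_lt hD (by exact_mod_cast hy)
    · exact Filter.isBoundedUnder_of ⟨⊤, fun a => le_top⟩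
  have hmap : Tendsto (fun z : ℝ => z - x) (𝓝[>] x) (𝓝[>] (0:ℝ)) := by
    rw [tendsto_nhdsWithin_iff]
    constructor
    · have : Tendsto (fun z : ℝ => z - x) (𝓝 x) (𝓝 (x - x)) :=
        (continuous_id.sub continuous_const).tendsto x
      simpa using this.mono_left nhdsWithin_le_nhds
    · filter_upwards [self_mem_nhdsWithin] with z hz
      exact sub_pos.2 (Set.mem_Ioi.mp hz)
  have h2 : ∀ᶠ z in 𝓝[>] x, slope v x z < r := by
    filter_upwards [hmap.eventually h1, self_mem_nhdsWithin] with z hz hzx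
    rw [add_sub_cancel] at hz
    rw [slope_def_field]
    exact_mod_cast hz
  exact h2.frequently

/-- A continuous function with nonpositive upper-right Dini derivative is nonincreasing. -/
lemma dini_nonincreasing (v : ℝ → ℝ) {a b : ℝ}
    (hcont : ContinuousOn v (Icc a b))
    (hd : ∀ x ∈ Ico a b, ∃ y : ℝ, y ≤ 0 ∧ DiniUpper v x ≤ (y : EReal)) :
    ∀ x ∈ Icc a b, v x ≤ v a := by
  have := image_le_of_liminf_slope_right_le_deriv_boundary (f := v)
    (B := fun _ => v a) (B' := fun _ => 0) hcont le_rfl continuousOn_const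
    (fun x _ => hasDerivWithinAt_const x _ (v a))
    (fun x hx r hr => by
      obtain ⟨y, hy0, hD⟩ := hd x hx
      exact frequently_slope_lt v x r y (lt_of_le_of_lt hy0 hr) hD)
  exact fun x hx => this hx

/-- There is a right neighbourhood of any point with no impulse times. -/
lemma exists_no_impulse_right (t₀ : ℝ) (τ : ℕ → ℝ) (hτ : IsImpulseSeq t₀ τ) (T : ℝ) :
    ∃ ε : ℝ, 0 < ε ∧ ∀ s ∈ Ioc T (T + ε), s ∉ impulseSet τ := by
  obtain ⟨N, hN⟩ := (hτ.2.2.eventually_gt_atTop (T + 1)).exists_forall_of_atTop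
  set g : ℕ → ℝ := fun i => if T < τ i then min ((τ i - T) / 2) (1 / 2) else 1 / 2 with hg
  have hne : (Finset.range (N + 1)).Nonempty := ⟨0, Finset.mem_range.2 (Nat.succ_pos N)⟩
  refine ⟨(Finset.range (N + 1)).inf' hne g, ?_, ?_⟩
  · rw [Finset.lt_inf'_iff]
    intro i _
    by_cases h : T < τ i
    · simp only [hg, if_pos h, lt_min_iff]
      constructor
      · linarith
      · norm_num
    · simp only [hg, if_neg h]; norm_num
  · set ε := (Finset.range (N + 1)).inf' hne g with hε
    have hεhalf : ε ≤ 1 / 2 := by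
      refine le_trans (Finset.inf'_le g (Finset.mem_range.2 (Nat.succ_pos N))) ?_
      by_cases h : T < τ 0 <;> simp [hg, h, min_le_right]
    rintro s ⟨hs1, hs2⟩ ⟨i, hi1, hi2⟩
    rcases lt_or_ge i N with hiN | hiN
    · have hTi : T < τ i := hi2 ▸ hs1
      have hmem : i ∈ Finset.range (N + 1) := Finset.mem_range.2 (Nat.lt_succ_of_lt hiN)
      have hgi : g i ≤ (τ i - T) / 2 := by
        simp only [hg, if_pos hTi]; exact min_le_left _ _
      have : ε ≤ (τ i - T) / 2 := le_trans (Finset.inf'_le g hmem) hgi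
      have h2 : (τ i - T) / 2 < τ i - T := by
        have := sub_pos.2 hTi; linarith
      rw [← hi2] at hs2; linarith
    · have := hN i hiN
      rw [← hi2] at hs2; linarith

/-- Invariance on an impulse-free interval. -/
lemma no_impulse_invariance
    (φ : ℝ → ℝ) (hφ : ClassP φ) (c₁ c₂ : ℝ) (hc₁ : 0 ≤ c₁)
    (t₀ : ℝ) (τ : ℕ → ℝ)
    (v : ℝ → ℝ) (hvnn : ∀ t, t₀ ≤ t → 0 ≤ v t)
    (hreg : ImpulsiveRegular t₀ τ v)
    (hflow : ∀ t, t₀ ≤ t → t ∉ impulseSet τ → c₁ ≤ v t →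
      DiniUpper v t ≤ (((-φ (v t)) : ℝ) : EReal))
    (a b : ℝ) (ht₀a : t₀ ≤ a) (hab : a ≤ b)
    (himp : ∀ x ∈ Ioc a b, x ∉ impulseSet τ)
    (hva : v a ≤ max c₁ c₂) :
    ∀ x ∈ Icc a b, v x ≤ max c₁ c₂ := by
  set c := max c₁ c₂ with hc
  -- continuity of v on [a, b]
  have hcont : ContinuousOn v (Icc a b) := by
    intro x hx
    rcases eq_or_lt_of_le hx.1 with h | h
    · rw [← h]
      exact (hreg.1 a ht₀a).mono Icc_subset_Ici_self
    · have hca : ContinuousAt v x :=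
        (hreg.2.1 x (le_trans ht₀a h.le) (himp x ⟨h, hx.2⟩)).continuousAt
          (Ici_mem_nhds (lt_of_le_of_lt ht₀a h))
      exact hca.continuousWithinAt
  by_contra hcon
  push_neg at hcon
  obtain ⟨b', hb'mem, hb' ⟩ := hcon
  have hab' : a < b' := by
    rcases eq_or_lt_of_le hb'mem.1 with h | h
    · exact absurd (h ▸ hva) (not_le.2 hb')
    · exact h
  set E := Icc a b' ∩ v ⁻¹' Iic c with hE
  have hcont' : ContinuousOn v (Icc a b') := hcont.mono (Icc_subset_Icc le_rfl hb'mem.2)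
  have hEclosed : IsClosed E := hcont'.preimage_isClosed_of_isClosed isClosed_Icc isClosed_Iic
  have haE : a ∈ E := ⟨⟨le_rfl, hab'.le⟩, hva⟩
  have hbdd : BddAbove E := ⟨b', fun x hx => hx.1.2⟩
  have hT'E : sSup E ∈ E := hEclosed.csSup_mem ⟨a, haE⟩ hbdd
  set T' := sSup E with hT'
  have hT'a : a ≤ T' := le_csSup hbdd haE
  have hT'b : T' ≤ b' := hT'E.1.2
  have hvT' : v T' ≤ c := hT'E.2
  have hT'lt : T' < b' := lt_of_le_of_ne hT'b (fun h => absurd (h ▸ hvT') (not_le.2 hb'))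
  have hgt : ∀ x, T' < x → x ≤ b' → c < v x := by
    intro x hx1 hx2
    by_contra h
    push_neg at h
    have : x ∈ E := ⟨⟨le_trans hT'a hx1.le, hx2⟩, h⟩
    exact absurd (le_csSup hbdd this) (not_le.2 hx1)
  have hmono : ∀ T'', T' < T'' → T'' ≤ b' → v b' ≤ v T'' := by
    intro T'' h1 h2
    refine dini_nonincreasing v (a := T'') (b := b') (hcont.mono (Icc_subset_Icc
      (le_trans hT'a h1.le) hb'mem.2)) ?_ b' ⟨h2, le_rfl⟩
    intro x hx
    have hxa : a < x := lt_of_le_of_lt hT'a (lt_of_lt_of_le h1 hx.1)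
    have hxb : x ∈ Ioc a b := ⟨hxa, le_trans hx.2.le hb'mem.2⟩
    have ht₀x : t₀ ≤ x := le_trans ht₀a hxa.le
    have hcx : c < v x := hgt x (lt_of_lt_of_le h1 hx.1) hx.2.le
    have hc₁x : c₁ ≤ v x := le_trans (le_max_left c₁ c₂) hcx.le
    refine ⟨-φ (v x), ?_, hflow x ht₀x (himp x hxb) hc₁x⟩
    have hvx : 0 ≤ v x := hvnn x ht₀x
    rcases eq_or_lt_of_le hvx with h | h
    · rw [← h, hφ.2.1]; norm_num
    · linarith [hφ.2.2 (v x) h]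
  have htend : Tendsto v (𝓝[>] T') (𝓝 (v T')) :=
    (hreg.1 T' (le_trans ht₀a hT'a)).mono_left (nhdsWithin_mono _ Ioi_subset_Ici_self)
  have hle : v b' ≤ v T' := by
    refine ge_of_tendsto htend ?_
    filter_upwards [Ioc_mem_nhdsGT hT'lt] with z hz
    exact hmono z hz.1 hz.2
  exact absurd (le_trans hle hvT') (not_le.2 hb')

/-- forward invariance of the sublevel set `{v ≤ max{c₁, c₂}}` along an impulsive
trajectory of the Lyapunov value. -/
theorem sublevelForwardInvariance
    (φ : ℝ → ℝ) (hφ : ClassP φ)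
    (c₁ c₂ : ℝ) (hc₁ : 0 ≤ c₁) (hc₂ : 0 ≤ c₂)
    (t₀ : ℝ) (τ : ℕ → ℝ) (hτ : IsImpulseSeq t₀ τ)
    (v : ℝ → ℝ) (hvnn : ∀ t, t₀ ≤ t → 0 ≤ v t)
    (hreg : ImpulsiveRegular t₀ τ v)
    (hflow : ∀ t, t₀ ≤ t → t ∉ impulseSet τ → c₁ ≤ v t →
      DiniUpper v t ≤ (((-φ (v t)) : ℝ) : EReal))
    (hjump : ∀ i : ℕ, 1 ≤ i → c₁ ≤ Function.leftLim v (τ i) →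
      v (τ i) ≤ Function.leftLim v (τ i))
    (hjumpsmall : ∀ i : ℕ, 1 ≤ i → Function.leftLim v (τ i) < c₁ → v (τ i) ≤ c₂)
    (tstar : ℝ) (hts : t₀ ≤ tstar) (hvts : v tstar ≤ max c₁ c₂) :
    ∀ t, tstar ≤ t → v t ≤ max c₁ c₂ := by
  set c := max c₁ c₂ with hc
  intro t ht
  by_contra hlt
  push_neg at hlt
  set B := {s : ℝ | tstar ≤ s ∧ c < v s} with hB
  have hBne : t ∈ B := ⟨ht, hlt⟩
  have hbdd : BddBelow B := ⟨tstar, fun x hx => hx.1⟩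
  set T := sInf B with hT
  have hT1 : tstar ≤ T := le_csInf ⟨t, hBne⟩ (fun x hx => hx.1)
  have ht₀T : t₀ ≤ T := le_trans hts hT1
  have hpre : ∀ x, tstar ≤ x → x < T → v x ≤ c := by
    intro x hx1 hx2
    by_contra h
    push_neg at h
    exact absurd (csInf_le hbdd ⟨hx1, h⟩) (not_le.2 hx2)
  have hvT : v T ≤ c := by
    rcases eq_or_lt_of_le hT1 with h | h
    · rw [← h]; exact hvts
    · by_cases himp : T ∈ impulseSet τ
      · obtain ⟨i, hi1, hi2⟩ := himp
        obtain ⟨L, hL⟩ := hreg.2.2 i hi1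
        rw [hi2] at hL
        have hne : 𝓝[<] T ≠ ⊥ := (nhdsLT_neBot T).ne
        have hlim : Function.leftLim v T = L := leftLim_eq_of_tendsto hL
        have hLc : L ≤ c := by
          refine le_of_tendsto hL ?_
          filter_upwards [Ioo_mem_nhdsLT_of_mem ⟨h, le_rfl⟩] with z hz
          exact hpre z hz.1.le hz.2
        rw [← hi2, hi2]
        rcases le_or_gt c₁ L with h1 | h1
        · have := hjump i hi1 (by rw [hi2, hlim]; exact h1)
          rw [hi2, hlim] at this
          exact le_trans this hLc
        · have := hjumpsmall i hi1 (by rw [hi2, hlim]; exact h1)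
          rw [hi2] at this
          exact le_trans this (le_max_right _ _)
      · have hca : ContinuousAt v T :=
          (hreg.2.1 T ht₀T himp).continuousAt (Ici_mem_nhds (lt_of_le_of_lt hts h))
        have htd : Tendsto v (𝓝[<] T) (𝓝 (v T)) :=
          hca.tendsto.mono_left nhdsWithin_le_nhds
        refine le_of_tendsto htd ?_
        filter_upwards [Ioo_mem_nhdsLT_of_mem ⟨h, le_rfl⟩] with z hz
        exact hpre z hz.1.le hz.2
  obtain ⟨ε, hε, hno⟩ := exists_no_impulse_right t₀ τ hτ T
  have hinv := no_impulse_invariance φ hφ c₁ c₂ hc₁ t₀ τ v hvnn hreg hflow T (T + ε)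
    ht₀T (by linarith) hno hvT
  have : T + ε ≤ T := by
    refine le_trans (le_csInf ⟨t, hBne⟩ ?_) le_rfl
    intro s hs
    by_contra hcon
    push_neg at hcon
    rcases lt_or_ge s T with h | h
    · exact absurd (hpre s hs.1 h) (not_le.2 hs.2)
    · exact absurd (hinv s ⟨h, hcon.le⟩) (not_le.2 hs.2)
  linarith
end
end

section
/- Let ρ ∈ 𝒫, α ∈ 𝒦∞ with α(a) ≥ a for all a, and θ > δ > 0 with ∫_a^{α(a)} ds/ρ(s) ≤ θ − δ for all a > 0. Let κ ∈ 𝒦∞ be continuously differentiable with κ(s) ≤ min{α⁻¹(s), s} for all s ≥ 0 and κ' of class 𝒫. Set F̃(q) := ∫₁^q ds/ρ(s) for q > 0, m := lim_{q→0⁺} F̃(q) ∈ [−∞,∞), F̃(0) := m, and define G(p) := F̃⁻¹(p) for p in F̃((0,∞)) and G(p) := 0 for p ≤ m. Let ψ₁, ψ₂, η ∈ 𝒦∞, ψ₃ ∈ 𝒦, X a real normed space, t₀ ∈ ℝ, (tᵢ) an impulse time sequence with t_{i+1} − tᵢ ≥ θ for all i ≥ 0, and r ≥ 0. Let V_cand: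 X → [0,∞) be continuous with ψ₁(‖y‖) ≤ V_cand(y) ≤ ψ₂(‖y‖), and let x: [t₀,∞) → X be such that w(t) := V_cand(x(t)) is impulsive-regular and satisfies: D⁺w(t) ≤ −ρ(w(t)) at non-impulse times with w(t) ≥ η(r); w(tᵢ) ≤ α(w(tᵢ⁻)) at impulse times with w(tᵢ⁻) ≥ η(r); and w(tᵢ) ≤ ψ₃(r) at impulse times with w(tᵢ⁻) < η(r). Define, for t ∈ [tᵢ, t_{i+1}) (i ≥ 0) and y ∈ X: v₁(t,y) := G( F̃(V_cand(y)) − ((t_{i+1} − t)/(t_{i+1} − tᵢ))(θ − δ) ), v₂(t,y) := κ(V_cand(y)), and V(t,y) := max{v₁(t,y), v₂(t,y)}. Then, with χ := α ∘ η: (i) κ(ψ₁(‖y‖)) ≤ V(t,y) ≤ ψ₂(‖y‖) for all t ≥ t₀ and y ∈ X; (ii) there exists φ ∈ 𝒫, depending only on ρ, κ, δ and θ, such that D⁺[V(t,x(t))] ≤ −φ(V(t,x(t))) at every non-impulse time t with V(t,x(t)) ≥ χ(r), and V(tᵢ, x(tᵢ)) ≤ V(tᵢ⁻, x(tᵢ⁻))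 at every impulse time with V(tᵢ⁻, x(tᵢ⁻)) ≥ χ(r) (left limits taken of the map t ↦ V(t,x(t)), which is impulsive-regular); (iii) V(tᵢ, x(tᵢ)) ≤ max{ψ₃(r), χ(r)} at every impulse time with V(tᵢ⁻, x(tᵢ⁻)) < χ(r). -/
open Filter Topology Set MeasureTheory

noncomputable section

lemma ClassK.nonneg {γ : ℝ → ℝ} (h : ClassK γ) {s : ℝ} (hs : 0 ≤ s) : 0 ≤ γ s := by
  rcases eq_or_lt_of_le hs with rfl | hs'
  · exact le_of_eq h.2.2.symm
  · have := h.2.1 (self_mem_Ici) (le_of_lt hs') hs'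
    linarith [h.2.2]

lemma ClassK.mono {γ : ℝ → ℝ} (h : ClassK γ) : MonotoneOn γ (Set.Ici 0) :=
  h.2.1.monotoneOn

lemma EReal.le_coe_of_forall_eps {x : EReal} {y : ℝ}
    (h : ∀ ε : ℝ, 0 < ε → x ≤ ((y + ε : ℝ) : EReal)) : x ≤ (y : EReal) := by
  by_contra hxy
  push_neg at hxy
  rcases EReal.lt_iff_exists_real_btwn.1 hxy with ⟨z, hyz, hzx⟩
  have hyz' : y < z := EReal.coe_lt_coe_iff.1 hyz
  have hz : (0:ℝ) < z - y := by linarith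
  have hx : x ≤ ((z : ℝ) : EReal) := by
    simpa using h (z - y) hz
  exact absurd (lt_of_le_of_lt hx hzx) (lt_irrefl _)

lemma diniUpper_le_of_eventually {v : ℝ → ℝ} {t c : ℝ}
    (h : ∀ ε : ℝ, 0 < ε → ∀ᶠ s in 𝓝[>] (0:ℝ), (v (t + s) - v t) / s ≤ c + ε) :
    DiniUpper v t ≤ (c : EReal) := by
  apply EReal.le_coe_of_forall_eps
  intro ε hε
  apply Filter.limsup_le_of_le (by isBoundedDefault)
  filter_upwards [h ε hε] with s hs
  exact_mod_cast EReal.coe_le_coe_iff.2 hs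

lemma eventually_quot_lt {v : ℝ → ℝ} {t c : ℝ}
    (h : DiniUpper v t ≤ (c : EReal)) (ε : ℝ) (hε : 0 < ε) :
    ∀ᶠ s in 𝓝[>] (0:ℝ), (v (t + s) - v t) / s < c + ε := by
  have h2 : DiniUpper v t < ((c + ε : ℝ) : EReal) := by
    refine lt_of_le_of_lt h ?_
    exact_mod_cast EReal.coe_lt_coe_iff.2 (by linarith)
  have := Filter.eventually_lt_of_limsup_lt h2
  filter_upwards [this] with s hs
  exact_mod_cast hs

/-- generic chain lemma for upper right Dini quotients through a differentiable
increasing function, when the inner function is strictly decreasing at rate `B`. -/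
lemma dini_chain {W : ℝ → ℝ} {t B c : ℝ} {g : ℝ → ℝ}
    (hB : 0 < B) (hc : 0 < c)
    (hW : ∀ ε : ℝ, 0 < ε → ∀ᶠ s in 𝓝[>] (0:ℝ), (W (t + s) - W t) / s < -B + ε)
    (hWc : Tendsto (fun s => W (t + s)) (𝓝[>] (0:ℝ)) (𝓝 (W t)))
    (hg : HasDerivAt g c (W t)) :
    ∀ ε : ℝ, 0 < ε → ∀ᶠ s in 𝓝[>] (0:ℝ), (g (W (t + s)) - g (W t)) / s ≤ -(c * B) + ε := by
  intro ε hε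
  set ε₁ : ℝ := min (min c B / 2) (ε / (2 * (B + c))) with hε₁def
  have hBc : 0 < B + c := by linarith
  have hε₁pos : 0 < ε₁ := by
    apply lt_min
    · positivity
    · positivity
  have hε₁c : ε₁ < c := lt_of_le_of_lt (min_le_left _ _)
      (by rcases min_cases c B with ⟨h1,h2⟩|⟨h1,h2⟩ <;> simp [h1] <;> linarith)
  have hε₁B : ε₁ < B := lt_of_le_of_lt (min_le_left _ _)
      (by rcases min_cases c B with ⟨h1,h2⟩|⟨h1,h2⟩ <;> simp [h1] <;> linarith)
  have hkey : -(c - ε₁) * (B - ε₁) ≤ -(c * B) + ε := by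
    have h1 : ε₁ ≤ ε / (2 * (B + c)) := min_le_right _ _
    have h2 : ε₁ * (B + c) ≤ ε / 2 := by
      calc ε₁ * (B + c) ≤ (ε / (2 * (B + c))) * (B + c) := by
            apply mul_le_mul_of_nonneg_right (min_le_right _ _) (le_of_lt hBc)
        _ = ε / 2 := by field_simp
    nlinarith [sq_nonneg ε₁, hε₁pos.le]
  -- little-o bound from differentiability
  have hlo := (hasDerivAt_iff_isLittleO.1 hg).def hε₁pos
  have hlo' : ∀ᶠ u in 𝓝 (W t), |g u - g (W t) - (u - W t) * c| ≤ ε₁ * |u - W t| := by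
    filter_upwards [hlo] with u hu
    simpa [Real.norm_eq_abs, smul_eq_mul] using hu
  have hev1 := hWc.eventually hlo'
  filter_upwards [hev1, hW ε₁ hε₁pos, eventually_mem_nhdsWithin] with s hs1 hs2 hsmem
  have hspos : 0 < s := hsmem
  set u := W (t + s)
  have hΔ : u - W t < (-B + ε₁) * s := by
    have := hs2
    rw [div_lt_iff₀ hspos] at this
    exact this
  have hΔneg : u - W t < 0 := lt_of_lt_of_le hΔ (by nlinarith)
  have habs : |u - W t| = -(u - W t) := abs_of_neg hΔneg
  have hup : g u - g (W t) ≤ (c - ε₁) * (u - W t) := by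
    have := (abs_le.1 hs1).2
    rw [habs] at this
    nlinarith
  have : g u - g (W t) ≤ (c - ε₁) * ((-B + ε₁) * s) := by
    refine le_trans hup ?_
    apply mul_le_mul_of_nonneg_left hΔ.le (by linarith)
  rw [div_le_iff₀ hspos]
  calc g u - g (W t) ≤ (c - ε₁) * ((-B + ε₁) * s) := this
    _ = (-(c - ε₁) * (B - ε₁)) * s := by ring
    _ ≤ (-(c * B) + ε) * s := by nlinarith

/-- the "inactive branch" of a max is eventually dominated. -/
lemma quot_kill {f : ℝ → ℝ} {l M : ℝ}
    (h : Tendsto f (𝓝[>] (0:ℝ)) (𝓝 l)) (hlM : l < M) (K : ℝ) :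
    ∀ᶠ s in 𝓝[>] (0:ℝ), (f s - M) / s ≤ K := by
  have hev : ∀ᶠ s in 𝓝[>] (0:ℝ), f s < (l + M) / 2 :=
    h.eventually (eventually_lt_nhds (by linarith))
  have hev2 : ∀ᶠ s in 𝓝[>] (0:ℝ), s < (M - l) / 2 / (max 1 (-K) + 1) := by
    apply eventually_nhdsWithin_of_eventually_nhds
    have : (0:ℝ) < (M - l) / 2 / (max 1 (-K) + 1) := by
      apply div_pos (by linarith) (by positivity)
    exact eventually_lt_nhds this
  filter_upwards [hev, hev2, eventually_mem_nhdsWithin] with s h1 h2 h3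
  have hspos : (0:ℝ) < s := h3
  have hnum : f s - M ≤ -((M - l) / 2) := by linarith
  have hKb : -((max 1 (-K) + 1)) ≤ K := by
    rcases le_total (1:ℝ) (-K) with h | h
    · rw [max_eq_right h]; linarith
    · rw [max_eq_left h]; linarith
  rw [div_le_iff₀ hspos]
  have hMK : 0 < max 1 (-K) + 1 := by positivity
  calc f s - M ≤ -((M - l) / 2) := hnum
    _ ≤ -((max 1 (-K) + 1)) * s := by
        rw [neg_mul]
        apply neg_le_neg
        calc (max 1 (-K) + 1) * s ≤ (max 1 (-K) + 1) * ((M - l) / 2 / (max 1 (-K) + 1)) := by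
              apply mul_le_mul_of_nonneg_left h2.le (le_of_lt hMK)
          _ = (M - l) / 2 := by
              rw [mul_div_cancel₀]
              exact ne_of_gt hMK
    _ ≤ K * s := mul_le_mul_of_nonneg_right hKb (le_of_lt hspos)

section Fprops
variable {ρ F G : ℝ → ℝ}

lemma rho_inv_contOn (hρ : ClassP ρ) :
    ContinuousOn (fun s => (ρ s)⁻¹) (Set.Ioi 0) := by
  apply ContinuousOn.inv₀
  · exact hρ.1.mono (fun x hx => Set.mem_Ici.2 (le_of_lt (Set.mem_Ioi.1 hx)))
  · intro x hx
    exact ne_of_gt (hρ.2.2 x hx)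

lemma rho_inv_integrable (hρ : ClassP ρ) {a b : ℝ} (ha : 0 < a) (hb : 0 < b) :
    IntervalIntegrable (fun s => (ρ s)⁻¹) volume a b := by
  apply ContinuousOn.intervalIntegrable
  apply (rho_inv_contOn hρ).mono
  intro x hx
  rcases hx with ⟨h1, _⟩
  exact lt_of_lt_of_le (lt_min ha hb) (by simpa [Set.uIcc] using h1)

lemma F_hasDerivAt (hρ : ClassP ρ) (hF : ∀ q, F q = ∫ s in (1:ℝ)..q, (ρ s)⁻¹)
    {b : ℝ} (hb : 0 < b) : HasDerivAt F (ρ b)⁻¹ b := by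
  have heq : F = fun u => ∫ s in (1:ℝ)..u, (ρ s)⁻¹ := funext hF
  rw [heq]
  apply intervalIntegral.integral_hasDerivAt_right (rho_inv_integrable hρ one_pos hb)
  · exact ⟨Set.Ioi 0, Ioi_mem_nhds hb,
      ((rho_inv_contOn hρ).aestronglyMeasurable measurableSet_Ioi)⟩
  · exact (rho_inv_contOn hρ).continuousAt (Ioi_mem_nhds hb)

lemma F_contAt (hρ : ClassP ρ) (hF : ∀ q, F q = ∫ s in (1:ℝ)..q, (ρ s)⁻¹)
    {b : ℝ} (hb : 0 < b) : ContinuousAt F b :=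
  (F_hasDerivAt hρ hF hb).continuousAt

lemma F_sub (hρ : ClassP ρ) (hF : ∀ q, F q = ∫ s in (1:ℝ)..q, (ρ s)⁻¹)
    {a b : ℝ} (ha : 0 < a) (hb : 0 < b) :
    F b - F a = ∫ s in a..b, (ρ s)⁻¹ := by
  have := intervalIntegral.integral_add_adjacent_intervals
    (rho_inv_integrable hρ one_pos ha) (rho_inv_integrable hρ ha hb)
  rw [hF, hF]
  linarith [this]

lemma F_strictMono (hρ : ClassP ρ) (hF : ∀ q, F q = ∫ s in (1:ℝ)..q, (ρ s)⁻¹)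
    {a b : ℝ} (ha : 0 < a) (hab : a < b) : F a < F b := by
  have hpos : 0 < ∫ s in a..b, (ρ s)⁻¹ := by
    apply intervalIntegral.intervalIntegral_pos_of_pos_on
      (rho_inv_integrable hρ ha (lt_trans ha hab))
    · intro x hx
      exact inv_pos.2 (hρ.2.2 x (lt_trans ha hx.1))
    · exact hab
  have := F_sub hρ hF ha (lt_trans ha hab)
  linarith

lemma F_mono_s5 (hρ : ClassP ρ) (hF : ∀ q, F q = ∫ s in (1:ℝ)..q, (ρ s)⁻¹)
    {a b : ℝ} (ha : 0 < a) (hab : a ≤ b) : F a ≤ F b := by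
  rcases eq_or_lt_of_le hab with rfl | h
  · exact le_refl _
  · exact (F_strictMono hρ hF ha h).le

lemma F_lt_imp (hρ : ClassP ρ) (hF : ∀ q, F q = ∫ s in (1:ℝ)..q, (ρ s)⁻¹)
    {a b : ℝ} (ha : 0 < a) (hb : 0 < b) (h : F a < F b) : a < b := by
  by_contra hc
  push_neg at hc
  exact absurd (F_mono_s5 hρ hF hb hc) (not_le.2 h)

lemma F_le_imp (hρ : ClassP ρ) (hF : ∀ q, F q = ∫ s in (1:ℝ)..q, (ρ s)⁻¹)
    {a b : ℝ} (ha : 0 < a) (hb : 0 < b) (h : F a ≤ F b) : a ≤ b := by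
  by_contra hc
  push_neg at hc
  exact absurd (F_strictMono hρ hF hb hc) (not_lt.2 h)

/-- exact inverse values via IVT -/
lemma G_exact (hρ : ClassP ρ) (hF : ∀ q, F q = ∫ s in (1:ℝ)..q, (ρ s)⁻¹)
    (hG1 : ∀ q, 0 < q → G (F q) = q)
    {p a b : ℝ} (ha : 0 < a) (hb : 0 < b) (hpa : F a ≤ p) (hpb : p ≤ F b) :
    ∃ q₂, a ≤ q₂ ∧ q₂ ≤ b ∧ F q₂ = p ∧ G p = q₂ := by
  have hab : a ≤ b := F_le_imp hρ hF ha hb (le_trans hpa hpb)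
  have hcont : ContinuousOn F (Set.Icc a b) := fun x hx =>
    (F_contAt hρ hF (lt_of_lt_of_le ha hx.1)).continuousWithinAt
  have := intermediate_value_Icc hab hcont
  have hp : p ∈ Set.Icc (F a) (F b) := ⟨hpa, hpb⟩
  rcases this hp with ⟨q₂, hq₂, hFq₂⟩
  exact ⟨q₂, hq₂.1, hq₂.2, hFq₂, by rw [← hFq₂]; exact hG1 q₂ (lt_of_lt_of_le ha hq₂.1)⟩

lemma G_le (hρ : ClassP ρ) (hF : ∀ q, F q = ∫ s in (1:ℝ)..q, (ρ s)⁻¹)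
    (hG1 : ∀ q, 0 < q → G (F q) = q) (hG2 : ∀ p : ℝ, (∀ q, 0 < q → p ≤ F q) → G p = 0)
    {p q : ℝ} (hq : 0 < q) (hpq : p ≤ F q) : G p ≤ q := by
  by_cases hall : ∀ q', 0 < q' → p ≤ F q'
  · rw [hG2 p hall]; exact hq.le
  · push_neg at hall
    rcases hall with ⟨q₁, hq₁, hq₁p⟩
    rcases G_exact hρ hF hG1 hq₁ hq hq₁p.le hpq with ⟨q₂, _, hq₂b, _, hGp⟩
    rw [hGp]; exact hq₂b

lemma G_nonneg (hρ : ClassP ρ) (hF : ∀ q, F q = ∫ s in (1:ℝ)..q, (ρ s)⁻¹)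
    (hG1 : ∀ q, 0 < q → G (F q) = q) (hG2 : ∀ p : ℝ, (∀ q, 0 < q → p ≤ F q) → G p = 0)
    {p q : ℝ} (hq : 0 < q) (hpq : p ≤ F q) : 0 ≤ G p := by
  by_cases hall : ∀ q', 0 < q' → p ≤ F q'
  · rw [hG2 p hall]
  · push_neg at hall
    rcases hall with ⟨q₁, hq₁, hq₁p⟩
    rcases G_exact hρ hF hG1 hq₁ hq hq₁p.le hpq with ⟨q₂, hq₂a, _, _, hGp⟩
    rw [hGp]; linarith

end Fprops

section Gprops
variable {ρ F G : ℝ → ℝ}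

lemma G_contAt (hρ : ClassP ρ) (hF : ∀ q, F q = ∫ s in (1:ℝ)..q, (ρ s)⁻¹)
    (hG1 : ∀ q, 0 < q → G (F q) = q)
    {p₀ q₀ : ℝ} (hq₀ : 0 < q₀) (hFq₀ : F q₀ = p₀) : ContinuousAt G p₀ := by
  rw [Metric.continuousAt_iff]
  intro ε hε
  set e : ℝ := min (ε / 2) (q₀ / 2) with hedef
  have he : 0 < e := lt_min (by linarith) (by linarith)
  have heq₀ : q₀ - e > 0 := by
    have : e ≤ q₀ / 2 := min_le_right _ _
    linarith
  have h1 : F (q₀ - e) < p₀ := by rw [← hFq₀]; exact F_strictMono hρ hF heq₀ (by linarith)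
  have h2 : p₀ < F (q₀ + e) := by rw [← hFq₀]; exact F_strictMono hρ hF hq₀ (by linarith)
  refine ⟨min (p₀ - F (q₀ - e)) (F (q₀ + e) - p₀), lt_min (by linarith) (by linarith), ?_⟩
  intro p hp
  rw [Real.dist_eq] at hp
  have hpa : F (q₀ - e) ≤ p := by
    have := abs_lt.1 hp
    have h3 : min (p₀ - F (q₀ - e)) (F (q₀ + e) - p₀) ≤ p₀ - F (q₀ - e) := min_le_left _ _
    linarith [this.1]
  have hpb : p ≤ F (q₀ + e) := by
    have := abs_lt.1 hp
    have h3 : min (p₀ - F (q₀ - e)) (F (q₀ + e) - p₀) ≤ F (q₀ + e) - p₀ := min_le_right _ _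
    linarith [this.2]
  rcases G_exact hρ hF hG1 heq₀ (by linarith : (0:ℝ) < q₀ + e) hpa hpb with
    ⟨q₃, hq₃a, hq₃b, _, hGp⟩
  have hGp₀ : G p₀ = q₀ := by rw [← hFq₀]; exact hG1 q₀ hq₀
  rw [Real.dist_eq, hGp, hGp₀]
  have : e ≤ ε / 2 := min_le_left _ _
  rw [abs_lt]
  constructor <;> linarith

lemma G_hasDerivAt (hρ : ClassP ρ) (hF : ∀ q, F q = ∫ s in (1:ℝ)..q, (ρ s)⁻¹)
    (hG1 : ∀ q, 0 < q → G (F q) = q)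
    {p₀ q₀ : ℝ} (hq₀ : 0 < q₀) (hFq₀ : F q₀ = p₀) : HasDerivAt G (ρ q₀) p₀ := by
  have hGp₀ : G p₀ = q₀ := by rw [← hFq₀]; exact hG1 q₀ hq₀
  have hρq₀ : 0 < ρ q₀ := hρ.2.2 q₀ hq₀
  have hd : HasDerivAt F (ρ q₀)⁻¹ (G p₀) := by rw [hGp₀]; exact F_hasDerivAt hρ hF hq₀
  have hinv : ∀ᶠ y in 𝓝 p₀, F (G y) = y := by
    have hmem : Set.Ioo (F (q₀ / 2)) (F (2 * q₀)) ∈ 𝓝 p₀ := by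
      apply Ioo_mem_nhds
      · rw [← hFq₀]; exact F_strictMono hρ hF (by linarith) (by linarith)
      · rw [← hFq₀]; exact F_strictMono hρ hF hq₀ (by linarith)
    filter_upwards [hmem] with y hy
    rcases G_exact hρ hF hG1 (by linarith : (0:ℝ) < q₀ / 2) (by linarith : (0:ℝ) < 2 * q₀)
      hy.1.le hy.2.le with ⟨q₃, _, _, hFq₃, hGy⟩
    rw [hGy, hFq₃]
  have := HasDerivAt.of_local_left_inverse (G_contAt hρ hF hG1 hq₀ hFq₀) hd
    (inv_ne_zero (ne_of_gt hρq₀)) hinv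
  simpa [inv_inv] using this

/-- the function `Ψ(q,l) = if q = 0 then 0 else G (F q − l)` appearing in `v₁`. -/
def PsiAux (F G : ℝ → ℝ) (q l : ℝ) : ℝ := if q = 0 then 0 else G (F q - l)

lemma Psi_nonneg (hρ : ClassP ρ) (hF : ∀ q, F q = ∫ s in (1:ℝ)..q, (ρ s)⁻¹)
    (hG1 : ∀ q, 0 < q → G (F q) = q) (hG2 : ∀ p : ℝ, (∀ q, 0 < q → p ≤ F q) → G p = 0)
    {q l : ℝ} (hq : 0 ≤ q) (hl : 0 ≤ l) : 0 ≤ PsiAux F G q l := by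
  rcases eq_or_lt_of_le hq with rfl | hq'
  · simp [PsiAux]
  · rw [PsiAux, if_neg (ne_of_gt hq')]
    exact G_nonneg hρ hF hG1 hG2 hq' (by linarith)

lemma Psi_le (hρ : ClassP ρ) (hF : ∀ q, F q = ∫ s in (1:ℝ)..q, (ρ s)⁻¹)
    (hG1 : ∀ q, 0 < q → G (F q) = q) (hG2 : ∀ p : ℝ, (∀ q, 0 < q → p ≤ F q) → G p = 0)
    {q l : ℝ} (hq : 0 ≤ q) (hl : 0 ≤ l) : PsiAux F G q l ≤ q := by
  rcases eq_or_lt_of_le hq with rfl | hq'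
  · simp [PsiAux]
  · rw [PsiAux, if_neg (ne_of_gt hq')]
    exact G_le hρ hF hG1 hG2 hq' (by linarith)

lemma Psi_zero_l (hG1 : ∀ q, 0 < q → G (F q) = q) {q : ℝ} (hq : 0 ≤ q) :
    PsiAux F G q 0 = q := by
  rcases eq_or_lt_of_le hq with rfl | hq'
  · simp [PsiAux]
  · rw [PsiAux, if_neg (ne_of_gt hq'), sub_zero]
    exact hG1 q hq'

lemma G_contAt' (hρ : ClassP ρ) (hF : ∀ q, F q = ∫ s in (1:ℝ)..q, (ρ s)⁻¹)
    (hG1 : ∀ q, 0 < q → G (F q) = q) (hG2 : ∀ p : ℝ, (∀ q, 0 < q → p ≤ F q) → G p = 0)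
    {p₀ c : ℝ} (hc : 0 < c) (hpc : p₀ ≤ F c) : ContinuousAt G p₀ := by
  by_cases hall : ∀ q', 0 < q' → p₀ ≤ F q'
  · rw [Metric.continuousAt_iff]
    intro ε hε
    set e : ℝ := min ε 1 / 2 with hedef
    have he : 0 < e := by have := lt_min hε one_pos; positivity
    have heε : e < ε := by
      have h1 : min ε 1 ≤ ε := min_le_left _ _
      have := lt_min hε one_pos
      linarith
    refine ⟨F e - F (e / 2), sub_pos.2 (F_strictMono hρ hF (by linarith) (by linarith)), ?_⟩
    intro p hp
    rw [Real.dist_eq] at hp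
    have hpe : p ≤ F e := by
      have h1 := (abs_lt.1 hp).2
      have h2 := hall (e / 2) (by linarith)
      linarith
    have h3 : G p ≤ e := G_le hρ hF hG1 hG2 he hpe
    have h4 : 0 ≤ G p := G_nonneg hρ hF hG1 hG2 he hpe
    have h5 : G p₀ = 0 := hG2 p₀ hall
    rw [Real.dist_eq, h5, sub_zero, abs_of_nonneg h4]
    linarith
  · push_neg at hall
    rcases hall with ⟨q₁, hq₁, hq₁p⟩
    rcases G_exact hρ hF hG1 hq₁ hc hq₁p.le hpc with ⟨q₂, hq₂a, _, hFq₂, _⟩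
    exact G_contAt hρ hF hG1 (lt_of_lt_of_le hq₁ hq₂a) hFq₂

lemma Psi_contAt_pos (hρ : ClassP ρ) (hF : ∀ q, F q = ∫ s in (1:ℝ)..q, (ρ s)⁻¹)
    (hG1 : ∀ q, 0 < q → G (F q) = q) (hG2 : ∀ p : ℝ, (∀ q, 0 < q → p ≤ F q) → G p = 0)
    {q₀ l₀ : ℝ} (hq₀ : 0 < q₀) (hl₀ : 0 ≤ l₀) :
    ContinuousAt (fun ql : ℝ × ℝ => PsiAux F G ql.1 ql.2) (q₀, l₀) := by
  have hcomp : ContinuousAt (fun ql : ℝ × ℝ => G (F ql.1 - ql.2)) (q₀, l₀) := by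
    apply ContinuousAt.comp
    · exact G_contAt' hρ hF hG1 hG2 hq₀ (by linarith : F q₀ - l₀ ≤ F q₀)
    · exact ((F_contAt hρ hF hq₀).comp continuousAt_fst).sub continuousAt_snd
  apply hcomp.congr
  have hev : ∀ᶠ ql : ℝ × ℝ in 𝓝 (q₀, l₀), ql.1 ≠ 0 := by
    have : ContinuousAt (fun ql : ℝ × ℝ => ql.1) (q₀, l₀) := continuousAt_fst
    have h2 := this.eventually_ne (ne_of_gt hq₀)
    simpa using h2.mono (fun ql h => h)
  filter_upwards [hev] with ql h
  simp [PsiAux, if_neg h]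

lemma Psi_contWithin (hρ : ClassP ρ) (hF : ∀ q, F q = ∫ s in (1:ℝ)..q, (ρ s)⁻¹)
    (hG1 : ∀ q, 0 < q → G (F q) = q) (hG2 : ∀ p : ℝ, (∀ q, 0 < q → p ≤ F q) → G p = 0)
    {q₀ l₀ : ℝ} (hq₀ : 0 ≤ q₀) (hl₀ : 0 ≤ l₀) :
    ContinuousWithinAt (fun ql : ℝ × ℝ => PsiAux F G ql.1 ql.2)
      (Set.Ici 0 ×ˢ Set.Ici 0) (q₀, l₀) := by
  rcases eq_or_lt_of_le hq₀ with rfl | hq₀'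
  · rw [Metric.continuousWithinAt_iff]
    intro ε hε
    refine ⟨ε, hε, ?_⟩
    rintro ⟨q, l⟩ ⟨hq, hl⟩ hdist
    have h1 : 0 ≤ PsiAux F G q l := Psi_nonneg hρ hF hG1 hG2 hq hl
    have h2 : PsiAux F G q l ≤ q := Psi_le hρ hF hG1 hG2 hq hl
    have hd1 : dist q (0:ℝ) ≤ dist ((q,l) : ℝ × ℝ) ((0:ℝ), l₀) := by
      rw [Prod.dist_eq]; exact le_max_left _ _
    have hqε : q < ε := by
      rw [Real.dist_eq, sub_zero, abs_of_nonneg hq] at hd1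
      linarith [lt_of_le_of_lt hd1 hdist]
    have hΨ0 : PsiAux F G (0:ℝ) l₀ = 0 := by simp [PsiAux]
    rw [Real.dist_eq]
    simp only [hΨ0, sub_zero]
    rw [abs_of_nonneg h1]
    linarith
  · exact (Psi_contAt_pos hρ hF hG1 hG2 hq₀' hl₀).continuousWithinAt

end Gprops

section Kinv
variable {κ kinv : ℝ → ℝ}

lemma classKInf_surj (hκ : ClassKInf κ) : ∀ v : ℝ, 0 ≤ v → ∃ b, 0 ≤ b ∧ κ b = v := by
  intro v hv
  rcases (hκ.2.eventually_ge_atTop v).exists_forall_of_atTop with ⟨B, hB⟩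
  set B' := max B 0 with hB'
  have hB'0 : 0 ≤ B' := le_max_right _ _
  have hκB' : v ≤ κ B' := hB B' (le_max_left _ _)
  have hcont : ContinuousOn κ (Set.Icc 0 B') := hκ.1.1.mono (fun x hx => hx.1)
  have := intermediate_value_Icc hB'0 hcont
  have hv' : v ∈ Set.Icc (κ 0) (κ B') := ⟨by rw [hκ.1.2.2]; exact hv, hκB'⟩
  rcases this hv' with ⟨b, hb, hκb⟩
  exact ⟨b, hb.1, hκb⟩

lemma kinv_of_kappa (hκ : ClassKInf κ)
    (hki : ∀ v, 0 ≤ v → 0 ≤ kinv v ∧ κ (kinv v) = v) {b : ℝ} (hb : 0 ≤ b) :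
    kinv (κ b) = b := by
  have hκb : 0 ≤ κ b := by
    have := hκ.1.2.1.monotoneOn (self_mem_Ici) hb hb
    rw [hκ.1.2.2] at this
    exact this
  rcases hki (κ b) hκb with ⟨h1, h2⟩
  exact hκ.1.2.1.injOn h1 hb h2

lemma kinv_zero (hκ : ClassKInf κ)
    (hki : ∀ v, 0 ≤ v → 0 ≤ kinv v ∧ κ (kinv v) = v) : kinv 0 = 0 := by
  have := kinv_of_kappa hκ hki (le_refl (0:ℝ))
  rwa [hκ.1.2.2] at this

lemma kinv_pos (hκ : ClassKInf κ)
    (hki : ∀ v, 0 ≤ v → 0 ≤ kinv v ∧ κ (kinv v) = v) {v : ℝ} (hv : 0 < v) :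
    0 < kinv v := by
  rcases hki v hv.le with ⟨h1, h2⟩
  rcases eq_or_lt_of_le h1 with h | h
  · exfalso; rw [← h, hκ.1.2.2] at h2; linarith
  · exact h

lemma kinv_lt (hκ : ClassKInf κ)
    (hki : ∀ v, 0 ≤ v → 0 ≤ kinv v ∧ κ (kinv v) = v) {v c : ℝ} (hv : 0 ≤ v) (hc : 0 ≤ c)
    (h : v < κ c) : kinv v < c := by
  by_contra hcon
  push_neg at hcon
  have := hκ.1.2.1.monotoneOn (Set.mem_Ici.2 hc) (Set.mem_Ici.2 ((hki v hv).1)) hcon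
  rw [(hki v hv).2] at this
  linarith

lemma kinv_gt (hκ : ClassKInf κ)
    (hki : ∀ v, 0 ≤ v → 0 ≤ kinv v ∧ κ (kinv v) = v) {v c : ℝ} (hv : 0 ≤ v) (hc : 0 ≤ c)
    (h : κ c < v) : c < kinv v := by
  by_contra hcon
  push_neg at hcon
  have := hκ.1.2.1.monotoneOn (Set.mem_Ici.2 ((hki v hv).1)) (Set.mem_Ici.2 hc) hcon
  rw [(hki v hv).2] at this
  linarith

lemma kinv_contOn (hκ : ClassKInf κ)
    (hki : ∀ v, 0 ≤ v → 0 ≤ kinv v ∧ κ (kinv v) = v) :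
    ContinuousOn kinv (Set.Ici 0) := by
  intro v₀ hv₀
  rw [Metric.continuousWithinAt_iff]
  intro ε hε
  set b₀ := kinv v₀ with hb₀
  have hb₀0 : 0 ≤ b₀ := (hki v₀ hv₀).1
  have hκb₀ : κ b₀ = v₀ := (hki v₀ hv₀).2
  rcases eq_or_lt_of_le hb₀0 with hb0 | hb0
  · -- b₀ = 0
    refine ⟨κ (ε/2) - v₀, ?_, ?_⟩
    · have : v₀ = κ 0 := by rw [← hκb₀, ← hb0]
      rw [this]
      have := hκ.1.2.1 self_mem_Ici (Set.mem_Ici.2 (by linarith : (0:ℝ) ≤ ε/2)) (by linarith)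
      linarith
    · intro v hv hd
      rw [Real.dist_eq] at hd
      have hvb : v < κ (ε/2) := by
        have := (abs_lt.1 hd).2
        linarith
      have h1 : kinv v < ε/2 := kinv_lt hκ hki hv (by linarith) hvb
      have h2 : 0 ≤ kinv v := (hki v hv).1
      rw [Real.dist_eq, abs_lt]
      constructor <;> [linarith; linarith]
  · -- b₀ > 0
    set c := b₀ - min (ε/2) (b₀/2) with hc
    have hc0 : 0 ≤ c := by
      have : min (ε/2) (b₀/2) ≤ b₀/2 := min_le_right _ _
      simp only [hc]; linarith
    have hcb : c < b₀ := by
      have : 0 < min (ε/2) (b₀/2) := lt_min (by linarith) (by linarith)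
      simp only [hc]; linarith
    have hκc : κ c < v₀ := by
      rw [← hκb₀]
      exact hκ.1.2.1 (Set.mem_Ici.2 hc0) (Set.mem_Ici.2 hb₀0) hcb
    have hκup : v₀ < κ (b₀ + ε/2) := by
      rw [← hκb₀]
      exact hκ.1.2.1 (Set.mem_Ici.2 hb₀0) (Set.mem_Ici.2 (by linarith)) (by linarith)
    refine ⟨min (κ (b₀ + ε/2) - v₀) (v₀ - κ c), lt_min (by linarith) (by linarith), ?_⟩
    intro v hv hd
    rw [Real.dist_eq] at hd
    have hd1 := (abs_lt.1 hd).1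
    have hd2 := (abs_lt.1 hd).2
    have hm1 : min (κ (b₀ + ε/2) - v₀) (v₀ - κ c) ≤ κ (b₀ + ε/2) - v₀ := min_le_left _ _
    have hm2 : min (κ (b₀ + ε/2) - v₀) (v₀ - κ c) ≤ v₀ - κ c := min_le_right _ _
    have hup : kinv v < b₀ + ε/2 := kinv_lt hκ hki hv (by linarith) (by linarith)
    have hlow : c < kinv v := kinv_gt hκ hki hv hc0 (by linarith)
    rw [Real.dist_eq, abs_lt]
    have : min (ε/2) (b₀/2) ≤ ε/2 := min_le_left _ _
    constructor
    · simp only [hc] at hlow; linarith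
    · linarith

set_option maxHeartbeats 800000 in
lemma phi_classP {ρ κd kinv : ℝ → ℝ} {θ δ : ℝ} (hρ : ClassP ρ) (hκdP : ClassP κd)
    (hδ : 0 < δ) (hθδ : δ < θ)
    (hkc : ContinuousOn kinv (Set.Ici 0))
    (hk0 : kinv 0 = 0) (hknn : ∀ v, 0 ≤ v → 0 ≤ kinv v) (hkpos : ∀ v, 0 < v → 0 < kinv v) :
    ClassP (fun v => min (δ / θ * ρ v) (κd (kinv v) * ρ (kinv v))) := by
  have hmaps : Set.MapsTo kinv (Set.Ici 0) (Set.Ici 0) := fun v hv => hknn v hv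
  refine ⟨?_, ?_, ?_⟩
  · have h1 : ContinuousOn (fun v => δ / θ * ρ v) (Set.Ici 0) := continuousOn_const.mul hρ.1
    have h2 : ContinuousOn (fun v => κd (kinv v) * ρ (kinv v)) (Set.Ici 0) :=
      (hκdP.1.comp hkc hmaps).mul (hρ.1.comp hkc hmaps)
    exact fun x hx => (h1 x hx).min (h2 x hx)
  · simp [hk0, hρ.2.1]
  · intro v hv
    apply lt_min
    · have := hρ.2.2 v hv
      have hθ : 0 < θ := by linarith
      positivity
    · have h1 := hkpos v hv
      exact mul_pos (hκdP.2.2 _ h1) (hρ.2.2 _ h1)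

end Kinv


universe u

/-- construction of a time-varying ISS-Lyapunov function
`V(t,y) = max{v₁(t,y), v₂(t,y)}` from a candidate ISS-Lyapunov function, in the
stable-flow/unstable-jump case.  Here `F̃(q) = ∫₁^q ds/ρ(s)` for `q > 0`,
`m = lim_{q→0⁺} F̃(q) ∈ [-∞,∞)`, and `G` extends `F̃⁻¹` by `0` on `(-∞, m]`
(the specification `hG2` says exactly `G p = 0` whenever `p ≤ m`); the convention
`F̃(0) := m` makes `v₁(t,y) = 0` when `V_cand(y) = 0`, encoded by the `if`. -/
theorem constructionStableFlow
    (ρ α αinv κ κd : ℝ → ℝ)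
    (hρ : ClassP ρ) (hα : ClassKInf α) (hαge : ∀ a, 0 ≤ a → a ≤ α a)
    (hαinv1 : ∀ s, 0 ≤ s → αinv (α s) = s)
    (hαinv2 : ∀ s, 0 ≤ s → 0 ≤ αinv s ∧ α (αinv s) = s)
    (θ δ : ℝ) (hδ : 0 < δ) (hθδ : δ < θ)
    (hdwellint : ∀ a, 0 < a → (∫ s in a..(α a), (ρ s)⁻¹) ≤ θ - δ)
    (hκ : ClassKInf κ)
    (hκderiv : ∀ s, 0 ≤ s → HasDerivWithinAt κ (κd s) (Set.Ici 0) s)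
    (hκdP : ClassP κd)
    (hκle : ∀ s, 0 ≤ s → κ s ≤ min (αinv s) s)
    (Ftil G : ℝ → ℝ)
    (hFtil : ∀ q, Ftil q = ∫ s in (1:ℝ)..q, (ρ s)⁻¹)
    (hG1 : ∀ q, 0 < q → G (Ftil q) = q)
    (hG2 : ∀ p : ℝ, (∀ q, 0 < q → p ≤ Ftil q) → G p = 0) :
    ∃ φ : ℝ → ℝ, ClassP φ ∧
      ∀ ψ₁ ψ₂ η ψ₃ : ℝ → ℝ, ClassKInf ψ₁ → ClassKInf ψ₂ → ClassKInf η → ClassK ψ₃ →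
      ∀ (X : Type u) [NormedAddCommGroup X] [NormedSpace ℝ X],
      ∀ (t₀ : ℝ) (τ : ℕ → ℝ), IsImpulseSeq t₀ τ →
      (∀ i : ℕ, θ ≤ τ (i + 1) - τ i) →
      ∀ r : ℝ, 0 ≤ r →
      ∀ Vc : X → ℝ, Continuous Vc →
      (∀ y : X, ψ₁ ‖y‖ ≤ Vc y ∧ Vc y ≤ ψ₂ ‖y‖) →
      ∀ x : ℝ → X,
      ImpulsiveRegular t₀ τ (fun t => Vc (x t)) →
      (∀ t, t₀ ≤ t → t ∉ impulseSet τ → η r ≤ Vc (x t) →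
        DiniUpper (fun s => Vc (x s)) t ≤ (((-ρ (Vc (x t))) : ℝ) : EReal)) →
      (∀ i : ℕ, 1 ≤ i → η r ≤ Function.leftLim (fun s => Vc (x s)) (τ i) →
        Vc (x (τ i)) ≤ α (Function.leftLim (fun s => Vc (x s)) (τ i))) →
      (∀ i : ℕ, 1 ≤ i → Function.leftLim (fun s => Vc (x s)) (τ i) < η r →
        Vc (x (τ i)) ≤ ψ₃ r) →
      ∀ V : ℝ → X → ℝ,
      (∀ i : ℕ, ∀ t, τ i ≤ t → t < τ (i + 1) → ∀ y : X,
        V t y = max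
          (if Vc y = 0 then 0
            else G (Ftil (Vc y) - ((τ (i + 1) - t) / (τ (i + 1) - τ i)) * (θ - δ)))
          (κ (Vc y))) →
      -- (i) sandwich bounds
      (∀ t, t₀ ≤ t → ∀ y : X, κ (ψ₁ ‖y‖) ≤ V t y ∧ V t y ≤ ψ₂ ‖y‖) ∧
      -- the map t ↦ V(t, x(t)) is impulsive-regular
      ImpulsiveRegular t₀ τ (fun t => V t (x t)) ∧
      -- (ii) decay along the flow outside the perturbation radius χ(r) = α(η(r))
      (∀ t, t₀ ≤ t → t ∉ impulseSet τ → α (η r) ≤ V t (x t) →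
        DiniUpper (fun s => V s (x s)) t ≤ (((-φ (V t (x t))) : ℝ) : EReal)) ∧
      -- (ii) non-increase at jumps outside the perturbation radius
      (∀ i : ℕ, 1 ≤ i → α (η r) ≤ Function.leftLim (fun s => V s (x s)) (τ i) →
        V (τ i) (x (τ i)) ≤ Function.leftLim (fun s => V s (x s)) (τ i)) ∧
      -- (iii) bound at jumps inside the perturbation radius
      (∀ i : ℕ, 1 ≤ i → Function.leftLim (fun s => V s (x s)) (τ i) < α (η r) →
        V (τ i) (x (τ i)) ≤ max (ψ₃ r) (α (η r))) := by
  classical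
  have hθ : 0 < θ := lt_trans hδ hθδ
  -- inverse of κ
  have hsurj := classKInf_surj hκ
  set kinv : ℝ → ℝ := fun v => if h : 0 ≤ v then Classical.choose (hsurj v h) else 0 with hkinvdef
  have hki : ∀ v, 0 ≤ v → 0 ≤ kinv v ∧ κ (kinv v) = v := by
    intro v hv
    have hspec := Classical.choose_spec (hsurj v hv)
    simp only [hkinvdef, dif_pos hv]
    exact hspec
  set φ : ℝ → ℝ := fun v => min (δ / θ * ρ v) (κd (kinv v) * ρ (kinv v)) with hφdef
  have hφP : ClassP φ := phi_classP hρ hκdP hδ hθδ (kinv_contOn hκ hki) (kinv_zero hκ hki)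
    (fun v hv => (hki v hv).1) (fun v hv => kinv_pos hκ hki hv)
  refine ⟨φ, hφP, ?_⟩
  intro ψ₁ ψ₂ η ψ₃ hψ₁ hψ₂ hη hψ₃ X _ _ t₀ τ hτ hdwell r hr Vc hVc hsand x hreg hflow hjump1
    hjump2 V hV
  -- basic notation and facts
  set w : ℝ → ℝ := fun s => Vc (x s) with hwdef
  have ht₀ : τ 0 = t₀ := hτ.1
  have hτmono : StrictMono τ := hτ.2.1
  have hgap : ∀ i : ℕ, 0 < τ (i + 1) - τ i := fun i => lt_of_lt_of_le hθ (hdwell i)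
  set lam : ℕ → ℝ → ℝ := fun i t => (τ (i + 1) - t) / (τ (i + 1) - τ i) * (θ - δ) with hlamdef
  have hlam_nonneg : ∀ i t, t < τ (i + 1) → 0 ≤ lam i t := by
    intro i t htl
    have h1 : 0 ≤ τ (i + 1) - t := by linarith
    have := hgap i
    have h2 : 0 ≤ (τ (i + 1) - t) / (τ (i + 1) - τ i) := div_nonneg h1 (le_of_lt this)
    have h3 : 0 ≤ θ - δ := by linarith
    exact mul_nonneg h2 h3
  have hVform : ∀ i : ℕ, ∀ t, τ i ≤ t → t < τ (i + 1) → ∀ y : X,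
      V t y = max (PsiAux Ftil G (Vc y) (lam i t)) (κ (Vc y)) := by
    intro i t h1 h2 y
    rw [hV i t h1 h2 y]
    rfl
  have hw0 : ∀ t, 0 ≤ w t := by
    intro t
    have h1 := (hsand (x t)).1
    have h2 : 0 ≤ ψ₁ ‖x t‖ := hψ₁.1.nonneg (norm_nonneg _)
    exact le_trans h2 h1
  have hκle1 : ∀ s, 0 ≤ s → κ s ≤ s := fun s hs => le_trans (hκle s hs) (min_le_right _ _)
  have hκle2 : ∀ s, 0 ≤ s → κ s ≤ αinv s := fun s hs => le_trans (hκle s hs) (min_le_left _ _)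
  have hκnn : ∀ s, 0 ≤ s → 0 ≤ κ s := fun s hs => hκ.1.nonneg hs
  -- interval finding
  have hfind : ∀ t, t₀ ≤ t → ∃ i : ℕ, τ i ≤ t ∧ t < τ (i + 1) := by
    intro t ht
    have hex : ∃ j : ℕ, t < τ j := by
      rcases (hτ.2.2.eventually_gt_atTop t).exists with ⟨j, hj⟩
      exact ⟨j, hj⟩
    have hNspec : t < τ (Nat.find hex) := Nat.find_spec hex
    have hN0 : Nat.find hex ≠ 0 := by
      intro h0
      rw [h0, ht₀] at hNspec
      linarith
    obtain ⟨i, hieq⟩ : ∃ i, Nat.find hex = i + 1 :=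
      ⟨Nat.find hex - 1, (Nat.succ_pred_eq_of_pos (Nat.pos_of_ne_zero hN0)).symm⟩
    rw [hieq] at hNspec
    refine ⟨i, ?_, hNspec⟩
    have := Nat.find_min hex (m := i) (by omega)
    exact not_lt.1 this
  -- V along trajectories is at most w
  have hVle_w : ∀ t, t₀ ≤ t → V t (x t) ≤ w t := by
    intro t ht
    obtain ⟨i, hi1, hi2⟩ := hfind t ht
    rw [hVform i t hi1 hi2 (x t)]
    apply max_le
    · exact Psi_le hρ hFtil hG1 hG2 (hw0 t) (hlam_nonneg i t hi2)
    · exact hκle1 _ (hw0 t)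
  have hVnn : ∀ t, t₀ ≤ t → 0 ≤ V t (x t) := by
    intro t ht
    obtain ⟨i, hi1, hi2⟩ := hfind t ht
    rw [hVform i t hi1 hi2 (x t)]
    exact le_trans (hκnn _ (hw0 t)) (le_max_right _ _)
  have hηnn : 0 ≤ η r := hη.1.nonneg hr
  -- the local-in-time formula function
  set gfun : ℕ → ℝ → ℝ := fun i u => max (PsiAux Ftil G (w u) (lam i u)) (κ (w u)) with hgfundef
  have hlamc : ∀ i : ℕ, Continuous (lam i) := by
    intro i
    apply Continuous.mul _ continuous_const
    exact (continuous_const.sub continuous_id).div_const _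
  have hgcwa : ∀ (i : ℕ) (t : ℝ) (s : Set ℝ), s ⊆ Iio (τ (i + 1)) → t < τ (i + 1) →
      ContinuousWithinAt w s t → ContinuousWithinAt (gfun i) s t := by
    intro i t s hs htl hw
    have hwt0 : (0:ℝ) ≤ w t := hw0 t
    have hlamt : 0 ≤ lam i t := hlam_nonneg i t htl
    have hpair : ContinuousWithinAt (fun u => ((w u, lam i u) : ℝ × ℝ)) s t :=
      hw.prodMk ((hlamc i).continuousAt.continuousWithinAt)
    have hmaps : MapsTo (fun u => ((w u, lam i u) : ℝ × ℝ)) s (Ici 0 ×ˢ Ici 0) := by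
      intro u hu
      exact ⟨hw0 u, hlam_nonneg i u (hs hu)⟩
    have h1 : ContinuousWithinAt (fun u => PsiAux Ftil G (w u) (lam i u)) s t := by
      have := ContinuousWithinAt.comp (g := fun ql : ℝ × ℝ => PsiAux Ftil G ql.1 ql.2)
        (f := fun u => ((w u, lam i u) : ℝ × ℝ))
        (Psi_contWithin hρ hFtil hG1 hG2 hwt0 hlamt) hpair hmaps
      simpa [Function.comp_def] using this
    have h2 : ContinuousWithinAt (fun u => κ (w u)) s t :=
      (hκ.1.1 (w t) (mem_Ici.2 hwt0)).comp hw (fun u _ => mem_Ici.2 (hw0 u))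
    exact h1.max h2
  -- right continuity of the trajectory of V
  have hrc : ∀ t, t₀ ≤ t → ContinuousWithinAt (fun u => V u (x u)) (Ici t) t := by
    intro t ht
    obtain ⟨i, hi1, hi2⟩ := hfind t ht
    have hcg : ContinuousWithinAt (gfun i) (Ici t ∩ Iio (τ (i + 1))) t :=
      hgcwa i t _ inter_subset_right hi2 ((hreg.1 t ht).mono inter_subset_left)
    have hcv : ContinuousWithinAt (fun u => V u (x u)) (Ici t ∩ Iio (τ (i + 1))) t := by
      apply hcg.congr
      · intro u hu
        exact hVform i u (le_trans hi1 hu.1) hu.2 (x u)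
      · exact hVform i t hi1 hi2 (x t)
    exact (continuousWithinAt_inter (Iio_mem_nhds hi2)).1 hcv
  -- continuity at non-impulse times
  have hcont_noimp : ∀ t, t₀ ≤ t → t ∉ impulseSet τ →
      ContinuousWithinAt (fun u => V u (x u)) (Ici t₀) t := by
    intro t ht hS
    obtain ⟨i, hi1, hi2⟩ := hfind t ht
    rcases eq_or_lt_of_le hi1 with heq | hlt
    · have hi0 : i = 0 := by
        by_contra h0
        exact hS ⟨i, by omega, heq⟩
      have ht0 : t = t₀ := by rw [← heq, hi0, ht₀]
      rw [show Ici t₀ = Ici t by rw [ht0]]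
      exact hrc t ht
    · have hmem : Ioo (τ i) (τ (i + 1)) ∈ 𝓝 t := Ioo_mem_nhds hlt hi2
      have hw' : ContinuousWithinAt w (Ici t₀ ∩ Ioo (τ i) (τ (i + 1))) t :=
        (hreg.2.1 t ht hS).mono inter_subset_left
      have hcg := hgcwa i t _ (fun u hu => hu.2.2) hi2 hw'
      have hcv : ContinuousWithinAt (fun u => V u (x u))
          (Ici t₀ ∩ Ioo (τ i) (τ (i + 1))) t := by
        apply hcg.congr
        · intro u hu
          exact hVform i u hu.2.1.le hu.2.2 (x u)
        · exact hVform i t hi1 hi2 (x t)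
      exact (continuousWithinAt_inter hmem).1 hcv
  -- left limits of the trajectory of V
  have hleft : ∀ i : ℕ, 1 ≤ i → ∀ L, Tendsto w (𝓝[<] (τ i)) (𝓝 L) →
      Tendsto (fun u => V u (x u)) (𝓝[<] (τ i)) (𝓝 L) := by
    intro i hi L hwL
    obtain ⟨j, rfl⟩ : ∃ j, i = j + 1 := ⟨i - 1, by omega⟩
    have hτj : τ j < τ (j + 1) := hτmono (Nat.lt_succ_self j)
    have hL0 : 0 ≤ L := ge_of_tendsto hwL (Eventually.of_forall fun u => hw0 u)
    have hIoo : Ioo (τ j) (τ (j + 1)) ∈ 𝓝[<] (τ (j + 1)) :=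
      Ioo_mem_nhdsLT_of_mem ⟨hτj, le_refl _⟩
    have hlamL : Tendsto (lam j) (𝓝[<] (τ (j + 1))) (𝓝 0) := by
      have hc : Tendsto (lam j) (𝓝[<] (τ (j + 1))) (𝓝 (lam j (τ (j + 1)))) :=
        ((hlamc j).tendsto (τ (j + 1))).mono_left nhdsWithin_le_nhds
      have hval : lam j (τ (j + 1)) = 0 := by
        simp [hlamdef]
      rwa [hval] at hc
    have hpair : Tendsto (fun u => ((w u, lam j u) : ℝ × ℝ)) (𝓝[<] (τ (j + 1)))
        (𝓝[Ici 0 ×ˢ Ici 0] (L, 0)) := by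
      apply tendsto_nhdsWithin_of_tendsto_nhds_of_eventually_within
      · exact hwL.prodMk_nhds hlamL
      · filter_upwards [hIoo] with u hu
        exact ⟨hw0 u, hlam_nonneg j u hu.2⟩
    have h1 : Tendsto (fun u => PsiAux Ftil G (w u) (lam j u)) (𝓝[<] (τ (j + 1)))
        (𝓝 (PsiAux Ftil G L 0)) :=
      (Psi_contWithin hρ hFtil hG1 hG2 hL0 (le_refl 0)).tendsto.comp hpair
    have h2 : Tendsto (fun u => κ (w u)) (𝓝[<] (τ (j + 1))) (𝓝 (κ L)) := by
      apply (hκ.1.1 L (mem_Ici.2 hL0)).tendsto.comp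
      exact tendsto_nhdsWithin_of_tendsto_nhds_of_eventually_within _ hwL
        (Eventually.of_forall fun u => mem_Ici.2 (hw0 u))
    have h3 := h1.max h2
    have hval : max (PsiAux Ftil G L 0) (κ L) = L := by
      rw [Psi_zero_l hG1 hL0]
      exact max_eq_left (hκle1 L hL0)
    rw [hval] at h3
    apply h3.congr'
    filter_upwards [hIoo] with u hu
    exact (hVform j u hu.1.le hu.2 (x u)).symm
  have hregV : ImpulsiveRegular t₀ τ (fun t => V t (x t)) := by
    refine ⟨hrc, hcont_noimp, ?_⟩
    intro i hi
    rcases hreg.2.2 i hi with ⟨L, hL⟩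
    exact ⟨L, hleft i hi L hL⟩
  have hne : ∀ a : ℝ, 𝓝[<] a ≠ ⊥ := fun a => (inferInstance : (𝓝[<] a).NeBot).ne
  have hleftLim : ∀ i : ℕ, 1 ≤ i → ∀ L, Tendsto w (𝓝[<] (τ i)) (𝓝 L) →
      Function.leftLim (fun u => V u (x u)) (τ i) = L ∧ Function.leftLim w (τ i) = L := by
    intro i hi L hL
    exact ⟨leftLim_eq_of_tendsto (hleft i hi L hL),
      leftLim_eq_of_tendsto hL⟩
  -- (i) : sandwich bounds
  have hsandwich : ∀ t, t₀ ≤ t → ∀ y : X, κ (ψ₁ ‖y‖) ≤ V t y ∧ V t y ≤ ψ₂ ‖y‖ := by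
    intro t ht y
    obtain ⟨i, hi1, hi2⟩ := hfind t ht
    rw [hVform i t hi1 hi2 y]
    have hVcy : 0 ≤ Vc y := le_trans (hψ₁.1.nonneg (norm_nonneg y)) (hsand y).1
    constructor
    · refine le_trans ?_ (le_max_right _ _)
      exact hκ.1.mono (mem_Ici.2 (hψ₁.1.nonneg (norm_nonneg y))) (mem_Ici.2 hVcy) (hsand y).1
    · apply max_le
      · exact le_trans (Psi_le hρ hFtil hG1 hG2 hVcy (hlam_nonneg i t hi2)) (hsand y).2
      · exact le_trans (hκle1 _ hVcy) (hsand y).2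
  have hτi_ge : ∀ i : ℕ, t₀ ≤ τ i := fun i => by
    rw [← ht₀]; exact hτmono.monotone (Nat.zero_le i)
  have hlam_at : ∀ i : ℕ, lam i (τ i) = θ - δ := by
    intro i
    simp only [hlamdef]
    rw [div_self (ne_of_gt (hgap i)), one_mul]
  have hα0 : α 0 = 0 := hα.1.2.2
  have hαnn : ∀ s, 0 ≤ s → 0 ≤ α s := fun s hs => hα.1.nonneg hs
  have hαinv_mono : ∀ s s', 0 ≤ s → 0 ≤ s' → s ≤ s' → αinv s ≤ αinv s' := by
    intro s s' hs hs' hss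
    by_contra hcon
    push_neg at hcon
    have h1 := hα.1.2.1 (mem_Ici.2 (hαinv2 s' hs').1) (mem_Ici.2 (hαinv2 s hs).1) hcon
    rw [(hαinv2 s hs).2, (hαinv2 s' hs').2] at h1
    linarith
  have hcore : ∀ i : ℕ, 1 ≤ i → ∀ L, Tendsto w (𝓝[<] (τ i)) (𝓝 L) → η r ≤ L →
      V (τ i) (x (τ i)) ≤ L := by
    intro i hi L hL hηL
    have hL0 : 0 ≤ L := ge_of_tendsto hL (Eventually.of_forall fun u => hw0 u)
    have hLLw := (hleftLim i hi L hL).2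
    have hj : w (τ i) ≤ α L := by
      have := hjump1 i hi (by rw [hLLw]; exact hηL)
      rwa [hLLw] at this
    have hτi : τ i < τ (i + 1) := hτmono (Nat.lt_succ_self i)
    rw [hVform i (τ i) (le_refl _) hτi (x (τ i))]
    have hwτ0 : 0 ≤ w (τ i) := hw0 _
    apply max_le
    · rw [hlam_at i]
      rcases eq_or_lt_of_le hwτ0 with heq | hpos
      · rw [PsiAux, if_pos heq.symm]
        exact hL0
      · have hLpos : 0 < L := by
          by_contra hc
          push_neg at hc
          have hL00 : L = 0 := le_antisymm hc hL0
          rw [hL00, hα0] at hj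
          linarith
        have hαLpos : 0 < α L := lt_of_lt_of_le hLpos (hαge L hL0)
        rw [PsiAux, if_neg (ne_of_gt hpos)]
        apply G_le hρ hFtil hG1 hG2 hLpos
        have h1 : Ftil (w (τ i)) ≤ Ftil (α L) := by
          rcases eq_or_lt_of_le hj with he | hlt'
          · rw [he]
          · exact (F_strictMono hρ hFtil hpos hlt').le
        have h2 : Ftil (α L) - Ftil L ≤ θ - δ := by
          rw [F_sub hρ hFtil hLpos hαLpos]
          exact hdwellint L hLpos
        linarith
    · calc κ (w (τ i)) ≤ αinv (w (τ i)) := hκle2 _ hwτ0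
        _ ≤ αinv (α L) := hαinv_mono _ _ hwτ0 (hαnn L hL0) hj
        _ = L := hαinv1 L hL0
  refine ⟨hsandwich, hregV, ?_, ?_, ?_⟩
  · -- (ii) decay along the flow
    intro t ht htS hVge
    obtain ⟨i, hi1, hi2⟩ := hfind t ht
    have hVt : V t (x t) = max (PsiAux Ftil G (w t) (lam i t)) (κ (w t)) :=
      hVform i t hi1 hi2 (x t)
    have hwt_ge : η r ≤ w t := le_trans (hαge _ hηnn) (le_trans hVge (hVle_w t ht))
    have hDw : DiniUpper w t ≤ ((-ρ (w t) : ℝ) : EReal) := hflow t ht htS hwt_ge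
    have hco : ∀ {f : ℝ → ℝ} {l : ℝ}, Tendsto f (𝓝[Ici t] t) (𝓝 l) →
        Tendsto (fun s => f (t + s)) (𝓝[>] (0:ℝ)) (𝓝 l) := by
      intro f l hf
      apply hf.comp
      apply tendsto_nhdsWithin_of_tendsto_nhds_of_eventually_within
      · have h1 : Tendsto (fun s : ℝ => t + s) (𝓝 0) (𝓝 (t + 0)) :=
          (continuous_const.add continuous_id).tendsto 0
        simpa using h1.mono_left nhdsWithin_le_nhds
      · filter_upwards [eventually_mem_nhdsWithin] with s hs
        have : (0:ℝ) < s := hs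
        exact mem_Ici.2 (by linarith)
    have hwrc : Tendsto (fun s => w (t + s)) (𝓝[>] (0:ℝ)) (𝓝 (w t)) := hco (hreg.1 t ht)
    rcases eq_or_lt_of_le (hw0 t) with heq | hb
    · -- w t = 0 : V t = 0 and D⁺V ≤ D⁺w ≤ -ρ(0) = 0
      have hV0 : V t (x t) = 0 := by
        rw [hVt, ← heq]
        rw [show PsiAux Ftil G 0 (lam i t) = 0 by simp [PsiAux], hκ.1.2.2]
        simp
      rw [hV0, hφP.2.1, neg_zero]
      have hmono : DiniUpper (fun s => V s (x s)) t ≤ DiniUpper w t := by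
        apply Filter.limsup_le_limsup ?_ (by isBoundedDefault) (by isBoundedDefault)
        filter_upwards [eventually_mem_nhdsWithin] with s hs
        have hspos : (0:ℝ) < s := hs
        apply EReal.coe_le_coe_iff.2
        apply (div_le_div_iff_of_pos_right hspos).2
        have h1 : V (t + s) (x (t + s)) ≤ w (t + s) := hVle_w (t + s) (by linarith)
        have h2 : V t (x t) = w t := by rw [hV0, ← heq]
        linarith
      refine le_trans hmono (le_trans hDw ?_)
      rw [← heq, hρ.2.1, neg_zero]
    · -- w t > 0
      have hρb : 0 < ρ (w t) := hρ.2.2 _ hb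
      have hκb : 0 < κ (w t) := by
        have h1 := hκ.1.2.1 self_mem_Ici (mem_Ici.2 (hw0 t)) hb
        rwa [hκ.1.2.2] at h1
      have hwev : ∀ ε' : ℝ, 0 < ε' → ∀ᶠ s in 𝓝[>] (0:ℝ),
          (w (t + s) - w t) / s < -ρ (w t) + ε' := fun ε' hε' => eventually_quot_lt hDw ε' hε'
      have hev_int : ∀ᶠ s in 𝓝[>] (0:ℝ), τ i ≤ t + s ∧ t + s < τ (i + 1) := by
        have h1 : ∀ᶠ s in 𝓝[>] (0:ℝ), s < τ (i + 1) - t :=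
          eventually_nhdsWithin_of_eventually_nhds (eventually_lt_nhds (by linarith))
        filter_upwards [h1, eventually_mem_nhdsWithin] with s hs1 hs2
        have : (0:ℝ) < s := hs2
        exact ⟨by linarith, by linarith⟩
      have hVev : ∀ᶠ s in 𝓝[>] (0:ℝ), V (t + s) (x (t + s)) =
          max (PsiAux Ftil G (w (t + s)) (lam i (t + s))) (κ (w (t + s))) := by
        filter_upwards [hev_int] with s hs
        exact hVform i (t + s) hs.1 hs.2 (x (t + s))
      set P : ℝ → ℝ := fun u => Ftil (w u) - lam i u with hPdef
      have hPt_le : P t ≤ Ftil (w t) := by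
        have := hlam_nonneg i t hi2
        simp only [hPdef]
        linarith
      have hGc : ContinuousAt G (P t) := G_contAt' hρ hFtil hG1 hG2 hb hPt_le
      have hPrc : Tendsto (fun s => P (t + s)) (𝓝[>] (0:ℝ)) (𝓝 (P t)) := by
        simp only [hPdef]
        apply Tendsto.sub
        · exact (F_contAt hρ hFtil hb).tendsto.comp hwrc
        · have h1 : Tendsto (fun s : ℝ => lam i (t + s)) (𝓝 0) (𝓝 (lam i (t + 0))) :=
            ((hlamc i).comp (continuous_const.add continuous_id)).tendsto 0
          simpa using h1.mono_left nhdsWithin_le_nhds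
      have hwne : ∀ᶠ s in 𝓝[>] (0:ℝ), w (t + s) ≠ 0 := hwrc.eventually_ne (ne_of_gt hb)
      have hv1eq : ∀ᶠ s in 𝓝[>] (0:ℝ),
          PsiAux Ftil G (w (t + s)) (lam i (t + s)) = G (P (t + s)) := by
        filter_upwards [hwne] with s hs
        rw [PsiAux, if_neg hs]
      have hv1t_eq : PsiAux Ftil G (w t) (lam i t) = G (P t) := by
        rw [PsiAux, if_neg (ne_of_gt hb)]
      have hv1rc : Tendsto (fun s => PsiAux Ftil G (w (t + s)) (lam i (t + s)))
          (𝓝[>] (0:ℝ)) (𝓝 (PsiAux Ftil G (w t) (lam i t))) := by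
        rw [hv1t_eq]
        exact (hGc.tendsto.comp hPrc).congr' (hv1eq.mono fun s hs => hs.symm)
      have hv2rc : Tendsto (fun s => κ (w (t + s))) (𝓝[>] (0:ℝ)) (𝓝 (κ (w t))) :=
        ((hκ.1.1.continuousAt (Ici_mem_nhds hb)).tendsto).comp hwrc
      apply diniUpper_le_of_eventually
      intro ε hε
      have hB1 : ∀ᶠ s in 𝓝[>] (0:ℝ),
          (PsiAux Ftil G (w (t + s)) (lam i (t + s)) - V t (x t)) / s ≤
            -φ (V t (x t)) + ε := by
        have hv1le : PsiAux Ftil G (w t) (lam i t) ≤ V t (x t) := by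
          rw [hVt]; exact le_max_left _ _
        rcases eq_or_lt_of_le hv1le with hact | hinact
        · -- active branch v₁
          have hv2le : κ (w t) ≤ V t (x t) := by rw [hVt]; exact le_max_right _ _
          have hMpos : 0 < V t (x t) := lt_of_lt_of_le hκb hv2le
          have hv1pos : 0 < PsiAux Ftil G (w t) (lam i t) := by rw [hact]; exact hMpos
          have hFv1 : Ftil (PsiAux Ftil G (w t) (lam i t)) = P t := by
            by_cases hall : ∀ q', 0 < q' → P t ≤ Ftil q'
            · exfalso
              have h0 := hG2 (P t) hall
              rw [hv1t_eq, h0] at hv1pos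
              exact lt_irrefl _ hv1pos
            · push_neg at hall
              rcases hall with ⟨q₁, hq₁, hq₁p⟩
              rcases G_exact hρ hFtil hG1 hq₁ hb hq₁p.le hPt_le with ⟨q₂, _, _, hFq₂, hGp⟩
              rw [hv1t_eq, hGp, hFq₂]
          have hFw := dini_chain hρb (inv_pos.2 hρb) hwev hwrc (F_hasDerivAt hρ hFtil hb)
          have hone : (ρ (w t))⁻¹ * ρ (w t) = 1 := inv_mul_cancel₀ (ne_of_gt hρb)
          have hPev : ∀ ε' : ℝ, 0 < ε' → ∀ᶠ s in 𝓝[>] (0:ℝ),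
              (P (t + s) - P t) / s < -(δ / θ) + ε' := by
            intro ε' hε'
            filter_upwards [hFw (ε' / 2) (half_pos hε'), hev_int,
              eventually_mem_nhdsWithin] with s h1 h2 h3
            have hspos : (0:ℝ) < s := h3
            have hgapi := hgap i
            have hsplit : P (t + s) - P t =
                (Ftil (w (t + s)) - Ftil (w t)) + s * ((θ - δ) / (τ (i + 1) - τ i)) := by
              simp only [hPdef, hlamdef]
              field_simp
              ring
            have hq : (P (t + s) - P t) / s =
                (Ftil (w (t + s)) - Ftil (w t)) / s + (θ - δ) / (τ (i + 1) - τ i) := by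
              rw [hsplit, add_div, mul_comm s, mul_div_assoc,
                div_self (ne_of_gt hspos), mul_one]
            have hratio : (θ - δ) / (τ (i + 1) - τ i) ≤ (θ - δ) / θ :=
              div_le_div_of_nonneg_left (by linarith) hθ (hdwell i |> fun h => by linarith)
            have hθid : (θ - δ) / θ = 1 - δ / θ := by
              rw [sub_div, div_self (ne_of_gt hθ)]
            rw [hone] at h1
            rw [hq]
            linarith
          have hGder : HasDerivAt G (ρ (PsiAux Ftil G (w t) (lam i t))) (P t) :=
            G_hasDerivAt hρ hFtil hG1 hv1pos hFv1
          have hρv1 : 0 < ρ (PsiAux Ftil G (w t) (lam i t)) := hρ.2.2 _ hv1pos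
          have hv1ev := dini_chain (div_pos hδ hθ) hρv1 hPev hPrc hGder
          have hGPV : G (P t) = V t (x t) := hv1t_eq.symm.trans hact
          have hφle1 : φ (V t (x t)) ≤
              δ / θ * ρ (PsiAux Ftil G (w t) (lam i t)) := by
            rw [← hact]
            simp only [hφdef]
            exact min_le_left _ _
          filter_upwards [hv1ev ε hε, hv1eq] with s h1 h2
          rw [h2]
          rw [hGPV] at h1
          have hcomm : ρ (PsiAux Ftil G (w t) (lam i t)) * (δ / θ) =
              δ / θ * ρ (PsiAux Ftil G (w t) (lam i t)) := mul_comm _ _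
          linarith
        · exact quot_kill hv1rc hinact _
      have hB2 : ∀ᶠ s in 𝓝[>] (0:ℝ),
          (κ (w (t + s)) - V t (x t)) / s ≤ -φ (V t (x t)) + ε := by
        have hv2le : κ (w t) ≤ V t (x t) := by rw [hVt]; exact le_max_right _ _
        rcases eq_or_lt_of_le hv2le with hact | hinact
        · have hκdb : 0 < κd (w t) := hκdP.2.2 _ hb
          have hder : HasDerivAt κ (κd (w t)) (w t) :=
            (hκderiv (w t) (hw0 t)).hasDerivAt (Ici_mem_nhds hb)
          have hv2ev := dini_chain hρb hκdb hwev hwrc hder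
          have hφle2 : φ (V t (x t)) ≤ κd (w t) * ρ (w t) := by
            rw [← hact]
            simp only [hφdef]
            have hkk : kinv (κ (w t)) = w t := kinv_of_kappa hκ hki (hw0 t)
            rw [hkk]
            exact min_le_right _ _
          filter_upwards [hv2ev ε hε] with s h1
          rw [hact] at h1
          linarith
        · exact quot_kill hv2rc hinact _
      filter_upwards [hB1, hB2, hVev, eventually_mem_nhdsWithin] with s h1 h2 hVf hs
      have hspos : (0:ℝ) < s := hs
      rw [hVf]
      rcases max_cases (PsiAux Ftil G (w (t + s)) (lam i (t + s))) (κ (w (t + s))) with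
        ⟨hm, _⟩ | ⟨hm, _⟩
      · rw [hm]; exact h1
      · rw [hm]; exact h2
  · intro i hi hge
    rcases hreg.2.2 i hi with ⟨L, hL⟩
    have hLL := hleftLim i hi L hL
    rw [hLL.1] at hge ⊢
    exact hcore i hi L hL (le_trans (hαge (η r) hηnn) hge)
  · intro i hi hlt
    rcases hreg.2.2 i hi with ⟨L, hL⟩
    have hLL := hleftLim i hi L hL
    rw [hLL.1] at hlt
    rcases le_or_gt (η r) L with hcase | hcase
    · exact le_trans (hcore i hi L hL hcase) (le_trans hlt.le (le_max_right _ _))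
    · have hj := hjump2 i hi (by rw [hLL.2]; exact hcase)
      exact le_trans (hVle_w (τ i) (hτi_ge i)) (le_trans hj (le_max_left _ _))
end
end

section
/- Let ρ ∈ 𝒫 with ∫₀¹ ds/ρ(s) = ∞, and set F̃(q) := ∫₁^q ds/ρ(s) for q > 0, so that F̃ is a strictly increasing continuous bijection from (0,∞) onto (−∞, M̃) where M̃ := lim_{q→∞} F̃(q) ∈ (0,∞]. Let θ > δ > 0 and tᵢ < t_{i+1} be reals with t_{i+1} − tᵢ ≥ θ. Let w: [tᵢ, t_{i+1}) → (0,∞) be continuous with D⁺w(t) ≤ −ρ(w(t)) for all t ∈ [tᵢ, t_{i+1}). Define z(t) := F̃⁻¹( F̃(w(t)) − ((t_{i+1} − t)/(t_{i+1} − tᵢ))(θ − δ) ). Then D⁺z(t) ≤ −(δ/θ) ρ(z(t)) for all t ∈ [tᵢ, t_{i+1}). -/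
open Filter Topology Set MeasureTheory

noncomputable section

namespace FlowAux

variable {ρ : ℝ → ℝ}

lemma rho_max_nonneg (hρ : ClassP ρ) (s : ℝ) : 0 ≤ ρ (max s 0) := by
  rcases le_or_gt s 0 with h | h
  · simp [max_eq_right h, hρ.2.1]
  · exact (hρ.2.2 _ (by simp [h] : (0:ℝ) < max s 0)).le

lemma inv_contOn (hρ : ClassP ρ) : ContinuousOn (fun s => (ρ s)⁻¹) (Set.Ioi 0) :=
  (hρ.1.mono (Set.Ioi_subset_Ici le_rfl)).inv₀ fun s hs => (hρ.2.2 s hs).ne'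

lemma intInt (hρ : ClassP ρ) {p q : ℝ} (hp : 0 < p) (hq : 0 < q) :
    IntervalIntegrable (fun s => (ρ s)⁻¹) volume p q := by
  apply ((inv_contOn hρ).mono ?_).intervalIntegrable
  intro x hx
  rcases Set.mem_uIcc.mp hx with h | h
  · exact hp.trans_le h.1
  · exact hq.trans_le h.1

lemma Fdiff (hρ : ClassP ρ) {Ftil : ℝ → ℝ}
    (hFtil : ∀ q, Ftil q = ∫ s in (1:ℝ)..q, (ρ s)⁻¹)
    {p q : ℝ} (hp : 0 < p) (hq : 0 < q) :
    Ftil q - Ftil p = ∫ s in p..q, (ρ s)⁻¹ := by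
  rw [hFtil, hFtil]
  exact intervalIntegral.integral_interval_sub_left (intInt hρ one_pos hq) (intInt hρ one_pos hp)

lemma Flb (hρ : ClassP ρ) {Ftil : ℝ → ℝ}
    (hFtil : ∀ q, Ftil q = ∫ s in (1:ℝ)..q, (ρ s)⁻¹)
    {p q m : ℝ} (hp : 0 < p) (hpq : p ≤ q) (hm : ∀ s ∈ Set.Icc p q, m ≤ (ρ s)⁻¹) :
    m * (q - p) ≤ Ftil q - Ftil p := by
  rw [Fdiff hρ hFtil hp (hp.trans_le hpq)]
  have h := intervalIntegral.integral_mono_on hpq (intervalIntegrable_const (c := m))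
    (intInt hρ hp (hp.trans_le hpq)) hm
  simpa [mul_comm] using h

lemma Fub (hρ : ClassP ρ) {Ftil : ℝ → ℝ}
    (hFtil : ∀ q, Ftil q = ∫ s in (1:ℝ)..q, (ρ s)⁻¹)
    {p q M : ℝ} (hp : 0 < p) (hpq : p ≤ q) (hM : ∀ s ∈ Set.Icc p q, (ρ s)⁻¹ ≤ M) :
    Ftil q - Ftil p ≤ M * (q - p) := by
  rw [Fdiff hρ hFtil hp (hp.trans_le hpq)]
  have h := intervalIntegral.integral_mono_on hpq
    (intInt hρ hp (hp.trans_le hpq)) (intervalIntegrable_const (c := M)) hM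
  simpa [mul_comm] using h

lemma Fmono (hρ : ClassP ρ) {Ftil : ℝ → ℝ}
    (hFtil : ∀ q, Ftil q = ∫ s in (1:ℝ)..q, (ρ s)⁻¹)
    {p q : ℝ} (hp : 0 < p) (hpq : p ≤ q) : Ftil p ≤ Ftil q := by
  have := Flb hρ hFtil (m := 0) hp hpq
    (fun s hs => inv_nonneg.2 (hρ.2.2 s (hp.trans_le hs.1)).le)
  linarith

lemma FstrictMono (hρ : ClassP ρ) {Ftil : ℝ → ℝ}
    (hFtil : ∀ q, Ftil q = ∫ s in (1:ℝ)..q, (ρ s)⁻¹)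
    {p q : ℝ} (hp : 0 < p) (hpq : p < q) : Ftil p < Ftil q := by
  obtain ⟨x0, hx0, hmin⟩ := isCompact_Icc.exists_isMinOn (Set.nonempty_Icc.2 hpq.le)
    ((inv_contOn hρ).mono (fun x hx => hp.trans_le hx.1 : Set.Icc p q ⊆ Set.Ioi 0))
  have hm : 0 < (ρ x0)⁻¹ := inv_pos.2 (hρ.2.2 _ (hp.trans_le hx0.1))
  have := Flb hρ hFtil hp hpq.le (fun s hs => hmin hs)
  nlinarith

lemma FcontAt (hρ : ClassP ρ) {Ftil : ℝ → ℝ}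
    (hFtil : ∀ q, Ftil q = ∫ s in (1:ℝ)..q, (ρ s)⁻¹)
    {q : ℝ} (hq : 0 < q) : ContinuousAt Ftil q := by
  have hK : Set.Icc (q/2) (q+1) ⊆ Set.Ioi 0 := fun x hx => (half_pos hq).trans_le hx.1
  obtain ⟨xM, hxM, hM⟩ := isCompact_Icc.exists_isMaxOn
    (Set.nonempty_Icc.2 (by linarith)) ((inv_contOn hρ).mono hK)
  set M := (ρ xM)⁻¹ with hMdef
  have key : Tendsto (fun x => Ftil x - Ftil q) (𝓝 q) (𝓝 0) := by
    apply squeeze_zero_norm' (a := fun x => M * |x - q|)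
    · filter_upwards [isOpen_Ioo.mem_nhds (show q ∈ Set.Ioo (q/2) (q+1) by
        constructor <;> linarith)] with x hx
      have hx0 : 0 < x := (half_pos hq).trans hx.1
      rw [Fdiff hρ hFtil hq hx0]
      have : ∀ y ∈ Set.uIoc q x, ‖(ρ y)⁻¹‖ ≤ M := by
        intro y hy
        have hy' : y ∈ Set.Icc (q/2) (q+1) := by
          rcases Set.mem_uIoc.mp hy with h | h
          · exact ⟨by linarith [h.1], by linarith [h.2, hx.2]⟩
          · exact ⟨by linarith [h.1, hx.1], by linarith [h.2]⟩
        have : 0 < ρ y := hρ.2.2 _ ((half_pos hq).trans_le hy'.1)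
        rw [Real.norm_eq_abs, abs_of_nonneg (inv_nonneg.2 this.le)]
        exact hM hy'
      simpa [abs_sub_comm] using intervalIntegral.norm_integral_le_of_norm_le_const this
    · have : Tendsto (fun x : ℝ => M * |x - q|) (𝓝 q) (𝓝 (M * |q - q|)) := by
        exact (continuous_const.mul ((continuous_id.sub continuous_const).abs)).tendsto q
      simpa using this
  have : Tendsto Ftil (𝓝 q) (𝓝 (0 + Ftil q)) := key.add_const (Ftil q) |>.congr (by simp)
  simpa [ContinuousAt] using this


lemma Fsmall (hρ : ClassP ρ)
    (hdiv : ∫⁻ s in Set.Ioc (0:ℝ) 1, ENNReal.ofReal ((ρ s)⁻¹) = ⊤)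
    {Ftil : ℝ → ℝ} (hFtil : ∀ q, Ftil q = ∫ s in (1:ℝ)..q, (ρ s)⁻¹) :
    ∀ C : ℝ, ∃ p, 0 < p ∧ p ≤ 1 ∧ Ftil p ≤ C := by
  intro C
  have hρmc : Continuous fun s : ℝ => ρ (max s 0) :=
    hρ.1.comp_continuous (continuous_id.max continuous_const) fun x => Set.mem_Ici.2 (le_max_right _ _)
  set g : ℝ → ENNReal := fun s => ENNReal.ofReal ((ρ (max s 0))⁻¹) with hg
  have hgmeas : Measurable g := (hρmc.measurable.inv).ennreal_ofReal
  have hgtop : ∫⁻ s in Set.Ioc (0:ℝ) 1, g s = ⊤ := by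
    rw [← hdiv]
    apply setLIntegral_congr_fun measurableSet_Ioc
    exact fun x hx => by rw [hg]; simp [max_eq_left hx.1.le]
  set A : ℕ → Set ℝ := fun n => Set.Ioc (1/(n+1) : ℝ) 1 with hA
  have hAsub : ∀ n, A n ⊆ Set.Ioc (0:ℝ) 1 := by
    intro n
    apply Set.Ioc_subset_Ioc_left
    positivity
  have hsup : (⨆ n, ∫⁻ s in A n, g s) = ⊤ := by
    have h1 : ∀ n, ∫⁻ s in A n, g s = ∫⁻ s, (A n).indicator g s := by
      intro n; rw [lintegral_indicator measurableSet_Ioc]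
    have hmono : Monotone fun n => (A n).indicator g := by
      intro n m hnm
      apply Set.indicator_le_indicator_of_subset
      · apply Set.Ioc_subset_Ioc_left
        have h2 : (n:ℝ) + 1 ≤ (m:ℝ) + 1 := by exact_mod_cast by omega
        exact div_le_div_of_nonneg_left one_pos.le (by positivity) h2
      · exact fun a => zero_le
    have hpt : ∀ x, (⨆ n, (A n).indicator g x) = (Set.Ioc (0:ℝ) 1).indicator g x := by
      intro x
      by_cases hx : x ∈ Set.Ioc (0:ℝ) 1
      · obtain ⟨n, hn⟩ := exists_nat_one_div_lt hx.1
        apply le_antisymm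
        · exact iSup_le fun m =>
            Set.indicator_le_indicator_of_subset (hAsub m) (fun a => zero_le) x
        · have hxA : x ∈ A n := ⟨by exact_mod_cast hn, hx.2⟩
          calc (Set.Ioc (0:ℝ) 1).indicator g x = g x := Set.indicator_of_mem hx g
            _ = (A n).indicator g x := (Set.indicator_of_mem hxA g).symm
            _ ≤ ⨆ m, (A m).indicator g x := le_iSup (fun m => (A m).indicator g x) n
      · have h0 : ∀ m, (A m).indicator g x = 0 := fun m =>
          Set.indicator_of_notMem (fun hxm => hx (hAsub m hxm)) g
        simp [Set.indicator_of_notMem hx, h0]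
    calc ⨆ n, ∫⁻ s in A n, g s = ⨆ n, ∫⁻ s, (A n).indicator g s := by simp_rw [h1]
      _ = ∫⁻ s, ⨆ n, (A n).indicator g s :=
          (lintegral_iSup (fun n => hgmeas.indicator measurableSet_Ioc) hmono).symm
      _ = ∫⁻ s, (Set.Ioc (0:ℝ) 1).indicator g s := by simp_rw [hpt]
      _ = ∫⁻ s in Set.Ioc (0:ℝ) 1, g s := lintegral_indicator measurableSet_Ioc g
      _ = ⊤ := hgtop
  have hlt : ENNReal.ofReal (max (-C) 1) < ⨆ n, ∫⁻ s in A n, g s := by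
    rw [hsup]; exact ENNReal.ofReal_lt_top
  obtain ⟨n, hn⟩ := lt_iSup_iff.mp hlt
  set ε : ℝ := 1/(n+1) with hε
  have hε0 : 0 < ε := by positivity
  have hε1 : ε ≤ 1 := by
    rw [hε]
    apply div_le_one_of_le₀ <;> [skip; positivity]
    exact_mod_cast by omega
  have hcontf : ContinuousOn (fun s : ℝ => (ρ (max s 0))⁻¹) (Set.Icc ε 1) := by
    apply hρmc.continuousOn.inv₀
    intro x hx
    have hx0 : (0:ℝ) < x := hε0.trans_le hx.1
    have : max x 0 = x := max_eq_left hx0.le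
    rw [this]
    exact (hρ.2.2 x hx0).ne'
  have hint : IntegrableOn (fun s : ℝ => (ρ (max s 0))⁻¹) (Set.Ioc ε 1) :=
    (hcontf.integrableOn_Icc).mono_set Set.Ioc_subset_Icc_self
  have hnn : 0 ≤ᵐ[volume.restrict (Set.Ioc ε 1)] fun s : ℝ => (ρ (max s 0))⁻¹ :=
    ae_of_all _ fun s => inv_nonneg.2 (rho_max_nonneg hρ s)
  have heq : ENNReal.ofReal (∫ s in Set.Ioc ε 1, (ρ (max s 0))⁻¹) = ∫⁻ s in A n, g s :=
    MeasureTheory.ofReal_integral_eq_lintegral_ofReal hint hnn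
  have hgt : max (-C) 1 < ∫ s in Set.Ioc ε 1, (ρ (max s 0))⁻¹ := by
    rw [← heq] at hn
    exact (ENNReal.ofReal_lt_ofReal_iff_of_nonneg (le_trans zero_le_one (le_max_right _ _))).mp hn
  have hIeq : ∫ s in Set.Ioc ε 1, (ρ (max s 0))⁻¹ = Ftil 1 - Ftil ε := by
    rw [setIntegral_congr_fun measurableSet_Ioc
      (fun x hx => by simp [max_eq_left (hε0.trans hx.1).le] : Set.EqOn (fun s : ℝ => (ρ (max s 0))⁻¹) (fun s => (ρ s)⁻¹) (Set.Ioc ε 1)),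
      ← intervalIntegral.integral_of_le hε1, ← Fdiff hρ hFtil hε0 one_pos]
  have hF1 : Ftil 1 = 0 := by rw [hFtil]; exact intervalIntegral.integral_same
  refine ⟨ε, hε0, hε1, ?_⟩
  have := le_max_left (-C) 1
  rw [hIeq, hF1] at hgt
  linarith

lemma Fsurj (hρ : ClassP ρ)
    (hdiv : ∫⁻ s in Set.Ioc (0:ℝ) 1, ENNReal.ofReal ((ρ s)⁻¹) = ⊤)
    {Ftil : ℝ → ℝ} (hFtil : ∀ q, Ftil q = ∫ s in (1:ℝ)..q, (ρ s)⁻¹) :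
    ∀ y q₀, 0 < q₀ → y ≤ Ftil q₀ → ∃ x, 0 < x ∧ x ≤ q₀ ∧ Ftil x = y := by
  intro y q₀ hq₀ hy
  obtain ⟨p, hp0, hp1, hpC⟩ := Fsmall hρ hdiv hFtil y
  set p' : ℝ := min p q₀ with hp'
  have hp'0 : 0 < p' := lt_min hp0 hq₀
  have hp'q : p' ≤ q₀ := min_le_right _ _
  have hp'le : Ftil p' ≤ y := (Fmono hρ hFtil hp'0 (min_le_left _ _)).trans hpC
  have hcont : ContinuousOn Ftil (Set.Icc p' q₀) := fun x hx =>
    (FcontAt hρ hFtil (hp'0.trans_le hx.1)).continuousWithinAt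
  have := intermediate_value_Icc hp'q hcont
  obtain ⟨x, hx, hxy⟩ := this ⟨hp'le, hy⟩
  exact ⟨x, hp'0.trans_le hx.1, hx.2, hxy⟩

end FlowAux

set_option maxHeartbeats 1000000 in
open FlowAux in
/-- flow-decay estimate for the rescaled component
`z(t) = F̃⁻¹(F̃(w(t)) − ((t_{i+1} − t)/(t_{i+1} − tᵢ))(θ − δ))` when `D⁺w ≤ −ρ(w)`.
The divergence hypothesis `∫₀¹ ds/ρ(s) = ∞` is expressed as a lower Lebesgue integral
being `⊤`, so that `F̃` maps `(0,∞)` onto `(−∞, M̃)`. -/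
theorem flowDecayStableFlow
    (ρ : ℝ → ℝ) (hρ : ClassP ρ)
    (hdiv : ∫⁻ s in Set.Ioc (0:ℝ) 1, ENNReal.ofReal ((ρ s)⁻¹) = ⊤)
    (Ftil Finv : ℝ → ℝ)
    (hFtil : ∀ q, Ftil q = ∫ s in (1:ℝ)..q, (ρ s)⁻¹)
    (hFinv : ∀ q, 0 < q → Finv (Ftil q) = q)
    (θ δ : ℝ) (hδ : 0 < δ) (hθδ : δ < θ)
    (ti tip : ℝ) (hlt : ti < tip) (hθdwell : θ ≤ tip - ti)
    (w : ℝ → ℝ)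
    (hwpos : ∀ t ∈ Set.Ico ti tip, 0 < w t)
    (hwcont : ContinuousOn w (Set.Ico ti tip))
    (hwdini : ∀ t ∈ Set.Ico ti tip, DiniUpper w t ≤ (((-ρ (w t)) : ℝ) : EReal))
    (z : ℝ → ℝ)
    (hz : ∀ t, z t = Finv (Ftil (w t) - ((tip - t) / (tip - ti)) * (θ - δ))) :
    ∀ t ∈ Set.Ico ti tip, DiniUpper z t ≤ (((-(δ / θ * ρ (z t))) : ℝ) : EReal) := by
  have htipti : 0 < tip - ti := sub_pos.2 hlt
  have hθ : 0 < θ := hδ.trans hθδ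
  set κ : ℝ := (θ - δ) / (tip - ti) with hκdef
  have hκpos : 0 < κ := div_pos (sub_pos.2 hθδ) htipti
  have hκle : κ ≤ 1 - δ / θ := by
    have h3 : δ/θ < 1 := (div_lt_one hθ).2 hθδ
    rw [hκdef, div_le_iff₀ htipti]
    have h2 : (1 - δ/θ) * θ = θ - δ := by field_simp
    nlinarith [mul_le_mul_of_nonneg_left hθdwell (by linarith : (0:ℝ) ≤ 1 - δ/θ)]
  have hκ1 : κ < 1 := by
    have : 0 < δ / θ := div_pos hδ hθ
    linarith
  -- characterization of z on [ti, tip)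
  have key : ∀ r ∈ Set.Ico ti tip, 0 < z r ∧
      Ftil (z r) = Ftil (w r) - (tip - r) / (tip - ti) * (θ - δ) := by
    intro r hr
    have hwr := hwpos r hr
    have hcr : 0 < (tip - r) / (tip - ti) * (θ - δ) :=
      mul_pos (div_pos (sub_pos.2 hr.2) htipti) (sub_pos.2 hθδ)
    obtain ⟨x, hx0, hxle, hxF⟩ := Fsurj hρ hdiv hFtil
      (Ftil (w r) - (tip - r) / (tip - ti) * (θ - δ)) (w r) hwr (by linarith)
    have hzx : z r = x := by rw [hz r, ← hxF, hFinv x hx0]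
    exact ⟨hzx ▸ hx0, by rw [hzx, hxF]⟩
  intro t ht
  have hb : 0 < w t := hwpos t ht
  obtain ⟨ha0, haF⟩ := key t ht
  set a : ℝ := z t with hadef
  set b : ℝ := w t with hbdef
  have hP : 0 < ρ a := hρ.2.2 _ ha0
  have hQ : 0 < ρ b := hρ.2.2 _ hb
  set l : Filter ℝ := nhdsWithin 0 (Set.Ioi 0) with hl
  -- generic eventual facts
  have hmem : ∀ᶠ s in l, t + s ∈ Set.Ico ti tip := by
    have h1 : ∀ᶠ s in 𝓝 (0:ℝ), t + s < tip := by
      have h2 : Tendsto (fun s : ℝ => t + s) (𝓝 0) (𝓝 t) := by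
        simpa using (continuous_add_left t).tendsto (0:ℝ)
      exact h2.eventually_lt_const ht.2
    filter_upwards [h1.filter_mono nhdsWithin_le_nhds, self_mem_nhdsWithin] with s h hs
    exact ⟨by simp only [Set.mem_Ioi] at hs; linarith [ht.1], h⟩
  have hwlim : Tendsto (fun s => w (t + s)) l (𝓝 b) := by
    have htt : Tendsto (fun s : ℝ => t + s) l (nhdsWithin t (Set.Ico ti tip)) := by
      apply tendsto_nhdsWithin_of_tendsto_nhds_of_eventually_within
      · have h2 : Tendsto (fun s : ℝ => t + s) (𝓝 (0:ℝ)) (𝓝 t) := by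
          simpa using (continuous_add_left t).tendsto (0:ℝ)
        exact h2.mono_left nhdsWithin_le_nhds
      · exact hmem
    exact (hwcont t ht).tendsto.comp htt
  have hFwlim : Tendsto (fun s => Ftil (w (t + s)) - (tip - (t + s)) / (tip - ti) * (θ - δ))
      l (𝓝 (Ftil a)) := by
    have h1 : Tendsto (fun s => Ftil (w (t + s))) l (𝓝 (Ftil b)) :=
      (FcontAt hρ hFtil hb).tendsto.comp hwlim
    have h2 : Tendsto (fun s : ℝ => (tip - (t + s)) / (tip - ti) * (θ - δ)) l
        (𝓝 ((tip - t) / (tip - ti) * (θ - δ))) := by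
      apply Tendsto.mono_left _ nhdsWithin_le_nhds
      have : Continuous (fun s : ℝ => (tip - (t + s)) / (tip - ti) * (θ - δ)) := by fun_prop
      simpa using this.tendsto (0:ℝ)
    have := h1.sub h2
    rwa [← haF] at this
  -- main reduction
  have main : ∀ r : ℝ, -(δ / θ * ρ a) < r → DiniUpper z t ≤ (r : EReal) := by
    intro r hr
    -- choose u
    have hfc : ContinuousAt (fun u : ℝ => (κ - (1 - u) ^ 2) * ρ a / (1 + u)) 0 := by
      apply ContinuousAt.div (by fun_prop) (by fun_prop) (by norm_num)
    have hf0 : (κ - (1 - (0:ℝ)) ^ 2) * ρ a / (1 + 0) < r := by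
      have h1 : (κ - 1) * ρ a ≤ -(δ / θ * ρ a) := by
        nlinarith [mul_le_mul_of_nonneg_right (by linarith only [hκle] : κ - 1 ≤ -(δ/θ)) hP.le]
      simpa using h1.trans_lt hr
    have hev1 : ∀ᶠ u in 𝓝 (0:ℝ), (κ - (1 - u) ^ 2) * ρ a / (1 + u) < r :=
      hfc.tendsto.eventually_lt_const hf0
    have hev2 : ∀ᶠ u in 𝓝 (0:ℝ), κ - (1 - u) ^ 2 < 0 := by
      have hc : ContinuousAt (fun u : ℝ => κ - (1 - u) ^ 2) 0 := by fun_prop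
      exact hc.tendsto.eventually_lt_const (by norm_num; linarith)
    have hev3 : ∀ᶠ u in 𝓝 (0:ℝ), u < 1 :=
      Filter.Tendsto.eventually_lt_const one_pos tendsto_id
    obtain ⟨u, hu⟩ := (((hev1.and (hev2.and hev3)).filter_mono
      (nhdsWithin_le_nhds : nhdsWithin (0:ℝ) (Set.Ioi 0) ≤ 𝓝 0)).and
      eventually_mem_nhdsWithin).exists
    obtain ⟨⟨hfu, hRu, hu1⟩, hu0⟩ := hu
    rw [Set.mem_Ioi] at hu0
    -- ηb
    have hcb : ContinuousAt (fun x => (ρ x)⁻¹) b :=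
      ((hρ.1.continuousAt (Ici_mem_nhds hb)).inv₀ hQ.ne')
    have hbval : (1 - u) / ρ b < (ρ b)⁻¹ := by
      rw [inv_eq_one_div]
      gcongr
      linarith
    obtain ⟨εb, hεb0, hεb⟩ := Metric.eventually_nhds_iff.mp (hcb.tendsto.eventually_const_lt hbval)
    set ηb : ℝ := min (εb/2) (b/2) with hηbdef
    have hηb0 : 0 < ηb := lt_min (by linarith) (by linarith)
    have hηbb : ηb ≤ b/2 := min_le_right _ _
    have hηbprop : ∀ x ∈ Set.Icc (b - ηb) (b + ηb), (1-u)/ρ b ≤ (ρ x)⁻¹ := by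
      intro x hx
      have h1 : |x - b| ≤ ηb := abs_le.2 ⟨by linarith [hx.1], by linarith [hx.2]⟩
      apply (hεb ?_).le
      rw [Real.dist_eq]
      linarith [min_le_left (εb/2) (b/2)]
    -- ηa
    have hca : ContinuousAt (fun x => (ρ x)⁻¹) a :=
      ((hρ.1.continuousAt (Ici_mem_nhds ha0)).inv₀ hP.ne')
    have haval : (ρ a)⁻¹ < (1 + u) / ρ a := by
      rw [inv_eq_one_div]
      gcongr
      linarith
    obtain ⟨εa, hεa0, hεa⟩ := Metric.eventually_nhds_iff.mp (hca.tendsto.eventually_lt_const haval)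
    set ηa : ℝ := min (εa/2) (a/2) with hηadef
    have hηa0 : 0 < ηa := lt_min (by linarith) (by linarith)
    have hηaa : ηa ≤ a/2 := min_le_right _ _
    have hηaprop : ∀ x ∈ Set.Icc (a - ηa) (a + ηa), (ρ x)⁻¹ ≤ (1+u)/ρ a := by
      intro x hx
      have h1 : |x - a| ≤ ηa := abs_le.2 ⟨by linarith [hx.1], by linarith [hx.2]⟩
      apply (hεa ?_).le
      rw [Real.dist_eq]
      linarith [min_le_left (εa/2) (a/2)]
    -- eventual facts
    have hFa1 : Ftil (a - ηa) < Ftil a := FstrictMono hρ hFtil (by linarith) (by linarith)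
    have hFa2 : Ftil a < Ftil (a + ηa) := FstrictMono hρ hFtil ha0 (by linarith)
    have hevz : ∀ᶠ s in l, Ftil (w (t+s)) - (tip - (t+s))/(tip-ti)*(θ-δ)
        ∈ Set.Ioo (Ftil (a - ηa)) (Ftil (a + ηa)) := hFwlim (Ioo_mem_nhds hFa1 hFa2)
    have hevdini : ∀ᶠ s in l, (w (t+s) - w t)/s < -ρ b * (1-u) := by
      have h1 : DiniUpper w t < ((-ρ b * (1-u) : ℝ) : EReal) := by
        apply lt_of_le_of_lt (hwdini t ht)
        exact_mod_cast (by nlinarith [mul_pos hQ hu0] : -ρ b < -ρ b * (1-u))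
      unfold DiniUpper at h1
      filter_upwards [eventually_lt_of_limsup_lt h1] with s hs
      exact_mod_cast hs
    have hevwmem : ∀ᶠ s in l, b - ηb < w (t+s) := hwlim.eventually_const_lt (by linarith)
    -- conclusion
    unfold DiniUpper
    refine Filter.limsup_le_of_le (by isBoundedDefault) ?_
    filter_upwards [hmem, hevz, hevdini, hevwmem, eventually_mem_nhdsWithin]
      with s hs1 hs2 hs3 hs4 hs5
    have hspos : 0 < s := hs5
    obtain ⟨hz0, hzF⟩ := key (t+s) hs1
    have hW0 : 0 < w (t+s) := hwpos _ hs1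
    rw [← hzF] at hs2
    have hWlt : w (t+s) - b ≤ s * (-ρ b * (1-u)) := by
      have h := (div_lt_iff₀ hspos).1 hs3
      have h' : (-ρ b * (1-u)) * s = s * (-ρ b * (1-u)) := mul_comm _ _
      linarith only [h, h']
    have hXneg : -ρ b * (1-u) < 0 :=
      mul_neg_of_neg_of_pos (neg_lt_zero.2 hQ) (by linarith only [hu1])
    have hWle : w (t+s) ≤ b := by
      have h6 := mul_neg_of_pos_of_neg hspos hXneg
      linarith only [h6, hWlt]
    have hW0' : 0 < w (t+s) := hW0
    have hmlb : ∀ x ∈ Set.Icc (w (t+s)) b, (1-u)/ρ b ≤ (ρ x)⁻¹ := fun x hx =>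
      hηbprop x ⟨by linarith only [hx.1, hs4], by linarith only [hx.2, hηb0]⟩
    have h2 := Flb hρ hFtil hW0' hWle hmlb
    have hmnn : 0 ≤ (1-u)/ρ b := div_nonneg (by linarith) hQ.le
    have e2 : (1-u)/ρ b * (w (t+s) - b) ≤ (1-u)/ρ b * (s * (-ρ b * (1-u))) :=
      mul_le_mul_of_nonneg_left hWlt hmnn
    have e3 : (1-u)/ρ b * (s * (-ρ b * (1-u))) = -(s * (1-u)^2) := by
      field_simp
    have h2' : Ftil (w (t+s)) - Ftil b ≤ -(s * (1-u)^2) := by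
      rw [e3] at e2
      linarith only [e2, h2]
    have hchain : Ftil (z (t+s)) - Ftil a = (Ftil (w (t+s)) - Ftil b) + s * κ := by
      rw [hzF, haF, hκdef]
      field_simp
      ring
    have hFZ : Ftil (z (t+s)) - Ftil a ≤ s * (κ - (1-u)^2) := by
      rw [hchain]
      linarith only [h2']
    have hZlt : z (t+s) < a := by
      by_contra h
      push_neg at h
      have h5 := Fmono hρ hFtil ha0 h
      have h7 := mul_neg_of_pos_of_neg hspos hRu
      linarith only [h5, hFZ, h7]
    have hZmem1 : a - ηa < z (t+s) := by
      by_contra h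
      push_neg at h
      have h5 := Fmono hρ hFtil hz0 h
      linarith only [h5, hs2.1, hFa1]
    have hMub : ∀ x ∈ Set.Icc (z (t+s)) a, (ρ x)⁻¹ ≤ (1+u)/ρ a := fun x hx =>
      hηaprop x ⟨by linarith only [hx.1, hZmem1], by linarith only [hx.2, hηa0]⟩
    have h4 := Fub hρ hFtil hz0 hZlt.le hMub
    have hMpos : 0 < (1+u)/ρ a := div_pos (by linarith) hP
    have e4 : (1+u)/ρ a * (z (t+s) - a) ≤ s * (κ - (1-u)^2) := by linarith only [h4, hFZ]
    have e5 : z (t+s) - a ≤ s * (κ - (1-u)^2) / ((1+u)/ρ a) := by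
      rw [le_div_iff₀ hMpos, mul_comm]
      exact e4
    have e6 : s * (κ - (1-u)^2) / ((1+u)/ρ a) = s * ((κ - (1-u)^2) * ρ a / (1+u)) := by
      field_simp
    have final : (z (t+s) - z t)/s ≤ r := by
      rw [div_le_iff₀ hspos]
      have : z (t+s) - a ≤ s * r := by
        rw [e6] at e5
        linarith only [e5, mul_le_mul_of_nonneg_left hfu.le hspos.le]
      calc z (t+s) - z t = z (t+s) - a := rfl
        _ ≤ s * r := this
        _ = r * s := mul_comm _ _
    exact_mod_cast final
  -- conclude from density
  apply le_of_forall_gt_imp_ge_of_dense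
  intro y hy
  induction y using EReal.rec with
  | bot => exact absurd hy (by simp)
  | coe x => exact main x (by exact_mod_cast hy)
  | top => exact le_top
end
end
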